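/- arXiv:2005.06555 — 9 statements merged into one kernel-verified Lean document; each statement's English description precedes it below -/
import Mathlib

section
/- Let k be a positive integer and r > 0, and set C = 3k/r. Whenever (a_n, b_n)_{n ∈ N} is a countable family of open intervals of the real line (with endpoints allowed to be −∞ or +∞) such that every real number belongs to at most k of the intervals (a_n, b_n), and such that ℝ = ⋃_{n ∈ N} [a_n + r, b_n − r], then there exists a family (ψ_n)_{n ∈ N} of C-Lipschitz functions ψ_n : ℝ → [0,1] such that ∑_{n ∈ N} ψ_n(u) = 1 for every u ∈ ℝ, and, for each n ∈ N and u ∈ ℝ, ψ_n(u) > 0 if and only if u ∈ (a_n, b_n). -/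
/- Auxiliary: truncation of an extended real at level `r`. -/
noncomputable def cutE (r : ℝ) (x : EReal) : ℝ := (min x (r : EReal)).toReal

lemma cutE_coe (r c : ℝ) : cutE r (c : EReal) = min c r := by
  unfold cutE
  have : min (c : EReal) (r : EReal) = ((min c r : ℝ) : EReal) := by
    rcases le_total c r with h|h <;> simp [min_eq_left, min_eq_right, h, EReal.coe_le_coe_iff]
  rw [this, EReal.toReal_coe]

lemma cutE_bot (r : ℝ) : cutE r ⊥ = 0 := by simp [cutE]

lemma cutE_top (r : ℝ) : cutE r ⊤ = r := by simp [cutE]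

lemma abs_min_const (x y c : ℝ) : |min x c - min y c| ≤ |x - y| := by
  rcases le_total x c with h1|h1 <;> rcases le_total y c with h2|h2 <;>
    simp [min_eq_left, min_eq_right, h1, h2, abs_le] <;>
      cases abs_cases (x - y) <;> constructor <;> linarith

/-- The key ratio estimate. -/
lemma ratio_bound (gu gv Su Sv A B : ℝ) (h1 : 1 ≤ Su) (h2 : 1 ≤ Sv)
    (hgu0 : 0 ≤ gu) (hgv0 : 0 ≤ gv) (hgv : gv ≤ Sv)
    (hA : |gu - gv| ≤ A) (hB : |Su - Sv| ≤ B) :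
    |gu / Su - gv / Sv| ≤ A + B := by
  have hSu : (0:ℝ) < Su := by linarith
  have hSv : (0:ℝ) < Sv := by linarith
  have hA' := abs_le.mp hA
  have hB' := abs_le.mp hB
  have hA0 : 0 ≤ A := le_trans (abs_nonneg _) hA
  rw [div_sub_div _ _ (ne_of_gt hSu) (ne_of_gt hSv), abs_div, abs_of_pos (mul_pos hSu hSv),
    div_le_iff₀ (mul_pos hSu hSv)]
  have hB0 : 0 ≤ B := le_trans (abs_nonneg _) hB
  have hq1 : 0 ≤ (Su - 1) * Sv := mul_nonneg (by linarith) hSv.le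
  have e1 : A * Sv ≤ A * (Su * Sv) := by nlinarith [mul_nonneg hA0 hq1]
  have e2 : gv * B ≤ (Su * Sv) * B := by
    nlinarith [mul_nonneg hB0 (sub_nonneg.mpr hgv), mul_nonneg hB0 hq1]
  have e3 : (gu - gv) * Sv ≤ A * Sv := by nlinarith [mul_nonneg (sub_nonneg.mpr hA'.2) hSv.le]
  have e4 : gv * (Sv - Su) ≤ gv * B := by nlinarith [mul_nonneg hgv0 (sub_nonneg.mpr hB'.2)]
  have e5 : (-A) * Sv ≤ (gu - gv) * Sv := by
    nlinarith [mul_nonneg (by linarith [hA'.1] : (0:ℝ) ≤ gu - gv + A) hSv.le]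
  have e6 : gv * (-B) ≤ gv * (Sv - Su) := by
    nlinarith [mul_nonneg hgv0 (by linarith [hB'.1] : (0:ℝ) ≤ Sv - Su + B)]
  have e7 : (-A) * (Su * Sv) ≤ (-A) * Sv := by nlinarith [mul_nonneg hA0 hq1]
  have e8 : (Su * Sv) * (-B) ≤ gv * (-B) := by
    nlinarith [mul_nonneg hB0 (sub_nonneg.mpr hgv), mul_nonneg hB0 hq1]
  rw [abs_le]
  constructor <;> nlinarith

/-- **Partition of unity subordinated to a k-overlapping family of open intervals.**
Let `k` be a positive integer and `r > 0`, and set `C = 3k/r`.  Whenever `(aₙ, bₙ)_{n ∈ N}` is a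
countable family of open intervals of the real line (endpoints allowed to be `±∞`) such that every
real number belongs to at most `k` of the intervals `(aₙ, bₙ)`, and such that
`ℝ = ⋃ₙ [aₙ + r, bₙ − r]`, then there is a family `(ψₙ)` of `C`-Lipschitz functions
`ψₙ : ℝ → [0,1]` with `∑ₙ ψₙ(u) = 1` for every `u`, and `ψₙ(u) > 0 ↔ u ∈ (aₙ, bₙ)`. -/
theorem stmt0 (k : ℕ) (hk : 0 < k) (r : ℝ) (hr : 0 < r)
    (N : Type) [Countable N] (a b : N → EReal)
    (hoverlap : ∀ u : ℝ, {n : N | a n < (u : EReal) ∧ (u : EReal) < b n}.encard ≤ (k : ℕ∞))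
    (hcover : ∀ u : ℝ, ∃ n : N, a n + (r : EReal) ≤ (u : EReal) ∧ (u : EReal) ≤ b n - (r : EReal)) :
    ∃ ψ : N → ℝ → ℝ,
      (∀ n, ∀ u v : ℝ, |ψ n u - ψ n v| ≤ (3 * k / r) * |u - v|) ∧
      (∀ n, ∀ u : ℝ, ψ n u ∈ Set.Icc (0 : ℝ) 1) ∧
      (∀ u : ℝ, {n : N | ψ n u ≠ 0}.Finite) ∧
      (∀ u : ℝ, ∑ᶠ n : N, ψ n u = 1) ∧
      (∀ n, ∀ u : ℝ, 0 < ψ n u ↔ (a n < (u : EReal) ∧ (u : EReal) < b n)) := by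
  classical
  -- the bump functions
  set g : N → ℝ → ℝ := fun n u =>
    max 0 (min 1 (min (cutE r ((u : EReal) - a n)) (cutE r (b n - (u : EReal))) / r)) with hg
  -- basic pointwise properties of cutE on both sides
  have cutA_lip : ∀ (x : EReal) (u v : ℝ),
      |cutE r ((u : EReal) - x) - cutE r ((v : EReal) - x)| ≤ |u - v| := by
    intro x u v
    induction x using EReal.rec with
    | bot =>
        have h1 : ∀ w : ℝ, (w : EReal) - (⊥ : EReal) = ⊤ := fun w =>
          EReal.sub_bot (EReal.coe_ne_bot w)
        simp [h1, cutE_top, abs_nonneg]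
    | coe c =>
        have h1 : ∀ w : ℝ, (w : EReal) - (c : EReal) = ((w - c : ℝ) : EReal) := fun w =>
          (EReal.coe_sub w c).symm
        rw [h1, h1, cutE_coe, cutE_coe]
        have := abs_min_const (u - c) (v - c) r
        calc |min (u - c) r - min (v - c) r| ≤ |(u - c) - (v - c)| := this
          _ = |u - v| := by ring_nf
    | top =>
        simp [EReal.sub_top, cutE_bot, abs_nonneg]
  have cutB_lip : ∀ (x : EReal) (u v : ℝ),
      |cutE r (x - (u : EReal)) - cutE r (x - (v : EReal))| ≤ |u - v| := by
    intro x u v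
    induction x using EReal.rec with
    | bot => simp [EReal.bot_sub, cutE_bot, abs_nonneg]
    | coe c =>
        have h1 : ∀ w : ℝ, (c : EReal) - (w : EReal) = ((c - w : ℝ) : EReal) := fun w =>
          (EReal.coe_sub c w).symm
        rw [h1, h1, cutE_coe, cutE_coe]
        have := abs_min_const (c - u) (c - v) r
        calc |min (c - u) r - min (c - v) r| ≤ |(c - u) - (c - v)| := this
          _ = |v - u| := by ring_nf
          _ = |u - v| := abs_sub_comm v u
    | top =>
        have h1 : ∀ w : ℝ, (⊤ : EReal) - (w : EReal) = ⊤ := fun w => EReal.top_sub_coe w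
        simp [h1, cutE_top, abs_nonneg]
  have cutA_pos : ∀ (x : EReal) (u : ℝ), 0 < cutE r ((u : EReal) - x) ↔ x < (u : EReal) := by
    intro x u
    induction x using EReal.rec with
    | bot =>
        have h1 : (u : EReal) - (⊥ : EReal) = ⊤ := EReal.sub_bot (EReal.coe_ne_bot u)
        simp [h1, cutE_top, hr]
    | coe c =>
        rw [← EReal.coe_sub, cutE_coe, lt_min_iff, EReal.coe_lt_coe_iff]
        constructor
        · rintro ⟨h, _⟩; linarith
        · intro h; exact ⟨by linarith, hr⟩
    | top =>
        simp [EReal.sub_top, cutE_bot]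
  have cutB_pos : ∀ (x : EReal) (u : ℝ), 0 < cutE r (x - (u : EReal)) ↔ (u : EReal) < x := by
    intro x u
    induction x using EReal.rec with
    | bot => simp [EReal.bot_sub, cutE_bot]
    | coe c =>
        rw [← EReal.coe_sub, cutE_coe, lt_min_iff, EReal.coe_lt_coe_iff]
        constructor
        · rintro ⟨h, _⟩; linarith
        · intro h; exact ⟨by linarith, hr⟩
    | top => simp [EReal.top_sub_coe, cutE_top, hr]
  have cutA_full : ∀ (x : EReal) (u : ℝ), x + (r : EReal) ≤ (u : EReal) →
      cutE r ((u : EReal) - x) = r := by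
    intro x u h
    induction x using EReal.rec with
    | bot =>
        have h1 : (u : EReal) - (⊥ : EReal) = ⊤ := EReal.sub_bot (EReal.coe_ne_bot u)
        simp [h1, cutE_top]
    | coe c =>
        rw [← EReal.coe_add, EReal.coe_le_coe_iff] at h
        rw [← EReal.coe_sub, cutE_coe, min_eq_right (by linarith)]
    | top =>
        exfalso
        rw [EReal.top_add_coe] at h
        exact absurd (lt_of_lt_of_le (EReal.coe_lt_top u) h) (lt_irrefl _)
  have cutB_full : ∀ (x : EReal) (u : ℝ), (u : EReal) ≤ x - (r : EReal) →
      cutE r (x - (u : EReal)) = r := by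
    intro x u h
    induction x using EReal.rec with
    | bot =>
        exfalso
        rw [EReal.bot_sub] at h
        exact absurd (lt_of_le_of_lt h (EReal.bot_lt_coe u)) (lt_irrefl _)
    | coe c =>
        rw [← EReal.coe_sub, EReal.coe_le_coe_iff] at h
        rw [← EReal.coe_sub, cutE_coe, min_eq_right (by linarith)]
    | top => simp [EReal.top_sub_coe, cutE_top]
  -- properties of g
  have g_nonneg : ∀ n u, 0 ≤ g n u := fun n u => le_max_left 0 _
  have g_le_one : ∀ n u, g n u ≤ 1 := fun n u =>
    max_le zero_le_one (min_le_left 1 _)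
  have g_pos : ∀ n u, 0 < g n u ↔ (a n < (u : EReal) ∧ (u : EReal) < b n) := by
    intro n u
    rw [hg]
    simp only [lt_max_iff, lt_irrefl, false_or, lt_min_iff, zero_lt_one, true_and,
      div_pos_iff]
    rw [← cutA_pos (a n) u, ← cutB_pos (b n) u]
    constructor
    · rintro (⟨h, _⟩ | ⟨_, h2⟩)
      · exact h
      · exact absurd h2 (not_lt.mpr hr.le)
    · intro h; exact Or.inl ⟨h, hr⟩
  have g_lip : ∀ n u v, |g n u - g n v| ≤ (1 / r) * |u - v| := by
    intro n u v
    rw [hg]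
    have h1 : ∀ x y : ℝ, |max 0 x - max 0 y| ≤ |x - y| := by
      intro x y
      rw [max_comm 0 x, max_comm 0 y]; exact abs_max_sub_max_le_abs x y 0
    have h2 : ∀ x y : ℝ, |min 1 x - min 1 y| ≤ |x - y| := by
      intro x y
      rw [min_comm 1 x, min_comm 1 y]; exact abs_min_const x y 1
    refine le_trans (h1 _ _) (le_trans (h2 _ _) ?_)
    rw [div_sub_div_same, abs_div, abs_of_pos hr, div_le_iff₀ hr]
    have h3 := abs_min_sub_min_le_max (cutE r ((u : EReal) - a n)) (cutE r (b n - (u : EReal)))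
      (cutE r ((v : EReal) - a n)) (cutE r (b n - (v : EReal)))
    have h4 := cutA_lip (a n) u v
    have h5 := cutB_lip (b n) u v
    have : max |cutE r ((u : EReal) - a n) - cutE r ((v : EReal) - a n)|
        |cutE r (b n - (u : EReal)) - cutE r (b n - (v : EReal))| ≤ |u - v| := max_le h4 h5
    calc _ ≤ _ := h3
      _ ≤ |u - v| := this
      _ = 1 / r * |u - v| * r := by field_simp
  have g_one : ∀ n (u : ℝ), a n + (r : EReal) ≤ (u : EReal) → (u : EReal) ≤ b n - (r : EReal) →
      g n u = 1 := by
    intro n u h1 h2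
    rw [hg]
    simp only
    rw [cutA_full (a n) u h1, cutB_full (b n) u h2, min_self, div_self (ne_of_gt hr)]
    simp
  -- finiteness of supports
  have supp_eq : ∀ u, {n : N | g n u ≠ 0} = {n : N | a n < (u : EReal) ∧ (u : EReal) < b n} := by
    intro u
    ext n
    simp only [Set.mem_setOf_eq]
    rw [← g_pos n u]
    constructor
    · intro h; exact lt_of_le_of_ne (g_nonneg n u) (Ne.symm h)
    · intro h; exact ne_of_gt h
  have supp_fin : ∀ u, {n : N | g n u ≠ 0}.Finite := by
    intro u
    rw [supp_eq u]
    rw [← Set.encard_ne_top_iff]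
    intro h
    have h2 := hoverlap u
    rw [h] at h2
    exact absurd h2 (by simp)
  have supp_card : ∀ u, (supp_fin u).toFinset.card ≤ k := by
    intro u
    have h1 := hoverlap u
    rw [← supp_eq u, (supp_fin u).encard_eq_coe_toFinset_card] at h1
    exact_mod_cast h1
  -- the sum S
  set S : ℝ → ℝ := fun u => ∑ᶠ n, g n u with hS
  have hsupp : ∀ u, Function.support (fun n => g n u) = {n : N | g n u ≠ 0} := by
    intro u; rfl
  have S_eq : ∀ u (F : Finset N), {n : N | g n u ≠ 0} ⊆ ↑F → S u = ∑ n ∈ F, g n u := by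
    intro u F hF
    rw [hS]
    exact finsum_eq_finset_sum_of_support_subset _ (by rw [hsupp]; exact hF)
  have S_ge_g : ∀ n u, g n u ≤ S u := by
    intro n u
    exact single_le_finsum n (by rw [Function.HasFiniteSupport, hsupp]; exact supp_fin u) (fun m => g_nonneg m u)
  have S_ge_one : ∀ u, 1 ≤ S u := by
    intro u
    obtain ⟨n, h1, h2⟩ := hcover u
    rw [← g_one n u h1 h2]
    exact S_ge_g n u
  have S_pos : ∀ u, 0 < S u := fun u => lt_of_lt_of_le one_pos (S_ge_one u)
  have S_lip : ∀ u v, |S u - S v| ≤ (2 * k / r) * |u - v| := by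
    intro u v
    set F : Finset N := (supp_fin u).toFinset ∪ (supp_fin v).toFinset with hF
    have hFu : {n : N | g n u ≠ 0} ⊆ ↑F := by
      intro n hn
      simp only [hF, Finset.coe_union, Set.mem_union, Set.Finite.coe_toFinset]
      exact Or.inl hn
    have hFv : {n : N | g n v ≠ 0} ⊆ ↑F := by
      intro n hn
      simp only [hF, Finset.coe_union, Set.mem_union, Set.Finite.coe_toFinset]
      exact Or.inr hn
    rw [S_eq u F hFu, S_eq v F hFv, ← Finset.sum_sub_distrib]
    have hcard : (F.card : ℝ) ≤ 2 * k := by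
      have h0 : F.card ≤ (supp_fin u).toFinset.card + (supp_fin v).toFinset.card := by
        rw [hF]; exact Finset.card_union_le _ _
      have h1 := supp_card u
      have h2 := supp_card v
      have : F.card ≤ 2 * k := by omega
      exact_mod_cast this
    calc |∑ n ∈ F, (g n u - g n v)| ≤ ∑ n ∈ F, |g n u - g n v| :=
          Finset.abs_sum_le_sum_abs _ _
      _ ≤ F.card • ((1 / r) * |u - v|) :=
          Finset.sum_le_card_nsmul _ _ _ (fun n _ => g_lip n u v)
      _ = (F.card : ℝ) * ((1 / r) * |u - v|) := by rw [nsmul_eq_mul]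
      _ ≤ (2 * k) * ((1 / r) * |u - v|) := by
          apply mul_le_mul_of_nonneg_right hcard
          positivity
      _ = (2 * k / r) * |u - v| := by ring
  -- the partition of unity
  refine ⟨fun n u => g n u / S u, ?_, ?_, ?_, ?_, ?_⟩
  · -- Lipschitz
    intro n u v
    have key := ratio_bound (g n u) (g n v) (S u) (S v)
      ((1 / r) * |u - v|) ((2 * k / r) * |u - v|)
      (S_ge_one u) (S_ge_one v) (g_nonneg n u) (g_nonneg n v) (S_ge_g n v)
      (g_lip n u v) (S_lip u v)
    refine le_trans key ?_
    have hk1 : (1 : ℝ) ≤ k := by exact_mod_cast hk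
    have habs : (0:ℝ) ≤ |u - v| := abs_nonneg _
    have : (1 / r) * |u - v| + (2 * k / r) * |u - v| = ((1 + 2 * k) / r) * |u - v| := by ring
    rw [this]
    apply mul_le_mul_of_nonneg_right _ habs
    rw [div_le_div_iff₀ hr hr]
    nlinarith
  · -- range
    intro n u
    constructor
    · exact div_nonneg (g_nonneg n u) (S_pos u).le
    · rw [div_le_one (S_pos u)]
      exact S_ge_g n u
  · -- finite support
    intro u
    apply Set.Finite.subset (supp_fin u)
    intro n hn
    simp only [Set.mem_setOf_eq] at hn ⊢
    intro h
    exact hn (by rw [h, zero_div])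
  · -- sum equals one
    intro u
    have hFu : {n : N | g n u ≠ 0} ⊆ ↑(supp_fin u).toFinset := by
      intro n hn; simpa using hn
    have h1 : ∑ᶠ n, g n u / S u = ∑ n ∈ (supp_fin u).toFinset, g n u / S u := by
      apply finsum_eq_finset_sum_of_support_subset
      intro n hn
      simp only [Function.mem_support] at hn
      apply hFu
      simp only [Set.mem_setOf_eq]
      intro h
      exact hn (by rw [h, zero_div])
    rw [h1, ← Finset.sum_div, ← S_eq u _ hFu, div_self (ne_of_gt (S_pos u))]
  · -- positivity
    intro n u
    rw [← g_pos n u]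
    constructor
    · intro h
      have := mul_pos h (S_pos u)
      rw [div_mul_cancel₀ _ (ne_of_gt (S_pos u))] at this
      exact this
    · intro h
      exact div_pos h (S_pos u)
end

section
/- Let (S, d) be a metric space, let k be a positive integer, and let (f_i)_{i ∈ I} be a family of 1-Lipschitz functions f_i : S → [0, ∞) such that for every x ∈ S the set {i ∈ I : f_i(x) ≠ 0} has at most k elements. Then the pointwise sum F(x) = ∑_{i ∈ I} f_i(x) is well-defined (at each point only finitely many terms are nonzero) and F is 2k-Lipschitz. -/
/-- **A k-overlapping sum of 1-Lipschitz nonnegative functions is 2k-Lipschitz.**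
Let `(S, d)` be a metric space, `k` a positive integer, and `(f_i)_{i ∈ I}` a family of
`1`-Lipschitz functions `f_i : S → [0, ∞)` such that for every `x ∈ S` the set
`{i : f_i x ≠ 0}` has at most `k` elements.  Then the pointwise sum `F x = ∑ᵢ f_i x` is
well-defined (at each point only finitely many terms are nonzero) and `F` is `2k`-Lipschitz. -/
theorem stmt1 (S : Type) [MetricSpace S] (k : ℕ) (hk : 0 < k)
    (I : Type) (f : I → S → ℝ)
    (hnonneg : ∀ i, ∀ x : S, 0 ≤ f i x)
    (hlip : ∀ i, ∀ x y : S, |f i x - f i y| ≤ dist x y)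
    (hoverlap : ∀ x : S, {i : I | f i x ≠ 0}.encard ≤ (k : ℕ∞)) :
    (∀ x : S, {i : I | f i x ≠ 0}.Finite) ∧
    (∀ x y : S, |(∑ᶠ i : I, f i x) - ∑ᶠ i : I, f i y| ≤ (2 * k) * dist x y) := by
  have hfin : ∀ x : S, {i : I | f i x ≠ 0}.Finite := fun x =>
    Set.finite_of_encard_le_coe (hoverlap x)
  refine ⟨hfin, fun x y => ?_⟩
  have hu : ({i : I | f i x ≠ 0} ∪ {i : I | f i y ≠ 0}).Finite := (hfin x).union (hfin y)
  set T := hu.toFinset with hT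
  have hsubx : (Function.support fun i => f i x) ⊆ (T : Set I) := by
    intro i hi
    simp [hT, Set.Finite.mem_toFinset]
    exact Or.inl hi
  have hsuby : (Function.support fun i => f i y) ⊆ (T : Set I) := by
    intro i hi
    simp [hT, Set.Finite.mem_toFinset]
    exact Or.inr hi
  rw [finsum_eq_finset_sum_of_support_subset _ hsubx,
      finsum_eq_finset_sum_of_support_subset _ hsuby, ← Finset.sum_sub_distrib]
  calc |∑ i ∈ T, (f i x - f i y)| ≤ ∑ i ∈ T, |f i x - f i y| := Finset.abs_sum_le_sum_abs _ _
    _ ≤ ∑ _i ∈ T, dist x y := Finset.sum_le_sum fun i _ => hlip i x y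
    _ = T.card * dist x y := by rw [Finset.sum_const, nsmul_eq_mul]
    _ ≤ (2 * k) * dist x y := by
        apply mul_le_mul_of_nonneg_right _ dist_nonneg
        have hcard : (T.card : ℕ∞) ≤ (k : ℕ∞) + (k : ℕ∞) := by
          rw [hT, ← Set.encard_coe_eq_coe_finsetCard, Set.Finite.coe_toFinset]
          exact le_trans (Set.encard_union_le _ _) (add_le_add (hoverlap x) (hoverlap y))
        have : T.card ≤ 2 * k := by
          have := hcard
          rw [← Nat.cast_add] at this
          exact_mod_cast (by omega : k + k = 2 * k) ▸ Nat.cast_le.mp this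
        exact_mod_cast Nat.cast_le.mpr this
end

section
/- Let (M, d) be a metric space and let N ⊆ M be a nonempty closed subset which, as a metric space with the induced metric, has doubling constant D ≥ 2. Then there exist a countable index set I, a family (V_i)_{i ∈ I} of subsets of M∖N, a family (φ_i)_{i ∈ I} of functions φ_i : M∖N → [0, ∞), and points (x_i)_{i ∈ I} in N such that: (1) for every i ∈ I and every x ∈ V_i one has d(x_i, x) ≤ 7·d(x, N); (2) each V_i is open in M∖N, the sets V_i cover M∖N, and every point of M∖N belongs to at most 3D⁴ of the sets V_i; (3) each φ_i is 1-Lipschitz and {x ∈ M∖N : φ_i(x) > 0} ⊆ V_i; (4) for every x ∈ M∖N there exists i ∈ I with φ_i(x) > d(x, N)/4. -/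
open Metric Set

/-- A subset `N` of a metric space `M` has doubling constant `D` (as a metric space with the
induced metric) if every closed ball in `N` of radius `ρ > 0` can be covered by at most `D`
closed balls in `N` of radius `ρ/2` with centers in `N`. -/
def SubsetDoublingConstant {M : Type*} [MetricSpace M] (N : Set M) (D : ℕ) : Prop :=
  ∀ y ∈ N, ∀ ρ : ℝ, 0 < ρ → ∃ T : Finset M, ↑T ⊆ N ∧ T.card ≤ D ∧
    N ∩ Metric.closedBall y ρ ⊆ ⋃ c ∈ T, Metric.closedBall c (ρ / 2)

private lemma whitney_encard_biUnion_le {α β : Type*} (F : Finset β) (f : β → Set α) :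
    (⋃ x ∈ F, f x).encard ≤ ∑ x ∈ F, (f x).encard := by
  classical
  induction F using Finset.induction with
  | empty => simp
  | @insert a s ha ih =>
    rw [Finset.set_biUnion_insert, Finset.sum_insert ha]
    exact le_trans (Set.encard_union_le _ _) (add_le_add_right ih _)

/-- Packing lemma: a `> 2ρ/2^m`-separated subset of `N ∩ closedBall c ρ` has at most `D^m`
elements. -/
private lemma whitney_packing {M : Type*} [MetricSpace M] {N : Set M} {D : ℕ}
    (hdoub : SubsetDoublingConstant N D) :
    ∀ m : ℕ, ∀ c ∈ N, ∀ ρ : ℝ, 0 < ρ → ∀ T : Set M,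
      T ⊆ N ∩ Metric.closedBall c ρ →
      (T.Pairwise fun y y' => 2 * ρ / 2 ^ m < dist y y') →
      T.encard ≤ (D : ℕ∞) ^ m := by
  intro m
  induction m with
  | zero =>
    intro c hc ρ hρ T hT hsep
    simp only [pow_zero]
    rw [Set.encard_le_one_iff]
    intro a b ha hb
    by_contra hab
    have h1 := hsep ha hb hab
    have da := (hT ha).2
    have db := (hT hb).2
    rw [Metric.mem_closedBall] at da db
    have hd : dist a b ≤ 2 * ρ := by
      calc dist a b ≤ dist a c + dist c b := dist_triangle _ _ _
        _ ≤ ρ + ρ := by rw [dist_comm c b]; linarith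
        _ = 2 * ρ := by ring
    simp only [pow_zero, div_one] at h1
    linarith
  | succ m ih =>
    intro c hc ρ hρ T hT hsep
    obtain ⟨F, hFN, hFcard, hcov⟩ := hdoub c hc ρ hρ
    have hTcov : T ⊆ ⋃ c' ∈ F, (T ∩ Metric.closedBall c' (ρ / 2)) := by
      intro y hy
      have hmem : y ∈ ⋃ c' ∈ F, Metric.closedBall c' (ρ / 2) := hcov (hT hy)
      simp only [Set.mem_iUnion] at hmem ⊢
      obtain ⟨c', hc', hy'⟩ := hmem
      exact ⟨c', hc', hy, hy'⟩
    have hpiece : ∀ c' ∈ F, (T ∩ Metric.closedBall c' (ρ / 2)).encard ≤ (D : ℕ∞) ^ m := by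
      intro c' hc'
      refine ih c' (hFN hc') (ρ / 2) (by linarith) _ ?_ ?_
      · intro y hy
        exact ⟨(hT hy.1).1, hy.2⟩
      · refine (hsep.mono Set.inter_subset_left).imp ?_
        intro y y' h
        have heq : 2 * (ρ / 2) / 2 ^ m = 2 * ρ / 2 ^ (m + 1) := by
          rw [pow_succ]; ring
        rw [heq]
        exact h
    calc T.encard ≤ (⋃ c' ∈ F, (T ∩ Metric.closedBall c' (ρ / 2))).encard :=
          Set.encard_le_encard hTcov
      _ ≤ ∑ c' ∈ F, (T ∩ Metric.closedBall c' (ρ / 2)).encard :=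
          whitney_encard_biUnion_le F _
      _ ≤ F.card • ((D : ℕ∞) ^ m) := Finset.sum_le_card_nsmul F _ _ hpiece
      _ = (F.card : ℕ∞) * (D : ℕ∞) ^ m := nsmul_eq_mul _ _
      _ ≤ (D : ℕ∞) * (D : ℕ∞) ^ m := by
          exact mul_le_mul_left (by exact_mod_cast Nat.cast_le.mpr hFcard) _
      _ = (D : ℕ∞) ^ (m + 1) := by rw [pow_succ]; ring

/-- Existence of a maximal `> r`-separated subset of `N`: it is `r`-dense in `N`. -/
private lemma whitney_exists_net {M : Type*} [MetricSpace M] (N : Set M) (r : ℝ) (hr : 0 < r) :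
    ∃ S : Set M, S ⊆ N ∧ (S.Pairwise fun y y' => r < dist y y') ∧
      ∀ p ∈ N, ∃ y ∈ S, dist p y ≤ r := by
  have hchaincond : ∀ c ⊆ {S : Set M | S ⊆ N ∧ S.Pairwise fun y y' => r < dist y y'},
      IsChain (· ⊆ ·) c → ∃ ub ∈ {S : Set M | S ⊆ N ∧ S.Pairwise fun y y' => r < dist y y'},
        ∀ s ∈ c, s ⊆ ub := by
    intro c hc hchain
    refine ⟨⋃₀ c, ⟨?_, ?_⟩, fun s hs => Set.subset_sUnion_of_mem hs⟩
    · intro y hy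
      obtain ⟨s, hs, hys⟩ := hy
      exact (hc hs).1 hys
    · intro y hy y' hy' hne
      obtain ⟨s, hs, hys⟩ := hy
      obtain ⟨s', hs', hys'⟩ := hy'
      rcases hchain.total hs hs' with h | h
      · exact (hc hs').2 (h hys) hys' hne
      · exact (hc hs).2 hys (h hys') hne
  obtain ⟨S, hmax⟩ := zorn_subset
      {S : Set M | S ⊆ N ∧ S.Pairwise fun y y' => r < dist y y'} hchaincond
  refine ⟨S, hmax.prop.1, hmax.prop.2, ?_⟩
  intro p hp
  by_contra h
  push_neg at h
  have hpS : p ∉ S := by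
    intro hpS
    have h0 := h p hpS
    simp at h0
    linarith
  have hins : insert p S ∈ {S : Set M | S ⊆ N ∧ S.Pairwise fun y y' => r < dist y y'} := by
    constructor
    · exact Set.insert_subset hp hmax.prop.1
    · refine Set.Pairwise.insert hmax.prop.2 ?_
      intro y hy hne
      have h0 := h y hy
      refine ⟨?_, ?_⟩ <;> first
        | linarith
        | (rw [dist_comm]; linarith)
  exact hpS (hmax.mem_of_prop_insert hins)

/-- **Whitney-type partition data relative to a doubling closed subset.**
Let `(M, d)` be a metric space and `N ⊆ M` a nonempty closed subset which, with the induced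
metric, has doubling constant `D ≥ 2`.  Then there are a countable index set `I`, a family
`(V_i)` of subsets of `M∖N`, functions `φ_i : M∖N → [0, ∞)` and points `x_i ∈ N` such that:
(1) `d(x_i, x) ≤ 7·d(x, N)` for all `x ∈ V_i`;
(2) each `V_i` is open in `M∖N`, the `V_i` cover `M∖N`, and each point of `M∖N` lies in at most
    `3D⁴` of the `V_i`;
(3) each `φ_i` is `1`-Lipschitz with `{φ_i > 0} ⊆ V_i`;
(4) for every `x ∈ M∖N` there is `i` with `φ_i(x) > d(x, N)/4`. -/
theorem stmt3 (M : Type) [MetricSpace M] (N : Set M) (hne : N.Nonempty)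
    (hcl : IsClosed N) (D : ℕ) (hD : 2 ≤ D) (hdoub : SubsetDoublingConstant N D) :
    ∃ (I : Type) (_ : Countable I) (V : I → Set M) (φ : I → M → ℝ) (x : I → M),
      (∀ i, x i ∈ N) ∧
      (∀ i, ∀ z ∈ V i, dist (x i) z ≤ 7 * Metric.infDist z N) ∧
      (∀ i, V i ⊆ Nᶜ) ∧
      (∀ i, IsOpen (Subtype.val ⁻¹' (V i) : Set {z : M // z ∉ N})) ∧
      (∀ z : M, z ∉ N → ∃ i, z ∈ V i) ∧
      (∀ z : M, z ∉ N → {i : I | z ∈ V i}.encard ≤ ((3 * D ^ 4 : ℕ) : ℕ∞)) ∧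
      (∀ i, ∀ z : M, z ∉ N → 0 ≤ φ i z) ∧
      (∀ i, ∀ z w : M, z ∉ N → w ∉ N → |φ i z - φ i w| ≤ dist z w) ∧
      (∀ i, ∀ z : M, z ∉ N → 0 < φ i z → z ∈ V i) ∧
      (∀ z : M, z ∉ N → ∃ i, Metric.infDist z N / 4 < φ i z) := by
  classical
  -- basic facts about powers of two
  have hp : ∀ k : ℤ, (0:ℝ) < 2 ^ k := fun k => zpow_pos (by norm_num) k
  have hp1 : ∀ k : ℤ, (2:ℝ) ^ (k + 1) = 2 * 2 ^ k := fun k => by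
    rw [zpow_add₀ (two_ne_zero)]; ring
  have hp3 : ∀ k : ℤ, (2:ℝ) ^ (k + 3) = 8 * 2 ^ k := fun k => by
    rw [zpow_add₀ (two_ne_zero)]; norm_num; ring
  have hp4 : ∀ k : ℤ, (2:ℝ) ^ (k + 4) = 16 * 2 ^ k := fun k => by
    rw [zpow_add₀ (two_ne_zero)]; norm_num; ring
  -- the nets
  have hSex : ∀ k : ℤ, ∃ S : Set M, S ⊆ N ∧
      (S.Pairwise fun y y' => (2:ℝ) ^ (k + 1) < dist y y') ∧
      ∀ p ∈ N, ∃ y ∈ S, dist p y ≤ (2:ℝ) ^ (k + 1) :=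
    fun k => whitney_exists_net N ((2:ℝ) ^ (k + 1)) (hp _)
  choose S hSN hSsep hSnet using hSex
  obtain ⟨y₀, hy₀⟩ := hne
  have hne' : N.Nonempty := ⟨y₀, hy₀⟩
  -- each net is countable
  have hScnt : ∀ k : ℤ, (S k).Countable := by
    intro k
    have hcov : S k ⊆ ⋃ n : ℕ, (S k ∩ Metric.closedBall y₀ (n + 1)) := by
      intro y hy
      obtain ⟨n, hn⟩ := exists_nat_ge (dist y y₀)
      simp only [Set.mem_iUnion]
      exact ⟨n, hy, by rw [Metric.mem_closedBall]; push_cast; linarith⟩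
    refine Set.Countable.mono hcov (Set.countable_iUnion fun n => Set.Finite.countable ?_)
    obtain ⟨m, hm⟩ := pow_unbounded_of_one_lt (2 * ((n:ℝ) + 1) / 2 ^ (k+1)) (one_lt_two)
    have hfin : (S k ∩ Metric.closedBall y₀ ((n:ℝ) + 1)).encard ≤ (D : ℕ∞) ^ m := by
      refine whitney_packing hdoub m y₀ hy₀ ((n:ℝ) + 1) (by positivity) _ ?_ ?_
      · intro y hy; exact ⟨hSN k hy.1, hy.2⟩
      · refine ((hSsep k).mono Set.inter_subset_left).imp ?_
        intro y y' h
        have h2m : (0:ℝ) < 2 ^ m := by positivity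
        have hlt : 2 * ((n:ℝ) + 1) / 2 ^ m < 2 ^ (k + 1) := by
          rw [div_lt_iff₀ h2m]
          rw [div_lt_iff₀ (hp (k+1))] at hm
          linarith [hm]
        linarith
    rw [← Set.encard_lt_top_iff]
    calc (S k ∩ Metric.closedBall y₀ ((n:ℝ) + 1)).encard ≤ (D : ℕ∞) ^ m := hfin
      _ = ((D ^ m : ℕ) : ℕ∞) := by push_cast; rfl
      _ < ⊤ := ENat.coe_lt_top _
  -- index type
  let I : Type := (k : ℤ) × {y : M // y ∈ S k}
  haveI hctI : ∀ k : ℤ, Countable {y : M // y ∈ S k} := fun k => (hScnt k).to_subtype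
  haveI : Countable I := inferInstance
  -- the data
  let V : I → Set M := fun i =>
    {z | dist z i.2.1 < 7 * 2 ^ i.1 ∧ 2 ^ i.1 < Metric.infDist z N ∧
      Metric.infDist z N < 2 ^ (i.1 + 3)}
  let φ : I → M → ℝ := fun i z =>
    max 0 (min (7 * 2 ^ i.1 - dist z i.2.1)
      (min (Metric.infDist z N - 2 ^ i.1) (2 ^ (i.1 + 3) - Metric.infDist z N)))
  -- key claim: coverage plus lower bound
  have key : ∀ z : M, z ∉ N →
      ∃ i : I, z ∈ V i ∧ Metric.infDist z N / 4 < φ i z := by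
    intro z hz
    have hd : 0 < Metric.infDist z N := (hcl.notMem_iff_infDist_pos hne').mp hz
    obtain ⟨n, hn1, hn2⟩ := exists_mem_Ico_zpow hd one_lt_two
    set k := n - 1 with hk_def
    have hk1 : (2:ℝ) ^ (k + 1) = 2 ^ n := by rw [hk_def, sub_add_cancel]
    have h2k : (2:ℝ) ^ (n + 1) = 4 * 2 ^ k := by
      rw [hp1 n, ← hk1, hp1 k]; ring
    have hdlt : Metric.infDist z N < 4 * 2 ^ k := by rw [← h2k]; exact hn2
    have hdge : 2 * 2 ^ k ≤ Metric.infDist z N := by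
      rw [show (2:ℝ) * 2 ^ k = 2 ^ (k+1) from (hp1 k).symm, hk1]; exact hn1
    have hδ : 0 < ((2:ℝ) ^ k - Metric.infDist z N / 4) / 2 := by linarith
    set δ := ((2:ℝ) ^ k - Metric.infDist z N / 4) / 2 with hδ_def
    obtain ⟨p, hpN, hpd⟩ := (Metric.infDist_lt_iff hne').mp
      (show Metric.infDist z N < Metric.infDist z N + δ by linarith)
    obtain ⟨y, hyS, hyp⟩ := hSnet k p hpN
    have hdisty : dist z y ≤ dist z p + dist p y := dist_triangle _ _ _
    have hbound : dist z y < 6 * 2 ^ k + δ := by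
      have h1 := hp1 k
      nlinarith
    refine ⟨⟨k, ⟨y, hyS⟩⟩, ⟨?_, ?_, ?_⟩, ?_⟩
    · show dist z y < 7 * 2 ^ k
      have hδlt : δ < 2 ^ k := by rw [hδ_def]; linarith
      linarith
    · show (2:ℝ) ^ k < Metric.infDist z N
      linarith [hp k]
    · show Metric.infDist z N < 2 ^ (k + 3)
      rw [hp3 k]; linarith [hp k]
    · show Metric.infDist z N / 4 < max 0 (min (7 * 2 ^ k - dist z y)
        (min (Metric.infDist z N - 2 ^ k) (2 ^ (k + 3) - Metric.infDist z N)))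
      refine lt_of_lt_of_le ?_ (le_max_right _ _)
      simp only [lt_min_iff]
      refine ⟨?_, ?_, ?_⟩
      · have hq : Metric.infDist z N / 4 < 2 ^ k - δ := by rw [hδ_def]; linarith
        linarith
      · linarith [hp k]
      · rw [hp3 k]; linarith [hp k]
  -- bounded overlap
  have hoverlap : ∀ z : M, z ∉ N →
      {i : I | z ∈ V i}.encard ≤ ((3 * D ^ 4 : ℕ) : ℕ∞) := by
    intro z hz
    have hd : 0 < Metric.infDist z N := (hcl.notMem_iff_infDist_pos hne').mp hz
    obtain ⟨n, hn1, hn2⟩ := exists_mem_Ico_zpow hd one_lt_two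
    have hscale : ∀ i : I, z ∈ V i → i.1 = n - 2 ∨ i.1 = n - 1 ∨ i.1 = n := by
      rintro ⟨k, y, hy⟩ ⟨h1, h2, h3⟩
      have hk1 : k < n + 1 := by
        have hlt : (2:ℝ) ^ k < 2 ^ (n + 1) := lt_trans h2 hn2
        exact (zpow_lt_zpow_iff_right₀ one_lt_two).mp hlt
      have hk2 : n < k + 3 := by
        have hlt : (2:ℝ) ^ n < 2 ^ (k + 3) := lt_of_le_of_lt hn1 h3
        exact (zpow_lt_zpow_iff_right₀ one_lt_two).mp hlt
      show k = n - 2 ∨ k = n - 1 ∨ k = n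
      omega
    have hperscale : ∀ k : ℤ, ({i : I | z ∈ V i ∧ i.1 = k}).encard ≤ (D : ℕ∞) ^ 4 := by
      intro k
      rcases Set.eq_empty_or_nonempty {i : I | z ∈ V i ∧ i.1 = k} with he | hne2
      · rw [he]; simp
      obtain ⟨i₀, hVi₀, hk₀⟩ := hne2
      obtain ⟨h1₀, h2₀, h3₀⟩ := hVi₀
      rw [hk₀] at h2₀ h3₀
      obtain ⟨p₀, hp₀N, hp₀⟩ := (Metric.infDist_lt_iff hne').mp
        (show Metric.infDist z N < Metric.infDist z N + 2 ^ k by linarith [hp k])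
      have hinj : ({i : I | z ∈ V i ∧ i.1 = k}).InjOn (fun i : I => i.2.1) := by
        intro i1 hi1 i2 hi2 heq
        exact Sigma.subtype_ext (hi1.2.trans hi2.2.symm) heq
      have himg : ((fun i : I => i.2.1) '' {i : I | z ∈ V i ∧ i.1 = k}).encard
          ≤ (D : ℕ∞) ^ 4 := by
        refine whitney_packing hdoub 4 p₀ hp₀N (2 ^ (k + 4)) (hp _) _ ?_ ?_
        · rintro y ⟨i, ⟨hVi, hki⟩, rfl⟩
          obtain ⟨hv1r, hv2r, hv3r⟩ := hVi
          have hv1 : dist z (i.2.1) < 7 * 2 ^ k := by rw [← hki]; exact hv1r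
          have hv2 : (2:ℝ) ^ k < Metric.infDist z N := by rw [← hki]; exact hv2r
          have hv3 : Metric.infDist z N < 2 ^ (k + 3) := by rw [← hki]; exact hv3r
          refine ⟨hSN _ i.2.2, ?_⟩
          rw [Metric.mem_closedBall]
          have htr : dist (i.2.1) p₀ ≤ dist (i.2.1) z + dist z p₀ := dist_triangle _ _ _
          rw [dist_comm (i.2.1) z] at htr
          rw [hp4 k]
          have h8 := hp3 k
          linarith [hp k]
        · rintro y ⟨i, ⟨hVi, hki⟩, rfl⟩ y' ⟨i', ⟨hVi', hki'⟩, rfl⟩ hney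
          have hm : (i.2.1) ∈ S k := hki ▸ i.2.2
          have hm' : (i'.2.1) ∈ S k := hki' ▸ i'.2.2
          have hsep' := hSsep k hm hm' hney
          have heq4 : 2 * (2:ℝ) ^ (k + 4) / 2 ^ (4:ℕ) = (2:ℝ) ^ (k + 1) := by
            rw [hp4 k, hp1 k]; norm_num; ring
          rw [heq4]
          exact hsep'
      calc ({i : I | z ∈ V i ∧ i.1 = k}).encard
          = ((fun i : I => i.2.1) '' {i : I | z ∈ V i ∧ i.1 = k}).encard :=
            (hinj.encard_image).symm
        _ ≤ (D : ℕ∞) ^ 4 := himg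
    have hsub : {i : I | z ∈ V i} ⊆
        {i : I | z ∈ V i ∧ i.1 = n - 2} ∪
        ({i : I | z ∈ V i ∧ i.1 = n - 1} ∪ {i : I | z ∈ V i ∧ i.1 = n}) := by
      intro i hi
      rcases hscale i hi with h | h | h
      · exact Or.inl ⟨hi, h⟩
      · exact Or.inr (Or.inl ⟨hi, h⟩)
      · exact Or.inr (Or.inr ⟨hi, h⟩)
    calc {i : I | z ∈ V i}.encard
        ≤ ({i : I | z ∈ V i ∧ i.1 = n - 2} ∪
          ({i : I | z ∈ V i ∧ i.1 = n - 1} ∪ {i : I | z ∈ V i ∧ i.1 = n})).encard :=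
          Set.encard_le_encard hsub
      _ ≤ {i : I | z ∈ V i ∧ i.1 = n - 2}.encard +
          ({i : I | z ∈ V i ∧ i.1 = n - 1} ∪ {i : I | z ∈ V i ∧ i.1 = n}).encard :=
          Set.encard_union_le _ _
      _ ≤ {i : I | z ∈ V i ∧ i.1 = n - 2}.encard +
          ({i : I | z ∈ V i ∧ i.1 = n - 1}.encard + {i : I | z ∈ V i ∧ i.1 = n}.encard) :=
          add_le_add_right (Set.encard_union_le _ _) _
      _ ≤ (D : ℕ∞) ^ 4 + ((D : ℕ∞) ^ 4 + (D : ℕ∞) ^ 4) :=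
          add_le_add (hperscale _) (add_le_add (hperscale _) (hperscale _))
      _ = ((3 * D ^ 4 : ℕ) : ℕ∞) := by push_cast; ring
  refine ⟨I, inferInstance, V, φ, fun i => i.2.1, ?_, ?_, ?_, ?_, ?_, hoverlap, ?_, ?_, ?_, ?_⟩
  -- (a) centers in N
  · exact fun i => hSN i.1 i.2.2
  -- (b) dist (x i) z ≤ 7 * infDist z N
  · rintro ⟨k, y, hy⟩ z ⟨h1, h2, h3⟩
    show dist y z ≤ 7 * Metric.infDist z N
    rw [dist_comm]
    nlinarith [hp k]
  -- (c) V i ⊆ Nᶜ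
  · rintro ⟨k, y, hy⟩ z ⟨h1, h2, h3⟩ hzN
    have h0 : Metric.infDist z N = 0 := Metric.infDist_zero_of_mem hzN
    rw [h0] at h2
    linarith [hp k]
  -- (d) openness
  · rintro ⟨k, y, hy⟩
    refine IsOpen.preimage continuous_subtype_val ?_
    have h1 : IsOpen {z : M | dist z y < 7 * 2 ^ k} :=
      isOpen_lt (continuous_id.dist continuous_const) continuous_const
    have h2 : IsOpen {z : M | 2 ^ k < Metric.infDist z N} :=
      isOpen_lt continuous_const (continuous_infDist_pt N)
    have h3 : IsOpen {z : M | Metric.infDist z N < 2 ^ (k + 3)} :=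
      isOpen_lt (continuous_infDist_pt N) continuous_const
    have hVeq : V ⟨k, ⟨y, hy⟩⟩ = {z : M | dist z y < 7 * 2 ^ k} ∩
        ({z : M | 2 ^ k < Metric.infDist z N} ∩
          {z : M | Metric.infDist z N < 2 ^ (k + 3)}) := by
      ext z
      simp only [V, Set.mem_setOf_eq, Set.mem_inter_iff]
    rw [hVeq]
    exact h1.inter (h2.inter h3)
  -- (e) coverage
  · intro z hz
    obtain ⟨i, hi, _⟩ := key z hz
    exact ⟨i, hi⟩
  -- (g) nonnegativity
  · intro i z _
    exact le_max_left _ _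
  -- (h) Lipschitz
  · intro i z w _ _
    have hc : ∀ (c : ℝ) (f : M → ℝ), LipschitzWith 1 f →
        LipschitzWith 1 (fun z => c - f z) := by
      intro c f hf
      refine LipschitzWith.of_dist_le_mul fun a b => ?_
      rw [dist_sub_left]
      simpa using hf.dist_le_mul a b
    have hc' : ∀ (c : ℝ) (f : M → ℝ), LipschitzWith 1 f →
        LipschitzWith 1 (fun z => f z - c) := by
      intro c f hf
      refine LipschitzWith.of_dist_le_mul fun a b => ?_
      rw [dist_sub_right]
      simpa using hf.dist_le_mul a b
    have h1 : LipschitzWith 1 (fun z : M => 7 * 2 ^ i.1 - dist z i.2.1) :=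
      hc _ _ (LipschitzWith.dist_left _)
    have h2 : LipschitzWith 1 (fun z : M => Metric.infDist z N - 2 ^ i.1) :=
      hc' _ _ (lipschitz_infDist_pt N)
    have h3 : LipschitzWith 1 (fun z : M => 2 ^ (i.1 + 3) - Metric.infDist z N) :=
      hc _ _ (lipschitz_infDist_pt N)
    have hmin : LipschitzWith 1 (fun z : M => min (7 * 2 ^ i.1 - dist z i.2.1)
        (min (Metric.infDist z N - 2 ^ i.1) (2 ^ (i.1 + 3) - Metric.infDist z N))) := by
      have hmm := h1.min (h2.min h3)
      simpa using hmm
    have lip : LipschitzWith 1 (φ i) := by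
      simpa [φ] using hmin.const_max 0
    have hdd := lip.dist_le_mul z w
    rw [Real.dist_eq] at hdd
    simpa using hdd
  -- (i) support
  · rintro ⟨k, y, hy⟩ z _ hφ
    simp only [φ, lt_max_iff, lt_min_iff] at hφ
    rcases hφ with h | ⟨h1, h2, h3⟩
    · exact absurd h (lt_irrefl _)
    refine ⟨?_, ?_, ?_⟩
    · simp only; linarith
    · simp only; linarith
    · simp only; linarith
  -- (j) lower bound
  · intro z hz
    obtain ⟨i, _, hlt⟩ := key z hz
    exact ⟨i, hlt⟩
end

section
/- Let (M, d) be a metric space and let N ⊆ M be a nonempty closed subset which, as a metric space with the induced metric, has doubling constant D ≥ 2. Then there exist a countable index set I, a family (ψ_i)_{i ∈ I} of functions ψ_i : M∖N → [0,1], and points (x_i)_{i ∈ I} in N such that: (1) ∑_{i ∈ I} ψ_i(x) = 1 for every x ∈ M∖N; (2) for every x ∈ M∖N the set {i ∈ I : ψ_i(x) > 0} has at most 3D⁴ elements; (3) whenever ψ_i(x) > 0 one has d(x_i, x) ≤ 7·d(x, N); and (4) for every p ∈ (0,1] and all x, y ∈ M∖N, ∑_{i ∈ I} |ψ_i(x)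 − ψ_i(y)|^p ≤ 6·8^p·D⁴·d(x, y)^p / max(d(x, N), d(y, N))^p. -/
open Metric Set

namespace Stmt5Aux

noncomputable def clamp (u : ℝ) : ℝ := min 1 (max 0 u)

lemma clamp_nonneg (u : ℝ) : 0 ≤ clamp u := le_min zero_le_one (le_max_left 0 u)
lemma clamp_le_one (u : ℝ) : clamp u ≤ 1 := min_le_left _ _
lemma clamp_eq_one {u : ℝ} (h : 1 ≤ u) : clamp u = 1 := by
  unfold clamp; rw [max_eq_right (le_trans zero_le_one h), min_eq_left h]
lemma clamp_eq_zero {u : ℝ} (h : u ≤ 0) : clamp u = 0 := by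
  unfold clamp; rw [max_eq_left h, min_eq_right zero_le_one]
lemma clamp_mono : Monotone clamp := fun a b hab =>
  min_le_min le_rfl (max_le_max le_rfl hab)
lemma clamp_lip (u v : ℝ) : |clamp u - clamp v| ≤ |u - v| := by
  unfold clamp
  refine le_trans (abs_min_sub_min_le_max 1 (max 0 u) 1 (max 0 v)) ?_
  simp only [sub_self, abs_zero]
  refine max_le (abs_nonneg _) ?_
  refine le_trans (abs_max_sub_max_le_max 0 u 0 v) ?_
  simp [abs_nonneg]

noncomputable def hf (t : ℝ) : ℝ := clamp (2*t - 1)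
noncomputable def lam (t : ℝ) : ℝ := clamp (7 - 2*t)
noncomputable def af (k : ℤ) (s : ℝ) : ℝ := hf (s / 2^k) - hf (s / 2^(k+1))

lemma hf_nonneg (t : ℝ) : 0 ≤ hf t := clamp_nonneg _
lemma hf_le_one (t : ℝ) : hf t ≤ 1 := clamp_le_one _
lemma hf_eq_one {t : ℝ} (h : 1 ≤ t) : hf t = 1 := clamp_eq_one (by linarith)
lemma hf_eq_zero {t : ℝ} (h : t ≤ 1/2) : hf t = 0 := clamp_eq_zero (by linarith)
lemma hf_mono : Monotone hf := fun a b hab => clamp_mono (by linarith)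
lemma hf_lip (u v : ℝ) : |hf u - hf v| ≤ 2 * |u - v| := by
  refine le_trans (clamp_lip _ _) ?_
  rw [show 2*u - 1 - (2*v - 1) = 2*(u - v) by ring, abs_mul]
  simp [abs_of_nonneg]

lemma lam_nonneg (t : ℝ) : 0 ≤ lam t := clamp_nonneg _
lemma lam_le_one (t : ℝ) : lam t ≤ 1 := clamp_le_one _
lemma lam_eq_one {t : ℝ} (h : t ≤ 3) : lam t = 1 := clamp_eq_one (by linarith)
lemma lam_ne_zero {t : ℝ} (h : lam t ≠ 0) : t < 7/2 := by
  by_contra hc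
  exact h (clamp_eq_zero (by linarith [not_lt.mp hc]))
lemma lam_lip (u v : ℝ) : |lam u - lam v| ≤ 2 * |u - v| := by
  refine le_trans (clamp_lip _ _) ?_
  rw [show 7 - 2*u - (7 - 2*v) = 2*(v - u) by ring, abs_mul, abs_sub_comm v u]
  simp [abs_of_nonneg]

lemma two_zpow_pos (k : ℤ) : (0:ℝ) < 2^k := zpow_pos (by norm_num) k

lemma two_zpow_succ (k : ℤ) : (2:ℝ)^(k+1) = 2 * 2^k := by
  rw [zpow_add_one₀ (by norm_num : (2:ℝ) ≠ 0)]; ring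

lemma af_nonneg {s : ℝ} (hs : 0 ≤ s) (k : ℤ) : 0 ≤ af k s := by
  unfold af
  have h1 : s / 2^(k+1) ≤ s / 2^k := by
    apply div_le_div_of_nonneg_left hs (two_zpow_pos k)
    rw [two_zpow_succ]; nlinarith [two_zpow_pos k]
  linarith [hf_mono h1]

lemma af_le_one (k : ℤ) (s : ℝ) : af k s ≤ 1 := by
  unfold af; linarith [hf_le_one (s / 2^k), hf_nonneg (s / 2^(k+1))]

lemma af_ne_zero {k : ℤ} {s : ℝ} (h : af k s ≠ 0) :
    (2:ℝ)^k < 2*s ∧ s < 2*(2:ℝ)^k := by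
  constructor
  · by_contra hc
    push_neg at hc
    have h1 : s / 2^k ≤ 1/2 := by
      rw [div_le_div_iff₀ (two_zpow_pos k) two_pos]; linarith
    have h2 : s / 2^(k+1) ≤ 1/2 := by
      rw [div_le_div_iff₀ (two_zpow_pos (k+1)) two_pos, two_zpow_succ]
      nlinarith [two_zpow_pos k]
    exact h (by unfold af; rw [hf_eq_zero h1, hf_eq_zero h2, sub_self])
  · by_contra hc
    push_neg at hc
    have h1 : (1:ℝ) ≤ s / 2^k := by
      rw [le_div_iff₀ (two_zpow_pos k)]; nlinarith [two_zpow_pos k]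
    have h2 : (1:ℝ) ≤ s / 2^(k+1) := by
      rw [le_div_iff₀ (two_zpow_pos (k+1)), two_zpow_succ]; linarith
    exact h (by unfold af; rw [hf_eq_one h1, hf_eq_one h2, sub_self])

lemma af_lip (k : ℤ) (u v : ℝ) : |af k u - af k v| ≤ 3 / 2^k * |u - v| := by
  unfold af
  have e : hf (u / 2^k) - hf (u / 2^(k+1)) - (hf (v / 2^k) - hf (v / 2^(k+1)))
      = (hf (u / 2^k) - hf (v / 2^k)) - (hf (u / 2^(k+1)) - hf (v / 2^(k+1))) := by ring
  rw [e]
  refine le_trans (abs_sub _ _) ?_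
  have l1 := hf_lip (u / 2^k) (v / 2^k)
  have l2 := hf_lip (u / 2^(k+1)) (v / 2^(k+1))
  rw [div_sub_div_same, abs_div, abs_of_pos (two_zpow_pos k)] at l1
  rw [div_sub_div_same, abs_div, abs_of_pos (two_zpow_pos (k+1))] at l2
  have hk := two_zpow_pos k
  have heq : 2 * (|u - v| / 2^(k+1)) = |u - v| / 2^k := by
    rw [two_zpow_succ]; field_simp
  rw [heq] at l2
  have habs : 0 ≤ |u - v| := abs_nonneg _
  calc |hf (u / 2^k) - hf (v / 2^k)| + |hf (u / 2^(k+1)) - hf (v / 2^(k+1))|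
      ≤ 2 * (|u - v| / 2^k) + |u - v| / 2^k := by linarith
    _ = 3 / 2^k * |u - v| := by field_simp; ring

lemma af_scales {k : ℤ} {s : ℝ} (hs : 0 < s) (h : af k s ≠ 0) :
    k = Int.log 2 s ∨ k = Int.log 2 s + 1 := by
  obtain ⟨h1, h2⟩ := af_ne_zero h
  set L := Int.log 2 s with hL
  have hl1 : (2:ℝ)^L ≤ s := by
    have := Int.zpow_log_le_self (b := 2) (by norm_num) hs
    simpa using this
  have hl2 : s < (2:ℝ)^(L+1) := by
    have := Int.lt_zpow_succ_log_self (b := 2) (by norm_num) s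
    simpa using this
  rw [two_zpow_succ] at hl2
  -- 2^k < 2*s < 2*2^(L+1) = 2^(L+2)  and 2^L ≤ s < 2*2^k = 2^(k+1)
  have hk1 : k < L + 2 := by
    by_contra hc
    push_neg at hc
    have : (2:ℝ)^(L+2) ≤ 2^k := zpow_le_zpow_right₀ (by norm_num) hc
    have e : (2:ℝ)^(L+2) = 2*(2*2^L) := by
      rw [show L+2 = (L+1)+1 by ring, two_zpow_succ, two_zpow_succ]
    nlinarith
  have hk2 : L < k + 1 := by
    by_contra hc
    push_neg at hc
    have : (2:ℝ)^(k+1) ≤ 2^L := zpow_le_zpow_right₀ (by norm_num) hc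
    rw [two_zpow_succ] at this
    nlinarith
  omega

lemma sum_af {s : ℝ} (hs : 0 < s) : ∑ᶠ k : ℤ, af k s = 1 := by
  set L := Int.log 2 s with hL
  have hsupp : Function.support (fun k => af k s) ⊆ ↑({L, L+1} : Finset ℤ) := by
    intro k hk
    rcases af_scales hs hk with h | h <;> simp [h, hL]
  rw [finsum_eq_sum_of_support_subset _ hsupp, Finset.sum_pair (by omega : L ≠ L+1)]
  unfold af
  have hl1 : (2:ℝ)^L ≤ s := by
    have := Int.zpow_log_le_self (b := 2) (by norm_num) hs; simpa using this
  have hl2 : s < (2:ℝ)^(L+1) := by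
    have := Int.lt_zpow_succ_log_self (b := 2) (by norm_num) s; simpa using this
  have e1 : hf (s / 2^L) = 1 :=
    hf_eq_one (by rw [le_div_iff₀ (two_zpow_pos L)]; linarith)
  have e2 : hf (s / 2^(L+1+1)) = 0 := by
    apply hf_eq_zero
    rw [div_le_div_iff₀ (two_zpow_pos _) two_pos, two_zpow_succ (L+1)]
    linarith
  rw [e1, e2]
  ring


variable {M : Type} [MetricSpace M] {N : Set M} {D : ℕ}

lemma biUnion_encard_le (T : Finset M) (S : Set M) (f : M → Set M)
    (h : S ⊆ ⋃ t ∈ T, f t) (c : ℕ∞) (hc : ∀ t ∈ T, (S ∩ f t).encard ≤ c) :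
    S.encard ≤ T.card * c := by
  classical
  induction T using Finset.induction_on generalizing S with
  | empty => simp at h; simp [h]
  | @insert a T ha ih =>
    have hsplit : S ⊆ (S ∩ f a) ∪ (S \ f a) := by
      intro x hx
      by_cases hxa : x ∈ f a
      · exact Or.inl ⟨hx, hxa⟩
      · exact Or.inr ⟨hx, hxa⟩
    have hsub2 : S \ f a ⊆ ⋃ t ∈ T, f t := by
      intro x hx
      have := h hx.1
      simp only [Finset.mem_insert, mem_iUnion] at this ⊢
      obtain ⟨t, ht, hxt⟩ := this
      rcases ht with rfl | ht
      · exact absurd hxt hx.2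
      · exact ⟨t, ht, hxt⟩
    have h1 : (S \ f a).encard ≤ T.card * c := by
      apply ih _ hsub2
      intro t ht
      exact le_trans (Set.encard_le_encard (by intro x hx; exact ⟨hx.1.1, hx.2⟩)) (hc t (Finset.mem_insert_of_mem ht))
    calc S.encard ≤ ((S ∩ f a) ∪ (S \ f a)).encard := Set.encard_le_encard hsplit
      _ ≤ (S ∩ f a).encard + (S \ f a).encard := Set.encard_union_le _ _
      _ ≤ c + T.card * c := add_le_add (hc a (Finset.mem_insert_self a T)) h1
      _ = (T.card + 1) * c := by ring
      _ = ((insert a T).card : ℕ∞) * c := by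
        rw [Finset.card_insert_of_notMem ha]; push_cast; ring

lemma sep_count (hdoub : SubsetDoublingConstant N D) (j : ℕ) :
    ∀ (c : M), c ∈ N → ∀ ρ : ℝ, 0 < ρ → ∀ S : Set M, S ⊆ N →
    (∀ a ∈ S, dist a c ≤ ρ) →
    (S.Pairwise fun a b => 2*ρ/2^j < dist a b) → S.encard ≤ (D:ℕ∞)^j := by
  induction j with
  | zero =>
    intro c hc ρ hρ S hSN hSb hsep
    rw [pow_zero, Set.encard_le_one_iff]
    intro a b ha hb
    by_contra hab
    have h1 := hsep ha hb hab
    simp only [pow_zero] at h1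
    have := dist_triangle a c b
    rw [dist_comm c b] at this
    have h2 := hSb a ha
    have h3 := hSb b hb
    linarith
  | succ j ih =>
    intro c hc ρ hρ S hSN hSb hsep
    obtain ⟨T, hTN, hTcard, hTcov⟩ := hdoub c hc ρ hρ
    have hcov : S ⊆ ⋃ t ∈ T, closedBall t (ρ/2) := by
      intro x hx
      exact hTcov ⟨hSN hx, mem_closedBall.mpr (hSb x hx)⟩
    have hpiece : ∀ t ∈ T, (S ∩ closedBall t (ρ/2)).encard ≤ (D:ℕ∞)^j := by
      intro t ht
      apply ih t (hTN ht) (ρ/2) (by linarith) _ (fun x hx => hSN hx.1)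
        (fun a ha => mem_closedBall.mp ha.2)
      intro a ha b hb hab
      have := hsep ha.1 hb.1 hab
      calc 2*(ρ/2)/2^j = 2*ρ/2^(j+1) := by rw [pow_succ]; ring
        _ < dist a b := this
    calc S.encard ≤ T.card * (D:ℕ∞)^j := biUnion_encard_le T S _ hcov _ hpiece
      _ ≤ (D:ℕ∞) * (D:ℕ∞)^j := by
          apply mul_le_mul_left
          exact_mod_cast Nat.cast_le.mpr hTcard
      _ = (D:ℕ∞)^(j+1) := (pow_succ' _ _).symm


-- Zorn: maximal separated nets
lemma exists_net (N : Set M) (k : ℤ) (hne : N.Nonempty) :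
    ∃ Y : Set M, Y ⊆ N ∧ (Y.Pairwise fun a b => (2:ℝ)^k < dist a b) ∧
      ∀ z ∈ N, ∃ y ∈ Y, dist z y ≤ (2:ℝ)^k := by
  set 𝒮 : Set (Set M) := {Y | Y ⊆ N ∧ Y.Pairwise fun a b => (2:ℝ)^k < dist a b} with h𝒮
  have hchain : ∀ c ⊆ 𝒮, IsChain (· ⊆ ·) c → c.Nonempty → ∃ ub ∈ 𝒮, ∀ s ∈ c, s ⊆ ub := by
    intro c hc hchain hcc
    refine ⟨⋃₀ c, ⟨?_, ?_⟩, fun s hs => subset_sUnion_of_mem hs⟩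
    · exact sUnion_subset fun s hs => (hc hs).1
    · intro a ha b hb hab
      obtain ⟨s, hs, has⟩ := ha
      obtain ⟨t, ht, hbt⟩ := hb
      rcases hchain.total hs ht with h | h
      · exact (hc ht).2 (h has) hbt hab
      · exact (hc hs).2 has (h hbt) hab
  obtain ⟨Y, _, hmax⟩ := zorn_subset_nonempty 𝒮 hchain ∅ ⟨empty_subset N, pairwise_empty _⟩
  refine ⟨Y, hmax.prop.1, hmax.prop.2, ?_⟩
  intro z hz
  by_contra hcon
  push_neg at hcon
  have hzY : z ∉ Y := fun h => by
    have h2 := hcon z h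
    simp only [dist_self] at h2
    exact absurd h2 (not_lt.mpr (le_of_lt (two_zpow_pos k)))
  have hins : insert z Y ∈ 𝒮 := by
    constructor
    · exact insert_subset hz hmax.prop.1
    · intro a ha b hb hab
      rcases ha with rfl | ha
      · rcases hb with rfl | hb
        · exact absurd rfl hab
        · exact hcon b hb
      · rcases hb with rfl | hb
        · rw [dist_comm]; exact hcon a ha
        · exact hmax.prop.2 ha hb hab
  have := hmax.2 hins (subset_insert z Y)
  exact hzY (this (mem_insert z Y))

lemma net_countable (hne : N.Nonempty) (hdoub : SubsetDoublingConstant N D)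
    {k : ℤ} {Y : Set M} (hYN : Y ⊆ N)
    (hsep : Y.Pairwise fun a b => (2:ℝ)^k < dist a b) : Y.Countable := by
  obtain ⟨y₀, hy₀⟩ := hne
  have hsub : Y ⊆ ⋃ n : ℕ, {y | y ∈ Y ∧ dist y y₀ ≤ n+1} := by
    intro y hy
    obtain ⟨n, hn⟩ := exists_nat_ge (dist y y₀)
    exact mem_iUnion.mpr ⟨n, hy, by linarith⟩
  refine Set.Countable.mono hsub (countable_iUnion fun n => Set.Finite.countable ?_)
  obtain ⟨j, hj⟩ := pow_unbounded_of_one_lt (2*((n:ℝ)+1)/2^k) (one_lt_two (α := ℝ))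
  have hjlt : 2*((n:ℝ)+1)/2^j < 2^k := by
    rw [div_lt_iff₀ (by positivity)]
    rw [div_lt_iff₀ (two_zpow_pos k)] at hj
    calc 2*((n:ℝ)+1) < 2^j * 2^k := hj
      _ = 2^k * 2^j := by ring
  have henc : {y | y ∈ Y ∧ dist y y₀ ≤ (n:ℝ)+1}.encard ≤ (D:ℕ∞)^j := by
    apply sep_count hdoub j y₀ hy₀ ((n:ℝ)+1) (by positivity) _ (fun y hy => hYN hy.1)
      (fun a ha => ha.2)
    intro a ha b hb hab
    exact lt_trans hjlt (hsep ha.1 hb.1 hab)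
  rw [← Set.encard_lt_top_iff]
  calc _ ≤ (D:ℕ∞)^j := henc
    _ < ⊤ := by
        rw [show (D:ℕ∞)^j = ((D^j : ℕ):ℕ∞) by push_cast; ring]
        exact WithTop.coe_lt_top _

end Stmt5Aux

namespace Stmt5Aux

variable {M : Type} [MetricSpace M]

noncomputable def phi (N : Set M) (Y : ℤ → Set M) (i : (k : ℤ) × ↥(Y k)) (x : M) : ℝ :=
  af i.1 (Metric.infDist x N) * lam (dist x (i.2 : M) / 2^i.1)

noncomputable def Phi (N : Set M) (Y : ℤ → Set M) (x : M) : ℝ := ∑ᶠ i, phi N Y i x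

noncomputable def psi (N : Set M) (Y : ℤ → Set M) (i : (k : ℤ) × ↥(Y k)) (x : M) : ℝ :=
  phi N Y i x / Phi N Y x

variable {N : Set M} {D : ℕ} {Y : ℤ → Set M}

lemma phi_nonneg (i : (k : ℤ) × ↥(Y k)) (x : M) : 0 ≤ phi N Y i x :=
  mul_nonneg (af_nonneg Metric.infDist_nonneg _) (lam_nonneg _)

lemma phi_le_one (i : (k : ℤ) × ↥(Y k)) (x : M) : phi N Y i x ≤ 1 := by
  have := af_le_one i.1 (Metric.infDist x N)
  have := af_nonneg (Metric.infDist_nonneg (x := x) (s := N)) i.1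
  have := lam_le_one (dist x (i.2 : M) / 2^i.1)
  have := lam_nonneg (dist x (i.2 : M) / 2^i.1)
  unfold phi; nlinarith

lemma phi_ne_zero {i : (k : ℤ) × ↥(Y k)} {x : M} (h : phi N Y i x ≠ 0) :
    af i.1 (Metric.infDist x N) ≠ 0 ∧ dist x (i.2 : M) < 7/2 * 2^i.1 := by
  unfold phi at h
  rcases mul_ne_zero_iff.mp h with ⟨h1, h2⟩
  refine ⟨h1, ?_⟩
  have := lam_ne_zero h2
  rw [div_lt_iff₀ (two_zpow_pos i.1)] at this
  linarith

lemma idx_count (hne : N.Nonempty) (hdoub : SubsetDoublingConstant N D)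
    (hYN : ∀ k, Y k ⊆ N) (hsep : ∀ k, (Y k).Pairwise fun a b => (2:ℝ)^k < dist a b)
    (k : ℤ) (x : M) (ρ : ℝ) (hρ : 0 ≤ ρ) (h : Metric.infDist x N + ρ < 2^(k+3)) :
    {i : (k' : ℤ) × ↥(Y k') | i.1 = k ∧ dist x (i.2 : M) ≤ ρ}.encard
      ≤ ((D^4 : ℕ) : ℕ∞) := by
  have hlt : Metric.infDist x N < 2^(k+3) - ρ := by linarith
  obtain ⟨z, hzN, hz⟩ := (Metric.infDist_lt_iff hne).mp hlt
  have e8 : (2:ℝ)^(k+3) = 8 * 2^k := by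
    rw [show k+3 = k+1+1+1 by ring, two_zpow_succ, two_zpow_succ, two_zpow_succ]; ring
  have hset : {y : M | y ∈ Y k ∧ dist x y ≤ ρ}.encard ≤ (D:ℕ∞)^4 := by
    apply sep_count hdoub 4 z hzN ((2:ℝ)^(k+3)) (two_zpow_pos _) _
      (fun y hy => hYN k hy.1)
    · intro y hy
      calc dist y z ≤ dist y x + dist x z := dist_triangle _ _ _
        _ ≤ ρ + (2^(k+3) - ρ) := by
            rw [dist_comm y x]; exact add_le_add hy.2 (le_of_lt hz)
        _ = 2^(k+3) := by ring
    · intro a ha b hb hab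
      have heq : 2*(2:ℝ)^(k+3)/2^(4:ℕ) = 2^k := by rw [e8]; norm_num; ring
      rw [heq]
      exact hsep k ha.1 hb.1 hab
  set f : ((k' : ℤ) × ↥(Y k')) → M := fun i => (i.2 : M) with hf
  set A := {i : (k' : ℤ) × ↥(Y k') | i.1 = k ∧ dist x (i.2 : M) ≤ ρ} with hA
  have hinj : A.InjOn f := by
    rintro ⟨k1, y1⟩ ⟨hk1, _⟩ ⟨k2, y2⟩ ⟨hk2, _⟩ hval
    simp only at hk1 hk2
    subst hk1; subst hk2
    simp only [hf] at hval
    simp only [Sigma.mk.inj_iff, heq_eq_eq]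
    exact ⟨trivial, Subtype.ext hval⟩
  have himg : f '' A ⊆ {y : M | y ∈ Y k ∧ dist x y ≤ ρ} := by
    rintro _ ⟨⟨k1, y1⟩, ⟨hk1, hd1⟩, rfl⟩
    simp only at hk1
    subst hk1
    exact ⟨y1.2, hd1⟩
  calc A.encard = (f '' A).encard := (hinj.encard_image).symm
    _ ≤ {y : M | y ∈ Y k ∧ dist x y ≤ ρ}.encard := Set.encard_le_encard himg
    _ ≤ (D:ℕ∞)^4 := hset
    _ = ((D^4 : ℕ) : ℕ∞) := by push_cast; ring

end Stmt5Aux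

namespace Stmt5Aux

open Metric

variable {M : Type} [MetricSpace M] {N : Set M} {D : ℕ} {Y : ℤ → Set M}

lemma rpos (hne : N.Nonempty) (hcl : IsClosed N) {x : M} (hx : x ∉ N) :
    0 < Metric.infDist x N := by
  rw [← hcl.notMem_iff_infDist_pos hne]; exact hx

lemma e8 (k : ℤ) : (2:ℝ)^(k+3) = 8 * 2^k := by
  rw [show k+3 = k+1+1+1 by ring, two_zpow_succ, two_zpow_succ, two_zpow_succ]; ring

lemma slice_count (hne : N.Nonempty) (hdoub : SubsetDoublingConstant N D)
    (hYN : ∀ k, Y k ⊆ N) (hsep : ∀ k, (Y k).Pairwise fun a b => (2:ℝ)^k < dist a b)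
    (x : M) (k : ℤ) :
    {i : (k' : ℤ) × ↥(Y k') | i.1 = k ∧ phi N Y i x ≠ 0}.encard ≤ ((D^4:ℕ):ℕ∞) := by
  set A := {i : (k' : ℤ) × ↥(Y k') | i.1 = k ∧ phi N Y i x ≠ 0} with hA
  rcases Set.eq_empty_or_nonempty A with he | ⟨i₀, hi₀⟩
  · simp [he]
  · have haf : af k (Metric.infDist x N) ≠ 0 := by
      have := (phi_ne_zero hi₀.2).1
      rwa [hi₀.1] at this
    have hrx : Metric.infDist x N < 2*2^k := (af_ne_zero haf).2
    have hsub : A ⊆ {i | i.1 = k ∧ dist x (i.2 : M) ≤ 7/2*2^k} := by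
      intro i hi
      refine ⟨hi.1, le_of_lt ?_⟩
      have h1 := (phi_ne_zero hi.2).2
      have h2 := congrArg (fun t => (7:ℝ)/2 * 2^t) hi.1
      rwa [h2] at h1
    refine le_trans (Set.encard_le_encard hsub)
      (idx_count hne hdoub hYN hsep k x _ (by positivity) ?_)
    rw [e8]; nlinarith [two_zpow_pos k]

lemma supp_encard_le (hne : N.Nonempty) (hcl : IsClosed N)
    (hdoub : SubsetDoublingConstant N D)
    (hYN : ∀ k, Y k ⊆ N) (hsep : ∀ k, (Y k).Pairwise fun a b => (2:ℝ)^k < dist a b)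
    {x : M} (hx : x ∉ N) :
    {i : (k' : ℤ) × ↥(Y k') | phi N Y i x ≠ 0}.encard ≤ ((2*D^4:ℕ):ℕ∞) := by
  set L := Int.log 2 (Metric.infDist x N) with hL
  have hsub : {i : (k' : ℤ) × ↥(Y k') | phi N Y i x ≠ 0} ⊆
      {i : (k' : ℤ) × ↥(Y k') | i.1 = L ∧ phi N Y i x ≠ 0} ∪
      {i : (k' : ℤ) × ↥(Y k') | i.1 = L+1 ∧ phi N Y i x ≠ 0} := by
    intro i hi
    rcases af_scales (rpos hne hcl hx) (phi_ne_zero hi).1 with h | h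
    · exact Or.inl ⟨h, hi⟩
    · exact Or.inr ⟨h, hi⟩
  calc _ ≤ _ := Set.encard_le_encard hsub
    _ ≤ _ + _ := Set.encard_union_le _ _
    _ ≤ ((D^4:ℕ):ℕ∞) + ((D^4:ℕ):ℕ∞) :=
        add_le_add (slice_count hne hdoub hYN hsep x L) (slice_count hne hdoub hYN hsep x (L+1))
    _ = ((2*D^4:ℕ):ℕ∞) := by push_cast; ring

lemma supp_finite (hne : N.Nonempty) (hcl : IsClosed N)
    (hdoub : SubsetDoublingConstant N D)
    (hYN : ∀ k, Y k ⊆ N) (hsep : ∀ k, (Y k).Pairwise fun a b => (2:ℝ)^k < dist a b)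
    {x : M} (hx : x ∉ N) :
    {i : (k' : ℤ) × ↥(Y k') | phi N Y i x ≠ 0}.Finite := by
  rw [← Set.encard_lt_top_iff]
  exact lt_of_le_of_lt (supp_encard_le hne hcl hdoub hYN hsep hx) (WithTop.coe_lt_top _)

lemma Phi_eq_sum {x : M} (F : Finset ((k' : ℤ) × ↥(Y k')))
    (hF : {i : (k' : ℤ) × ↥(Y k') | phi N Y i x ≠ 0} ⊆ ↑F) :
    Phi N Y x = ∑ i ∈ F, phi N Y i x :=
  finsum_eq_sum_of_support_subset _ hF

lemma exists_lam_one (hne : N.Nonempty)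
    (hcov : ∀ k, ∀ z ∈ N, ∃ y ∈ Y k, dist z y ≤ (2:ℝ)^k)
    {x : M} {k : ℤ} (hx : Metric.infDist x N < 2^(k+1)) :
    ∃ y ∈ Y k, dist x y ≤ 3 * 2^k := by
  obtain ⟨z, hzN, hz⟩ := (Metric.infDist_lt_iff hne).mp hx
  obtain ⟨y, hyY, hy⟩ := hcov k z hzN
  refine ⟨y, hyY, ?_⟩
  calc dist x y ≤ dist x z + dist z y := dist_triangle _ _ _
    _ ≤ 2^(k+1) + 2^k := add_le_add (le_of_lt hz) hy
    _ = 3 * 2^k := by rw [two_zpow_succ]; ring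

lemma Phi_ge_one (hne : N.Nonempty) (hcl : IsClosed N)
    (hdoub : SubsetDoublingConstant N D)
    (hYN : ∀ k, Y k ⊆ N) (hsep : ∀ k, (Y k).Pairwise fun a b => (2:ℝ)^k < dist a b)
    (hcov : ∀ k, ∀ z ∈ N, ∃ y ∈ Y k, dist z y ≤ (2:ℝ)^k)
    {x : M} (hx : x ∉ N) : 1 ≤ Phi N Y x := by
  classical
  have hrx : 0 < Metric.infDist x N := rpos hne hcl hx
  have hYne : ∀ k, (Y k).Nonempty := by
    intro k
    obtain ⟨z, hz⟩ := hne
    obtain ⟨y, hy, _⟩ := hcov k z hz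
    exact ⟨y, hy⟩
  have hex : ∀ k : ℤ, ∃ y : ↥(Y k), af k (Metric.infDist x N) ≠ 0 →
      dist x (y : M) ≤ 3 * 2^k := by
    intro k
    by_cases h : af k (Metric.infDist x N) ≠ 0
    · have h2 : Metric.infDist x N < 2^(k+1) := by
        rw [two_zpow_succ]; exact (af_ne_zero h).2
      obtain ⟨y, hyY, hy⟩ := exists_lam_one hne hcov h2
      exact ⟨⟨y, hyY⟩, fun _ => hy⟩
    · exact ⟨⟨(hYne k).some, (hYne k).some_mem⟩, fun hc => absurd hc h⟩
  choose yk hyk using hex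
  set L := Int.log 2 (Metric.infDist x N) with hL
  have hgsupp : Function.support (fun k => af k (Metric.infDist x N)) ⊆
      ↑({L, L+1} : Finset ℤ) := by
    intro k hk
    rcases af_scales hrx hk with h | h <;> simp [h, hL]
  set G : Finset ℤ := ({L, L+1} : Finset ℤ).filter
    (fun k => af k (Metric.infDist x N) ≠ 0) with hG
  have hsum1 : ∑ k ∈ G, af k (Metric.infDist x N) = 1 := by
    rw [← sum_af hrx, finsum_eq_sum_of_support_subset _
      (show Function.support _ ⊆ ↑G by
        intro k hk
        refine (Finset.mem_filter (s := ({L, L+1} : Finset ℤ)) (p := fun k => af k (Metric.infDist x N) ≠ 0)).mpr ?_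
        exact ⟨hgsupp hk, hk⟩)]
  set e : ℤ → (k' : ℤ) × ↥(Y k') := fun k => ⟨k, yk k⟩ with he
  have heinj : Set.InjOn e ↑G := fun a _ b _ hab => congrArg Sigma.fst hab
  have hterm : ∀ k ∈ G, phi N Y (e k) x = af k (Metric.infDist x N) := by
    intro k hk
    have hkne : af k (Metric.infDist x N) ≠ 0 := (Finset.mem_filter.mp hk).2
    have hd := hyk k hkne
    have : lam (dist x (yk k : M) / 2^k) = 1 :=
      lam_eq_one (by rw [div_le_iff₀ (two_zpow_pos k)]; linarith)
    unfold phi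
    exact (congrArg (af k (Metric.infDist x N) * ·) this).trans (mul_one _)
  -- Phi as a sum over a finset containing both supp and the image of G
  have hsf := supp_finite hne hcl hdoub hYN hsep (Y := Y) hx
  set F : Finset ((k' : ℤ) × ↥(Y k')) := hsf.toFinset ∪ G.image e with hF
  have hPhi : Phi N Y x = ∑ i ∈ F, phi N Y i x := by
    apply Phi_eq_sum
    intro i hi
    simp only [hF, Finset.coe_union, Set.mem_union, Finset.mem_coe, Set.Finite.coe_toFinset]
    exact Or.inl hi
  have hmono : ∑ i ∈ G.image e, phi N Y i x ≤ ∑ i ∈ F, phi N Y i x := by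
    apply Finset.sum_le_sum_of_subset_of_nonneg (Finset.subset_union_right)
    intro i _ _
    exact phi_nonneg i x
  have himg : ∑ i ∈ G.image e, phi N Y i x = ∑ k ∈ G, phi N Y (e k) x := by
    rw [Finset.sum_image (fun a ha b hb hab => heinj ha hb hab)]
  rw [hPhi]
  calc (1:ℝ) = ∑ k ∈ G, af k (Metric.infDist x N) := hsum1.symm
    _ = ∑ k ∈ G, phi N Y (e k) x := by
        apply Finset.sum_congr rfl
        intro k hk
        exact (hterm k hk).symm
    _ = ∑ i ∈ G.image e, phi N Y i x := himg.symm
    _ ≤ ∑ i ∈ F, phi N Y i x := hmono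

end Stmt5Aux

namespace Stmt5Aux

open Metric

variable {M : Type} [MetricSpace M] {N : Set M} {D : ℕ} {Y : ℤ → Set M}

section Psi

variable (hne : N.Nonempty) (hcl : IsClosed N) (hdoub : SubsetDoublingConstant N D)
  (hYN : ∀ k, Y k ⊆ N) (hsep : ∀ k, (Y k).Pairwise fun a b => (2:ℝ)^k < dist a b)
  (hcov : ∀ k, ∀ z ∈ N, ∃ y ∈ Y k, dist z y ≤ (2:ℝ)^k)

include hne hcl hdoub hYN hsep hcov

lemma Phi_pos {x : M} (hx : x ∉ N) : 0 < Phi N Y x :=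
  lt_of_lt_of_le one_pos (Phi_ge_one hne hcl hdoub hYN hsep hcov hx)

lemma psi_nonneg (i : (k' : ℤ) × ↥(Y k')) {x : M} (hx : x ∉ N) : 0 ≤ psi N Y i x :=
  div_nonneg (phi_nonneg i x) (le_of_lt (Phi_pos hne hcl hdoub hYN hsep hcov hx))

lemma psi_le_one (i : (k' : ℤ) × ↥(Y k')) {x : M} (hx : x ∉ N) : psi N Y i x ≤ 1 := by
  unfold psi
  rw [div_le_one (Phi_pos hne hcl hdoub hYN hsep hcov hx)]
  calc phi N Y i x ≤ 1 := phi_le_one i x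
    _ ≤ Phi N Y x := Phi_ge_one hne hcl hdoub hYN hsep hcov hx

lemma psi_pos_iff (i : (k' : ℤ) × ↥(Y k')) {x : M} (hx : x ∉ N) :
    0 < psi N Y i x ↔ phi N Y i x ≠ 0 := by
  unfold psi
  rw [div_pos_iff_of_pos_right (Phi_pos hne hcl hdoub hYN hsep hcov hx)]
  constructor
  · intro h; exact ne_of_gt h
  · intro h; exact lt_of_le_of_ne (phi_nonneg i x) (Ne.symm h)

lemma sum_psi {x : M} (hx : x ∉ N) : ∑ᶠ i, psi N Y i x = 1 := by
  have hsf := supp_finite hne hcl hdoub hYN hsep (Y := Y) hx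
  have hsub : Function.support (fun i => psi N Y i x) ⊆ ↑hsf.toFinset := by
    intro i hi
    rw [Set.Finite.coe_toFinset]
    intro hzero
    exact hi (by simp only [psi, hzero, zero_div])
  rw [finsum_eq_sum_of_support_subset _ hsub]
  unfold psi
  rw [← Finset.sum_div, ← Phi_eq_sum hsf.toFinset (by rw [Set.Finite.coe_toFinset])]
  exact div_self (ne_of_gt (Phi_pos hne hcl hdoub hYN hsep hcov hx))

lemma psi_supp_count {x : M} (hx : x ∉ N) :
    {i : (k' : ℤ) × ↥(Y k') | 0 < psi N Y i x}.encard ≤ ((2*D^4:ℕ):ℕ∞) := by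
  have : {i : (k' : ℤ) × ↥(Y k') | 0 < psi N Y i x}
      = {i : (k' : ℤ) × ↥(Y k') | phi N Y i x ≠ 0} := by
    ext i
    exact psi_pos_iff hne hcl hdoub hYN hsep hcov i hx
  rw [this]
  exact supp_encard_le hne hcl hdoub hYN hsep hx

lemma psi_dist {x : M} (hx : x ∉ N) (i : (k' : ℤ) × ↥(Y k')) (hpos : 0 < psi N Y i x) :
    dist (i.2 : M) x ≤ 7 * Metric.infDist x N := by
  have hphi := (psi_pos_iff hne hcl hdoub hYN hsep hcov i hx).mp hpos
  obtain ⟨haf, hd⟩ := phi_ne_zero hphi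
  have h1 : (2:ℝ)^i.1 < 2 * Metric.infDist x N := (af_ne_zero haf).1
  rw [dist_comm]
  nlinarith [two_zpow_pos i.1]

end Psi

end Stmt5Aux

namespace Stmt5Aux

open Metric

variable {M : Type} [MetricSpace M] {N : Set M} {D : ℕ} {Y : ℤ → Set M}

lemma infDist_abs_sub {z w : M} : |Metric.infDist z N - Metric.infDist w N| ≤ dist z w := by
  rw [abs_sub_le_iff]
  constructor
  · have := Metric.infDist_le_infDist_add_dist (x := z) (y := w) (s := N)
    linarith
  · have := Metric.infDist_le_infDist_add_dist (x := w) (y := z) (s := N)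
    rw [dist_comm] at this
    linarith

lemma geom_int_sum (K : Finset ℤ) (m : ℤ) (hK : ∀ k ∈ K, m ≤ k) :
    ∑ k ∈ K, ((2:ℝ)^k)⁻¹ ≤ 2 * ((2:ℝ)^m)⁻¹ := by
  classical
  set j : ℤ → ℕ := fun k => (k - m).toNat with hj
  have hterm : ∀ k ∈ K, ((2:ℝ)^k)⁻¹ = ((2:ℝ)^m)⁻¹ * (1/2)^(j k) := by
    intro k hk
    have hkm : 0 ≤ k - m := by linarith [hK k hk]
    have h1 : ((2:ℝ))^(k - m) = (2:ℝ)^(j k) := by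
      rw [hj, ← zpow_natCast (2:ℝ) ((k - m).toNat), Int.toNat_of_nonneg hkm]
    have hsplit : (2:ℝ)^k = 2^m * 2^(k-m) := by
      rw [← zpow_add₀ (by norm_num : (2:ℝ) ≠ 0)]
      ring_nf
    rw [hsplit, h1, mul_inv]
    congr 1
    rw [one_div, inv_pow]
  rw [Finset.sum_congr rfl hterm, ← Finset.mul_sum]
  have hinj : Set.InjOn j ↑K := by
    intro a ha b hb hab
    have h1 := hK a ha
    have h2 := hK b hb
    simp only [hj] at hab
    omega
  have himg : ∑ k ∈ K, (1/2:ℝ)^(j k) = ∑ n ∈ K.image j, (1/2:ℝ)^n :=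
    (Finset.sum_image (fun a ha b hb hab => hinj ha hb hab)).symm
  have hsub : K.image j ⊆ Finset.range ((K.image j).sup id + 1) := by
    intro n hn
    rw [Finset.mem_range]
    exact Nat.lt_succ_of_le (Finset.le_sup (f := id) hn)
  have hbound : ∑ n ∈ K.image j, (1/2:ℝ)^n ≤ 2 := by
    calc ∑ n ∈ K.image j, (1/2:ℝ)^n
        ≤ ∑ n ∈ Finset.range ((K.image j).sup id + 1), (1/2:ℝ)^n :=
          Finset.sum_le_sum_of_subset_of_nonneg hsub (fun n _ _ => by positivity)
      _ ≤ 2 := sum_geometric_two_le _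
  have hpos : (0:ℝ) ≤ ((2:ℝ)^m)⁻¹ := by positivity
  rw [himg]
  calc ((2:ℝ)^m)⁻¹ * ∑ n ∈ K.image j, (1/2:ℝ)^n ≤ ((2:ℝ)^m)⁻¹ * 2 :=
        mul_le_mul_of_nonneg_left hbound hpos
    _ = 2 * ((2:ℝ)^m)⁻¹ := by ring

lemma rpow_sum_le {α : Type*} (F : Finset α) (hF : F.Nonempty) (a : α → ℝ)
    (ha : ∀ i ∈ F, 0 ≤ a i) (p : ℝ) (hp0 : 0 < p) (hp1 : p ≤ 1) :
    ∑ i ∈ F, a i ^ p ≤ (F.card : ℝ) * ((∑ i ∈ F, a i) / F.card) ^ p := by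
  have hn : (0:ℝ) < F.card := by
    have := Finset.card_pos.mpr hF
    exact_mod_cast this
  have hq : (1:ℝ) ≤ 1/p := by
    rw [le_div_iff₀ hp0]; linarith
  have hmean := Real.arith_mean_le_rpow_mean F (fun _ => (F.card : ℝ)⁻¹)
    (fun i => a i ^ p) (fun i _ => by positivity)
    (by rw [Finset.sum_const, nsmul_eq_mul]; field_simp)
    (fun i hi => Real.rpow_nonneg (ha i hi) p) hq
  have hzq : ∀ i ∈ F, (F.card : ℝ)⁻¹ * ((fun i => a i ^ p) i) ^ (1/p : ℝ)
      = (F.card : ℝ)⁻¹ * a i := by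
    intro i hi
    rw [← Real.rpow_mul (ha i hi), mul_one_div_cancel (ne_of_gt hp0), Real.rpow_one]
  rw [Finset.sum_congr rfl hzq, one_div_one_div] at hmean
  have e1 : ∑ i ∈ F, (F.card:ℝ)⁻¹ * ((fun i => a i ^ p) i) = (∑ i ∈ F, a i ^ p) / F.card := by
    rw [← Finset.mul_sum]; ring
  have e2 : ∑ i ∈ F, (F.card:ℝ)⁻¹ * a i = (∑ i ∈ F, a i) / F.card := by
    rw [← Finset.mul_sum]; ring
  rw [e1, e2] at hmean
  calc ∑ i ∈ F, a i ^ p = F.card * ((∑ i ∈ F, a i ^ p) / F.card) := by field_simp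
    _ ≤ F.card * ((∑ i ∈ F, a i) / F.card) ^ p :=
        mul_le_mul_of_nonneg_left hmean (le_of_lt hn)

lemma holder_mono {n n₀ Q : ℝ} (hn : 0 < n) (hnn : n ≤ n₀) (hQ : 0 ≤ Q)
    {p : ℝ} (hp0 : 0 < p) (hp1 : p ≤ 1) :
    n * (Q/n)^p ≤ n₀ * (Q/n₀)^p := by
  have hn₀ : 0 < n₀ := lt_of_lt_of_le hn hnn
  rw [Real.div_rpow hQ hn.le, Real.div_rpow hQ hn₀.le]
  have h1 : n / n^p = n^(1-p:ℝ) := by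
    rw [Real.rpow_sub hn, Real.rpow_one]
  have h2 : n₀ / n₀^p = n₀^(1-p:ℝ) := by rw [Real.rpow_sub hn₀, Real.rpow_one]
  have h3 : n^(1-p:ℝ) ≤ n₀^(1-p:ℝ) := Real.rpow_le_rpow hn.le hnn (by linarith)
  have hQp : 0 ≤ Q^p := Real.rpow_nonneg hQ p
  have hnp : 0 < n^p := Real.rpow_pos_of_pos hn p
  have hn₀p : 0 < n₀^p := Real.rpow_pos_of_pos hn₀ p
  calc n * (Q^p/n^p) = (n/n^p) * Q^p := by ring
    _ = n^(1-p:ℝ) * Q^p := by rw [h1]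
    _ ≤ n₀^(1-p:ℝ) * Q^p := mul_le_mul_of_nonneg_right h3 hQp
    _ = (n₀/n₀^p) * Q^p := by rw [h2]
    _ = n₀ * (Q^p/n₀^p) := by ring

set_option maxHeartbeats 1000000 in
lemma holder_core (hne : N.Nonempty) (hcl : IsClosed N)
    (hdoub : SubsetDoublingConstant N D) (hD : 2 ≤ D)
    (hYN : ∀ k, Y k ⊆ N) (hsep : ∀ k, (Y k).Pairwise fun a b => (2:ℝ)^k < dist a b)
    (hcov : ∀ k, ∀ z ∈ N, ∃ y ∈ Y k, dist z y ≤ (2:ℝ)^k)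
    (p : ℝ) (hp0 : 0 < p) (hp1 : p ≤ 1)
    {z w : M} (hz : z ∉ N) (hw : w ∉ N)
    (hrw : Metric.infDist w N ≤ Metric.infDist z N) :
    ∑ᶠ i, |psi N Y i z - psi N Y i w| ^ p ≤
      6 * 8^p * (D:ℝ)^4 * dist z w ^ p / (Metric.infDist z N) ^ p := by
  classical
  set R := Metric.infDist z N with hRdef
  set rw' := Metric.infDist w N with hrwdef
  set d := dist z w with hddef
  have hR : 0 < R := rpos hne hcl hz
  have hrw0 : 0 < rw' := rpos hne hcl hw
  have hd0 : 0 ≤ d := dist_nonneg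
  have hDpos : (0:ℝ) < (D:ℝ) := by
    have : (0:ℕ) < D := by omega
    exact_mod_cast this
  have hD0 : (0:ℝ) < (D:ℝ)^4 := by positivity
  have hsfz := supp_finite hne hcl hdoub hYN hsep (Y := Y) hz
  have hsfw := supp_finite hne hcl hdoub hYN hsep (Y := Y) hw
  set F : Finset ((k : ℤ) × ↥(Y k)) := hsfz.toFinset ∪ hsfw.toFinset with hFdef
  have hmemF : ∀ i : (k : ℤ) × ↥(Y k), i ∈ F ↔ (phi N Y i z ≠ 0 ∨ phi N Y i w ≠ 0) := by
    intro i
    simp [hFdef, Finset.mem_union, Set.Finite.mem_toFinset, Set.mem_setOf_eq]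
  have hPhiz : Phi N Y z = ∑ i ∈ F, phi N Y i z := by
    apply Phi_eq_sum
    intro i hi
    rw [Finset.mem_coe, hmemF]
    exact Or.inl hi
  have hPhiw : Phi N Y w = ∑ i ∈ F, phi N Y i w := by
    apply Phi_eq_sum
    intro i hi
    rw [Finset.mem_coe, hmemF]
    exact Or.inr hi
  have hΦz1 : 1 ≤ Phi N Y z := Phi_ge_one hne hcl hdoub hYN hsep hcov hz
  have hΦw1 : 1 ≤ Phi N Y w := Phi_ge_one hne hcl hdoub hYN hsep hcov hw
  have hΦzpos : 0 < Phi N Y z := lt_of_lt_of_le one_pos hΦz1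
  have hΦwpos : 0 < Phi N Y w := lt_of_lt_of_le one_pos hΦw1
  have hcardz : hsfz.toFinset.card ≤ 2*D^4 := by
    have h1 := supp_encard_le hne hcl hdoub hYN hsep (Y := Y) hz
    rw [hsfz.encard_eq_coe_toFinset_card] at h1
    exact_mod_cast h1
  have hcardw : hsfw.toFinset.card ≤ 2*D^4 := by
    have h1 := supp_encard_le hne hcl hdoub hYN hsep (Y := Y) hw
    rw [hsfw.encard_eq_coe_toFinset_card] at h1
    exact_mod_cast h1
  have hcardF : F.card ≤ 4*D^4 := by
    calc F.card ≤ hsfz.toFinset.card + hsfw.toFinset.card :=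
          Finset.card_union_le _ _
      _ ≤ 4*D^4 := by omega
  have hsupp : Function.support (fun i => |psi N Y i z - psi N Y i w| ^ p) ⊆ ↑F := by
    intro i hi
    rw [Finset.mem_coe, hmemF]
    by_contra hcon
    push_neg at hcon
    apply hi
    simp only [psi, hcon.1, hcon.2, zero_div, sub_zero, abs_zero]
    exact Real.zero_rpow (ne_of_gt hp0)
  rw [finsum_eq_sum_of_support_subset _ hsupp]
  have habs01 : ∀ i ∈ F, |psi N Y i z - psi N Y i w| ≤ 1 := by
    intro i _
    have h1 := psi_nonneg hne hcl hdoub hYN hsep hcov i hz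
    have h2 := psi_le_one hne hcl hdoub hYN hsep hcov i hz
    have h3 := psi_nonneg hne hcl hdoub hYN hsep hcov i hw
    have h4 := psi_le_one hne hcl hdoub hYN hsep hcov i hw
    rw [abs_sub_le_iff]
    constructor <;> linarith
  have hRp : (0:ℝ) < R^p := Real.rpow_pos_of_pos hR p
  have h8p : (0:ℝ) < (8:ℝ)^p := Real.rpow_pos_of_pos (by norm_num) p
  have hdp : (0:ℝ) ≤ d^p := Real.rpow_nonneg hd0 p
  have hsumnn : 0 ≤ ∑ i ∈ F, |psi N Y i z - psi N Y i w| ^ p :=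
    Finset.sum_nonneg (fun i _ => Real.rpow_nonneg (abs_nonneg _) p)
  by_cases hcase : R ≤ 8*d
  · -- easy case
    have hsum1 : ∑ i ∈ F, |psi N Y i z - psi N Y i w| ^ p ≤ (F.card : ℝ) := by
      calc ∑ i ∈ F, |psi N Y i z - psi N Y i w| ^ p ≤ ∑ _i ∈ F, (1:ℝ) := by
            apply Finset.sum_le_sum
            intro i hi
            exact Real.rpow_le_one (abs_nonneg _) (habs01 i hi) hp0.le
        _ = (F.card : ℝ) := by simp
    have hRd : R^p ≤ 8^p * d^p := by
      rw [← Real.mul_rpow (by norm_num) hd0]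
      exact Real.rpow_le_rpow hR.le hcase hp0.le
    rw [le_div_iff₀ hRp]
    have hcardR : (F.card : ℝ) ≤ 4*(D:ℝ)^4 := by exact_mod_cast hcardF
    calc (∑ i ∈ F, |psi N Y i z - psi N Y i w| ^ p) * R^p ≤ (F.card : ℝ) * R^p :=
          mul_le_mul_of_nonneg_right hsum1 hRp.le
      _ ≤ (4*(D:ℝ)^4) * (8^p * d^p) := by
          apply mul_le_mul hcardR hRd hRp.le (by positivity)
      _ ≤ 6*8^p*(D:ℝ)^4*d^p := by nlinarith [mul_nonneg h8p.le hdp]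
  · push_neg at hcase
    have hrw2 : R - d ≤ rw' := by
      have h := infDist_abs_sub (N := N) (z := z) (w := w)
      rw [abs_sub_le_iff] at h
      linarith [h.1]
    have hscale : ∀ i ∈ F, 7*R/16 < (2:ℝ)^i.1 := by
      intro i hi
      rw [hmemF] at hi
      rcases hi with h | h
      · have h2 := (af_ne_zero (phi_ne_zero h).1).2
        nlinarith [two_zpow_pos i.1]
      · have h2 := (af_ne_zero (phi_ne_zero h).1).2
        nlinarith [two_zpow_pos i.1]
    have hlip : ∀ i : (k:ℤ) × ↥(Y k), |phi N Y i z - phi N Y i w| ≤ 5*d*((2:ℝ)^i.1)⁻¹ := by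
      intro i
      have hA := af_lip i.1 R rw'
      have hB := lam_lip (dist z (i.2:M) / 2^i.1) (dist w (i.2:M) / 2^i.1)
      have hRd : |R - rw'| ≤ d := infDist_abs_sub
      have hdd : |dist z (i.2:M) - dist w (i.2:M)| ≤ d := abs_dist_sub_le z w (i.2:M)
      have hk := two_zpow_pos i.1
      have e : phi N Y i z - phi N Y i w
          = (af i.1 R - af i.1 rw') * lam (dist z (i.2:M) / 2^i.1)
            + af i.1 rw' * (lam (dist z (i.2:M) / 2^i.1) - lam (dist w (i.2:M) / 2^i.1)) := by
        simp only [phi, ← hRdef, ← hrwdef]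
        ring
      rw [e]
      have hBB : |dist z (i.2:M) / 2^i.1 - dist w (i.2:M) / 2^i.1|
          = |dist z (i.2:M) - dist w (i.2:M)| / 2^i.1 := by
        rw [div_sub_div_same, abs_div, abs_of_pos hk]
      have hlam1 : |lam (dist z (i.2:M) / 2^i.1)| ≤ 1 := by
        rw [abs_of_nonneg (lam_nonneg _)]; exact lam_le_one _
      have haf1 : |af i.1 rw'| ≤ 1 := by
        rw [abs_of_nonneg (af_nonneg hrw0.le _)]; exact af_le_one _ _
      have t1 : |(af i.1 R - af i.1 rw') * lam (dist z (i.2:M) / 2^i.1)| ≤ 3/2^i.1 * d := by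
        rw [abs_mul]
        have hafd : |af i.1 R - af i.1 rw'| ≤ 3/2^i.1 * d := by
          refine le_trans hA ?_
          exact mul_le_mul_of_nonneg_left hRd (by positivity)
        calc |af i.1 R - af i.1 rw'| * |lam (dist z (i.2:M) / 2^i.1)|
            ≤ (3/2^i.1 * d) * 1 :=
              mul_le_mul hafd hlam1 (abs_nonneg _) (by positivity)
          _ = 3/2^i.1 * d := by ring
      have t2 : |af i.1 rw' * (lam (dist z (i.2:M) / 2^i.1) - lam (dist w (i.2:M) / 2^i.1))|
          ≤ 2/2^i.1 * d := by
        rw [abs_mul]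
        have hlamd : |lam (dist z (i.2:M) / 2^i.1) - lam (dist w (i.2:M) / 2^i.1)|
            ≤ 2/2^i.1 * d := by
          refine le_trans hB ?_
          rw [hBB, show (2:ℝ)/2^i.1*d = 2*(d/2^i.1) by ring]
          gcongr
        calc |af i.1 rw'| * |lam (dist z (i.2:M) / 2^i.1) - lam (dist w (i.2:M) / 2^i.1)|
            ≤ 1 * (2/2^i.1 * d) :=
              mul_le_mul haf1 hlamd (abs_nonneg _) (by norm_num)
          _ = 2/2^i.1 * d := by ring
      calc |(af i.1 R - af i.1 rw') * lam (dist z (i.2:M) / 2^i.1)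
            + af i.1 rw' * (lam (dist z (i.2:M) / 2^i.1) - lam (dist w (i.2:M) / 2^i.1))|
          ≤ _ + _ := abs_add_le _ _
        _ ≤ 3/2^i.1 * d + 2/2^i.1 * d := add_le_add t1 t2
        _ = 5*d*((2:ℝ)^i.1)⁻¹ := by field_simp; ring
    set K := F.image Sigma.fst with hK
    have hmaps : ∀ i ∈ F, i.1 ∈ K := fun i hi => Finset.mem_image_of_mem _ hi
    have hfibcard : ∀ k ∈ K, (F.filter (fun i => i.1 = k)).card ≤ D^4 := by
      intro k hk
      obtain ⟨i₀, hi₀F, hi₀k⟩ := Finset.mem_image.mp hk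
      have h2k : 7*R/16 < (2:ℝ)^k := by
        have h := hscale i₀ hi₀F
        rwa [hi₀k] at h
      have hk0 := two_zpow_pos k
      have hsub : ↑(F.filter (fun i => i.1 = k)) ⊆
          {i : (k':ℤ) × ↥(Y k') | i.1 = k ∧ dist z (i.2 : M) ≤ 7/2*2^k + d} := by
        intro i hi
        rw [Finset.mem_coe, Finset.mem_filter] at hi
        obtain ⟨hiF, hik⟩ := hi
        refine ⟨hik, ?_⟩
        have hcast : (7:ℝ)/2 * 2^i.1 = 7/2*2^k := by rw [hik]
        rw [hmemF] at hiF
        rcases hiF with h | h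
        · have hd1 := (phi_ne_zero h).2
          rw [hcast] at hd1
          linarith
        · have hd1 := (phi_ne_zero h).2
          rw [hcast] at hd1
          have := dist_triangle z w (i.2 : M)
          rw [← hddef] at this
          linarith
      have hcount := idx_count hne hdoub hYN hsep k z (7/2*2^k + d)
        (by positivity) (by rw [e8]; linarith [h2k, hcase])
      have hle := le_trans (Set.encard_le_encard hsub) hcount
      rw [Set.encard_coe_eq_coe_finsetCard] at hle
      exact_mod_cast hle
    have hgeo : ∑ k ∈ K, ((2:ℝ)^k)⁻¹ ≤ 32/(7*R) := by
      set c := 7*R/16 with hc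
      have hcpos : 0 < c := by positivity
      have hKm : ∀ k ∈ K, Int.log 2 c + 1 ≤ k := by
        intro k hk
        obtain ⟨i₀, hi₀F, hi₀k⟩ := Finset.mem_image.mp hk
        have h2k : c < (2:ℝ)^k := by
          have h := hscale i₀ hi₀F
          rwa [hi₀k] at h
        by_contra hcon
        push_neg at hcon
        have h1 : (2:ℝ)^k ≤ 2^(Int.log 2 c) :=
          zpow_le_zpow_right₀ one_le_two (by omega)
        have h2 : ((2:ℕ):ℝ)^(Int.log 2 c) ≤ c := Int.zpow_log_le_self (by norm_num) hcpos
        push_cast at h2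
        linarith
      have hgs := geom_int_sum K (Int.log 2 c + 1) hKm
      have hm : c < (2:ℝ)^(Int.log 2 c + 1) := by
        have := Int.lt_zpow_succ_log_self (b := 2) (by norm_num) c
        push_cast at this
        exact this
      have h2m : (0:ℝ) < (2:ℝ)^(Int.log 2 c + 1) := two_zpow_pos _
      calc ∑ k ∈ K, ((2:ℝ)^k)⁻¹ ≤ 2*((2:ℝ)^(Int.log 2 c + 1))⁻¹ := hgs
        _ ≤ 2 * c⁻¹ :=
            mul_le_mul_of_nonneg_left (inv_anti₀ hcpos hm.le) (by norm_num)
        _ = 32/(7*R) := by rw [hc]; rw [show ((7:ℝ)*R/16)⁻¹ = 16/(7*R) by field_simp]; ring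
    have hsumphi : ∑ i ∈ F, |phi N Y i z - phi N Y i w| ≤ 160/7 * (D:ℝ)^4 * d / R := by
      rw [← Finset.sum_fiberwise_of_maps_to hmaps (fun i => |phi N Y i z - phi N Y i w|)]
      have hinner : ∀ k ∈ K, ∑ i ∈ F.filter (fun i => i.1 = k), |phi N Y i z - phi N Y i w|
          ≤ (D:ℝ)^4 * (5*d*((2:ℝ)^k)⁻¹) := by
        intro k hk
        have hk0 := two_zpow_pos k
        have hbound : ∀ i ∈ F.filter (fun i => i.1 = k),
            |phi N Y i z - phi N Y i w| ≤ 5*d*((2:ℝ)^k)⁻¹ := by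
          intro i hi
          have hik := (Finset.mem_filter.mp hi).2
          have h := hlip i
          have hcast : 5*d*((2:ℝ)^i.1)⁻¹ = 5*d*((2:ℝ)^k)⁻¹ := by rw [hik]
          rwa [hcast] at h
        calc ∑ i ∈ F.filter (fun i => i.1 = k), |phi N Y i z - phi N Y i w|
            ≤ (F.filter (fun i => i.1 = k)).card • (5*d*((2:ℝ)^k)⁻¹) :=
              Finset.sum_le_card_nsmul _ _ _ hbound
          _ = ((F.filter (fun i => i.1 = k)).card : ℝ) * (5*d*((2:ℝ)^k)⁻¹) :=
              nsmul_eq_mul _ _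
          _ ≤ (D:ℝ)^4 * (5*d*((2:ℝ)^k)⁻¹) := by
              apply mul_le_mul_of_nonneg_right _ (by positivity)
              exact_mod_cast hfibcard k hk
      calc ∑ k ∈ K, ∑ i ∈ F.filter (fun i => i.1 = k), |phi N Y i z - phi N Y i w|
          ≤ ∑ k ∈ K, (D:ℝ)^4 * (5*d*((2:ℝ)^k)⁻¹) := Finset.sum_le_sum hinner
        _ = 5*(D:ℝ)^4*d * ∑ k ∈ K, ((2:ℝ)^k)⁻¹ := by
            rw [Finset.mul_sum]
            apply Finset.sum_congr rfl
            intro k _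
            ring
        _ ≤ 5*(D:ℝ)^4*d * (32/(7*R)) := by
            apply mul_le_mul_of_nonneg_left hgeo (by positivity)
        _ = 160/7 * (D:ℝ)^4 * d / R := by field_simp; ring
    have hDPhi : |Phi N Y z - Phi N Y w| ≤ ∑ i ∈ F, |phi N Y i z - phi N Y i w| := by
      rw [hPhiz, hPhiw, ← Finset.sum_sub_distrib]
      exact Finset.abs_sum_le_sum_abs _ _
    have hpsisum : ∑ i ∈ F, |psi N Y i z - psi N Y i w|
        ≤ 2 * ∑ i ∈ F, |phi N Y i z - phi N Y i w| := by
      set q := |Phi N Y z - Phi N Y w| / (Phi N Y z * Phi N Y w) with hq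
      have hq0 : 0 ≤ q := by positivity
      have hper : ∀ i ∈ F, |psi N Y i z - psi N Y i w|
          ≤ |phi N Y i z - phi N Y i w| + phi N Y i w * q := by
        intro i _
        have e : psi N Y i z - psi N Y i w
            = (phi N Y i z - phi N Y i w)/Phi N Y z
              + phi N Y i w * ((Phi N Y w - Phi N Y z)/(Phi N Y z * Phi N Y w)) := by
          simp only [psi]
          field_simp
          ring
        rw [e]
        have h1 : |(phi N Y i z - phi N Y i w)/Phi N Y z| ≤ |phi N Y i z - phi N Y i w| := by
          rw [abs_div, abs_of_pos hΦzpos]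
          exact div_le_self (abs_nonneg _) hΦz1
        have h2 : |phi N Y i w * ((Phi N Y w - Phi N Y z)/(Phi N Y z * Phi N Y w))|
            = phi N Y i w * q := by
          rw [abs_mul, abs_of_nonneg (phi_nonneg i w), hq, abs_div,
            abs_of_pos (mul_pos hΦzpos hΦwpos), abs_sub_comm]
        calc |(phi N Y i z - phi N Y i w)/Phi N Y z
              + phi N Y i w * ((Phi N Y w - Phi N Y z)/(Phi N Y z * Phi N Y w))|
            ≤ _ + _ := abs_add_le _ _
          _ ≤ |phi N Y i z - phi N Y i w| + phi N Y i w * q := by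
              rw [h2]
              exact add_le_add_left h1 _
      have hΦwq : Phi N Y w * q ≤ ∑ i ∈ F, |phi N Y i z - phi N Y i w| := by
        have e : Phi N Y w * q = |Phi N Y z - Phi N Y w| / Phi N Y z := by
          rw [hq]
          field_simp
        rw [e]
        calc |Phi N Y z - Phi N Y w| / Phi N Y z ≤ |Phi N Y z - Phi N Y w| :=
              div_le_self (abs_nonneg _) hΦz1
          _ ≤ _ := hDPhi
      calc ∑ i ∈ F, |psi N Y i z - psi N Y i w|
          ≤ ∑ i ∈ F, (|phi N Y i z - phi N Y i w| + phi N Y i w * q) :=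
            Finset.sum_le_sum hper
        _ = ∑ i ∈ F, |phi N Y i z - phi N Y i w| + (∑ i ∈ F, phi N Y i w) * q := by
            rw [Finset.sum_add_distrib, Finset.sum_mul]
        _ = ∑ i ∈ F, |phi N Y i z - phi N Y i w| + Phi N Y w * q := by rw [← hPhiw]
        _ ≤ 2 * ∑ i ∈ F, |phi N Y i z - phi N Y i w| := by linarith [hΦwq]
    rcases Finset.eq_empty_or_nonempty F with hFe | hFne
    · rw [hFe]
      simp only [Finset.sum_empty]
      positivity
    · have hkey := rpow_sum_le F hFne (fun i => |psi N Y i z - psi N Y i w|)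
        (fun i _ => abs_nonneg _) p hp0 hp1
      set Q := ∑ i ∈ F, |psi N Y i z - psi N Y i w| with hQ
      have hQ0 : 0 ≤ Q := Finset.sum_nonneg (fun i _ => abs_nonneg _)
      have hQle : Q ≤ 320/7*(D:ℝ)^4*d/R := by
        calc Q ≤ 2 * ∑ i ∈ F, |phi N Y i z - phi N Y i w| := hpsisum
          _ ≤ 2*(160/7*(D:ℝ)^4*d/R) := by linarith [hsumphi]
          _ = 320/7*(D:ℝ)^4*d/R := by ring
      have hncard : (0:ℝ) < F.card := by
        have := Finset.card_pos.mpr hFne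
        exact_mod_cast this
      have hn4 : (F.card : ℝ) ≤ 4*(D:ℝ)^4 := by exact_mod_cast hcardF
      have hmono := holder_mono hncard hn4 hQ0 hp0 hp1
      have hn₀pos : (0:ℝ) < 4*(D:ℝ)^4 := by positivity
      have hmono2 : (4*(D:ℝ)^4) * (Q/(4*(D:ℝ)^4))^p
          ≤ (4*(D:ℝ)^4) * ((320/7*(D:ℝ)^4*d/R)/(4*(D:ℝ)^4))^p := by
        refine mul_le_mul_of_nonneg_left ?_ hn₀pos.le
        refine Real.rpow_le_rpow (by positivity) ?_ hp0.le
        gcongr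
      have hsimpq : (320/7*(D:ℝ)^4*d/R)/(4*(D:ℝ)^4) = 80/7*(d/R) := by
        field_simp
        ring
      have hu0 : (0:ℝ) ≤ d/R := by positivity
      have hfin : (4*(D:ℝ)^4) * ((80/7)*(d/R))^p ≤ 6*8^p*(D:ℝ)^4*(d/R)^p := by
        have e : (80:ℝ)/7*(d/R) = (10/7)*(8*(d/R)) := by ring
        rw [e, Real.mul_rpow (by norm_num) (by positivity),
          Real.mul_rpow (by norm_num) hu0]
        have h107 : ((10:ℝ)/7)^p ≤ 10/7 := by
          calc ((10:ℝ)/7)^p ≤ (10/7:ℝ)^(1:ℝ) :=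
                Real.rpow_le_rpow_of_exponent_le (by norm_num) hp1
            _ = 10/7 := Real.rpow_one _
        have h107nn : (0:ℝ) ≤ ((10:ℝ)/7)^p := Real.rpow_nonneg (by norm_num) p
        have hup : (0:ℝ) ≤ (d/R)^p := Real.rpow_nonneg hu0 p
        nlinarith [mul_le_mul_of_nonneg_right h107 (mul_nonneg h8p.le hup), hD0,
          mul_nonneg (mul_nonneg h8p.le hup) hD0.le]
      calc ∑ i ∈ F, |psi N Y i z - psi N Y i w| ^ p
          ≤ (F.card : ℝ) * (Q/F.card)^p := hkey
        _ ≤ (4*(D:ℝ)^4) * (Q/(4*(D:ℝ)^4))^p := hmono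
        _ ≤ (4*(D:ℝ)^4) * ((320/7*(D:ℝ)^4*d/R)/(4*(D:ℝ)^4))^p := hmono2
        _ = (4*(D:ℝ)^4) * ((80/7)*(d/R))^p := by rw [hsimpq]
        _ ≤ 6*8^p*(D:ℝ)^4*(d/R)^p := hfin
        _ = 6*8^p*(D:ℝ)^4*d^p/R^p := by
            rw [Real.div_rpow hd0 hR.le]
            ring

end Stmt5Aux

/-- **Random-projection-type partition of unity on the complement of a doubling subset.**
Let `(M, d)` be a metric space and `N ⊆ M` a nonempty closed subset with doubling constant
`D ≥ 2` in the induced metric.  Then there are a countable index set `I`, functions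
`ψ_i : M∖N → [0,1]` and points `x_i ∈ N` such that:
(1) `∑ᵢ ψ_i(x) = 1` for every `x ∈ M∖N`;
(2) for every `x ∈ M∖N` at most `3D⁴` of the values `ψ_i(x)` are positive;
(3) `ψ_i(x) > 0` implies `d(x_i, x) ≤ 7·d(x, N)`;
(4) for every `p ∈ (0,1]` and `x, y ∈ M∖N`,
    `∑ᵢ |ψ_i(x) − ψ_i(y)|^p ≤ 6·8^p·D⁴·d(x,y)^p / max(d(x,N), d(y,N))^p`. -/
theorem stmt5 (M : Type) [MetricSpace M] (N : Set M) (hne : N.Nonempty)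
    (hcl : IsClosed N) (D : ℕ) (hD : 2 ≤ D) (hdoub : SubsetDoublingConstant N D) :
    ∃ (I : Type) (_ : Countable I) (ψ : I → M → ℝ) (x : I → M),
      (∀ i, x i ∈ N) ∧
      (∀ i, ∀ z : M, z ∉ N → ψ i z ∈ Set.Icc (0 : ℝ) 1) ∧
      (∀ z : M, z ∉ N → ∑ᶠ i : I, ψ i z = 1) ∧
      (∀ z : M, z ∉ N → {i : I | 0 < ψ i z}.encard ≤ ((3 * D ^ 4 : ℕ) : ℕ∞)) ∧
      (∀ i, ∀ z : M, z ∉ N → 0 < ψ i z → dist (x i) z ≤ 7 * Metric.infDist z N) ∧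
      (∀ p : ℝ, 0 < p → p ≤ 1 → ∀ z w : M, z ∉ N → w ∉ N →
        ∑ᶠ i : I, |ψ i z - ψ i w| ^ p ≤
          6 * 8 ^ p * (D : ℝ) ^ 4 * dist z w ^ p /
            max (Metric.infDist z N) (Metric.infDist w N) ^ p) := by

  classical
  have hY : ∀ k : ℤ, ∃ Y : Set M, Y ⊆ N ∧ (Y.Pairwise fun a b => (2:ℝ)^k < dist a b) ∧
      ∀ z ∈ N, ∃ y ∈ Y, dist z y ≤ (2:ℝ)^k := fun k => Stmt5Aux.exists_net N k hne
  choose Y hYN hsep hcov using hY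
  have hcnt : ∀ k, (Y k).Countable := fun k =>
    Stmt5Aux.net_countable hne hdoub (hYN k) (hsep k)
  haveI hsub : ∀ k, Countable ↥(Y k) := fun k => (hcnt k).to_subtype
  refine ⟨(k : ℤ) × ↥(Y k), inferInstance, Stmt5Aux.psi N Y, fun i => (i.2 : M),
    ?_, ?_, ?_, ?_, ?_, ?_⟩
  · exact fun i => hYN i.1 i.2.2
  · intro i z hz
    exact ⟨Stmt5Aux.psi_nonneg hne hcl hdoub hYN hsep hcov i hz,
      Stmt5Aux.psi_le_one hne hcl hdoub hYN hsep hcov i hz⟩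
  · intro z hz
    exact Stmt5Aux.sum_psi hne hcl hdoub hYN hsep hcov hz
  · intro z hz
    refine le_trans (Stmt5Aux.psi_supp_count hne hcl hdoub hYN hsep hcov hz) ?_
    have : (2*D^4 : ℕ) ≤ (3*D^4 : ℕ) := Nat.mul_le_mul_right _ (by norm_num)
    exact_mod_cast Nat.cast_le.mpr this
  · intro i z hz hpos
    exact Stmt5Aux.psi_dist hne hcl hdoub hYN hsep hcov hz i hpos
  · intro p hp0 hp1 z w hz hw
    rcases le_total (Metric.infDist w N) (Metric.infDist z N) with h | h
    · rw [max_eq_left h]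
      exact Stmt5Aux.holder_core hne hcl hdoub hD hYN hsep hcov p hp0 hp1 hz hw h
    · rw [max_eq_right h]
      have hc := Stmt5Aux.holder_core hne hcl hdoub hD hYN hsep hcov p hp0 hp1 hw hz h
      rw [dist_comm w z] at hc
      calc ∑ᶠ i, |Stmt5Aux.psi N Y i z - Stmt5Aux.psi N Y i w| ^ p
          = ∑ᶠ i, |Stmt5Aux.psi N Y i w - Stmt5Aux.psi N Y i z| ^ p := by
            apply finsum_congr
            intro i
            rw [abs_sub_comm]
        _ ≤ _ := hc
end

section
/- Let (M, d) be a metric space and let N ⊆ M be a nonempty closed subset which, as a metric space with the induced metric, has doubling constant D ≥ 2. Then there exists an ℝ-linear map E from the vector space of all real-valued functions on N to the vector space of all real-valued functions on M such that: (1) for every g : N → ℝ, the restriction of E(g) to N equals g; and (2) for every L ≥ 0 and every L-Lipschitz function g : N → ℝ, the function E(g) : M → ℝ is (1680·D⁴·L)-Lipschitz. -/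
open Metric Set

noncomputable section LipExt6

namespace LipExt6

variable {M : Type} [MetricSpace M]

/-- clamp to [0,1] -/
def cl01 (t : ℝ) : ℝ := max 0 (min 1 t)

lemma cl01_nonneg (t : ℝ) : 0 ≤ cl01 t := le_max_left _ _

lemma cl01_le_one (t : ℝ) : cl01 t ≤ 1 := max_le (by norm_num) (min_le_left _ _)

lemma cl01_lip (a b : ℝ) : |cl01 a - cl01 b| ≤ |a - b| := by
  unfold cl01
  have h1 : |max 0 (min 1 a) - max 0 (min 1 b)| ≤ |min 1 a - min 1 b| := by
    rw [max_comm 0 (min 1 a), max_comm 0 (min 1 b)]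
    exact abs_max_sub_max_le_abs _ _ _
  refine h1.trans ?_
  have := abs_min_sub_min_le_max 1 a 1 b
  simpa using this

lemma cl01_eq_one {t : ℝ} (h : 1 ≤ t) : cl01 t = 1 := by
  unfold cl01; rw [min_eq_left h]; exact max_eq_right zero_le_one

lemma cl01_eq_zero {t : ℝ} (h : t ≤ 0) : cl01 t = 0 := by
  unfold cl01
  rw [min_eq_right (h.trans zero_le_one)]
  exact max_eq_left h

lemma le_cl01 {c t : ℝ} (hc1 : c ≤ 1) (hct : c ≤ t) : c ≤ cl01 t :=
  le_max_of_le_right (le_min hc1 hct)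

lemma cl01_mono {a b : ℝ} (h : a ≤ b) : cl01 a ≤ cl01 b :=
  max_le_max le_rfl (min_le_min le_rfl h)

/-- dyadic scale -/
def w (k : ℤ) : ℝ := 2 ^ k

lemma w_pos (k : ℤ) : 0 < w k := zpow_pos (by norm_num) k

lemma w_succ (k : ℤ) : w (k + 1) = 2 * w k := by
  unfold w; rw [zpow_add_one₀ (by norm_num : (2:ℝ) ≠ 0)]; ring

lemma w_le_w {k l : ℤ} (h : k ≤ l) : w k ≤ w l := by
  unfold w; exact zpow_le_zpow_right₀ (by norm_num) h

lemma w_lt_w {k l : ℤ} (h : w k < w l) : k < l := by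
  by_contra hc
  exact absurd (w_le_w (not_lt.mp hc)) (not_le.mpr h)

def theta (k : ℤ) (t : ℝ) : ℝ := cl01 (t / w k - 1)

lemma theta_nonneg (k : ℤ) (t : ℝ) : 0 ≤ theta k t := cl01_nonneg _

lemma theta_le_one (k : ℤ) (t : ℝ) : theta k t ≤ 1 := cl01_le_one _

lemma theta_eq_one {k : ℤ} {t : ℝ} (h : w (k+1) ≤ t) : theta k t = 1 := by
  apply cl01_eq_one
  rw [w_succ] at h
  rw [le_sub_iff_add_le, le_div_iff₀ (w_pos k)]
  linarith

lemma theta_eq_zero {k : ℤ} {t : ℝ} (h : t ≤ w k) : theta k t = 0 := by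
  apply cl01_eq_zero
  rw [sub_nonpos, div_le_one (w_pos k)]
  exact h

lemma theta_lip (k : ℤ) (t s : ℝ) : |theta k t - theta k s| ≤ |t - s| / w k := by
  refine (cl01_lip _ _).trans ?_
  rw [show t / w k - 1 - (s / w k - 1) = (t - s) / w k by ring]
  rw [abs_div, abs_of_pos (w_pos k)]

lemma theta_anti {k l : ℤ} (h : k ≤ l) {t : ℝ} (ht : 0 ≤ t) : theta l t ≤ theta k t := by
  apply cl01_mono
  have h2 : t / w l ≤ t / w k := by
    apply div_le_div_of_nonneg_left ht (w_pos k) (w_le_w h)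
  linarith

def chi (k : ℤ) (t : ℝ) : ℝ := theta (k-1) t - theta k t

lemma chi_nonneg (k : ℤ) {t : ℝ} (ht : 0 ≤ t) : 0 ≤ chi k t := by
  unfold chi
  have := theta_anti (by omega : k - 1 ≤ k) ht
  linarith

lemma chi_le_one (k : ℤ) (t : ℝ) : chi k t ≤ 1 := by
  unfold chi
  have := theta_le_one (k-1) t
  have := theta_nonneg k t
  linarith

lemma chi_ne_zero {k : ℤ} {t : ℝ} (h : chi k t ≠ 0) : w (k-1) < t ∧ t < w (k+1) := by
  constructor
  · by_contra hc
    push_neg at hc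
    have h1 : theta (k-1) t = 0 := theta_eq_zero hc
    have h2 : theta k t = 0 := theta_eq_zero (hc.trans (w_le_w (by omega)))
    exact h (by unfold chi; rw [h1, h2]; ring)
  · by_contra hc
    push_neg at hc
    have h1 : theta (k-1) t = 1 := theta_eq_one (by rw [show k - 1 + 1 = k by ring]; exact (w_le_w (by omega : k ≤ k+1)).trans hc)
    have h2 : theta k t = 1 := theta_eq_one hc
    exact h (by unfold chi; rw [h1, h2]; ring)

lemma chi_lip (k : ℤ) (t s : ℝ) : |chi k t - chi k s| ≤ 3 * |t - s| / w k := by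
  unfold chi
  have h1 := theta_lip (k-1) t s
  have h2 := theta_lip k t s
  have hw : w (k-1) = w k / 2 := by
    have := w_succ (k-1); rw [show k - 1 + 1 = k by ring] at this; linarith
  rw [hw] at h1
  have habs : |theta (k-1) t - theta k t - (theta (k-1) s - theta k s)| ≤
      |theta (k-1) t - theta (k-1) s| + |theta k t - theta k s| := by
    have := abs_sub_abs_le_abs_sub (theta (k-1) t - theta (k-1) s) (theta k t - theta k s)
    calc |theta (k-1) t - theta k t - (theta (k-1) s - theta k s)|
        = |(theta (k-1) t - theta (k-1) s) - (theta k t - theta k s)| := by ring_nf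
      _ ≤ _ := abs_sub _ _
  have hwk := w_pos k
  calc |theta (k-1) t - theta k t - (theta (k-1) s - theta k s)|
      ≤ |theta (k-1) t - theta (k-1) s| + |theta k t - theta k s| := habs
    _ ≤ |t - s| / (w k / 2) + |t - s| / w k := add_le_add h1 h2
    _ = 3 * |t - s| / w k := by field_simp; ring

-- appended to p1 content (inside namespace)

def psi (k : ℤ) (x z : M) : ℝ := cl01 (7 - 2 * dist x z / w k)

lemma psi_nonneg (k : ℤ) (x z : M) : 0 ≤ psi k x z := cl01_nonneg _

lemma psi_le_one (k : ℤ) (x z : M) : psi k x z ≤ 1 := cl01_le_one _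

lemma psi_supp {k : ℤ} {x z : M} (h : psi k x z ≠ 0) : 2 * dist x z < 7 * w k := by
  by_contra hc
  push_neg at hc
  apply h
  apply cl01_eq_zero
  rw [sub_nonpos, le_div_iff₀ (w_pos k)]
  linarith

lemma psi_lip (k : ℤ) (x y z : M) : |psi k x z - psi k y z| ≤ 2 * dist x y / w k := by
  refine (cl01_lip _ _).trans ?_
  rw [show 7 - 2 * dist x z / w k - (7 - 2 * dist y z / w k)
      = (2 * dist y z - 2 * dist x z) / w k by ring]
  rw [abs_div, abs_of_pos (w_pos k), div_le_div_iff_of_pos_right (w_pos k)]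
  have h1 : |dist x z - dist y z| ≤ dist x y := abs_dist_sub_le _ _ _
  rw [show 2 * dist y z - 2 * dist x z = 2 * (dist y z - dist x z) by ring, abs_mul, abs_two,
    abs_sub_comm]
  nlinarith [abs_nonneg (dist x z - dist y z)]

lemma psi_big {k : ℤ} {x z : M} (h : 2 * dist x z ≤ (69/10) * w k) : 1/10 ≤ psi k x z := by
  apply le_cl01 (by norm_num)
  have hw := w_pos k
  have : 2 * dist x z / w k ≤ 69/10 := by
    rw [div_le_iff₀ hw]; nlinarith
  linarith

-- scale localization
lemma chi_mem_Icc {k : ℤ} {t : ℝ} (ht : 0 < t) (h : chi k t ≠ 0) :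
    Int.log 2 t ≤ k ∧ k ≤ Int.log 2 t + 1 := by
  obtain ⟨h1, h2⟩ := chi_ne_zero h
  set l := Int.log 2 t with hl
  have hlow : (2:ℝ) ^ l ≤ t := by
    have := Int.zpow_log_le_self (b := 2) (by norm_num) ht (R := ℝ)
    simpa using this
  have hhigh : t < (2:ℝ) ^ (l + 1) := by
    have := Int.lt_zpow_succ_log_self (b := 2) (by norm_num) t (R := ℝ)
    simpa using this
  constructor
  · have : w (l) < w (k+1) := lt_of_le_of_lt hlow h2
    have := w_lt_w this
    omega
  · have : w (k-1) < w (l+1) := lt_of_lt_of_le h1 (le_of_lt hhigh)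
    have := w_lt_w this
    omega

lemma sum_chi {t : ℝ} (ht : 0 < t) {K : Finset ℤ}
    (hK : Finset.Icc (Int.log 2 t) (Int.log 2 t + 1) ⊆ K) :
    ∑ k ∈ K, chi k t = 1 := by
  set l := Int.log 2 t with hl
  have hvanish : ∀ k ∈ K, k ∉ Finset.Icc l (l+1) → chi k t = 0 := by
    intro k _ hk
    by_contra hc
    obtain ⟨ha, hb⟩ := chi_mem_Icc ht hc
    exact hk (Finset.mem_Icc.mpr ⟨ha, hb⟩)
  rw [← Finset.sum_subset hK hvanish]
  have hIcc : Finset.Icc l (l+1) = {l, l+1} := by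
    ext k; simp [Finset.mem_Icc]; omega
  rw [hIcc, Finset.sum_insert (by simp), Finset.sum_singleton]
  unfold chi
  have hlow : (2:ℝ) ^ l ≤ t := by
    have := Int.zpow_log_le_self (b := 2) (by norm_num) ht (R := ℝ)
    simpa using this
  have hhigh : t < (2:ℝ) ^ (l + 1) := by
    have := Int.lt_zpow_succ_log_self (b := 2) (by norm_num) t (R := ℝ)
    simpa using this
  have h1 : theta (l-1) t = 1 := theta_eq_one (by rw [show l - 1 + 1 = l by ring]; exact hlow)
  have h2 : theta (l+1) t = 0 := theta_eq_zero (le_of_lt hhigh)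
  have h3 : theta (l+1-1) t = theta l t := by norm_num
  rw [h1, h2, h3]; ring

open scoped Classical in
/-- extend `g` on `N` by zero -/
def ext (N : Set M) (g : ↥N → ℝ) : M → ℝ := fun m => if h : m ∈ N then g ⟨m, h⟩ else 0

open scoped Classical in
def psi' (Z : ℤ → Set M) (k : ℤ) (z x : M) : ℝ := if z ∈ Z k then psi k x z else 0

def Tset (Z : ℤ → Set M) (k : ℤ) (x : M) : Set M := {z ∈ Z k | dist x z ≤ 4 * w k}

def sig (Z : ℤ → Set M) (k : ℤ) (x : M) : ℝ := ∑ᶠ z, psi' Z k z x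

def Sg (N : Set M) (Z : ℤ → Set M) (g : ↥N → ℝ) (k : ℤ) (x : M) : ℝ :=
  ∑ᶠ z, psi' Z k z x * ext N g z

def Fg (N : Set M) (Z : ℤ → Set M) (g : ↥N → ℝ) (k : ℤ) (x : M) : ℝ :=
  Sg N Z g k x / sig Z k x

open scoped Classical in
def E0 (N : Set M) (Z : ℤ → Set M) (g : ↥N → ℝ) (x : M) : ℝ :=
  if h : x ∈ N then g ⟨x, h⟩ else ∑ᶠ k, chi k (Metric.infDist x N) * Fg N Z g k x

lemma psi'_nonneg (Z : ℤ → Set M) (k : ℤ) (z x : M) : 0 ≤ psi' Z k z x := by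
  unfold psi'; split <;> simp [psi_nonneg]

lemma psi'_le_one (Z : ℤ → Set M) (k : ℤ) (z x : M) : psi' Z k z x ≤ 1 := by
  unfold psi'; split
  · exact psi_le_one _ _ _
  · norm_num

lemma psi'_supp {Z : ℤ → Set M} {k : ℤ} {z x : M} (h : psi' Z k z x ≠ 0) :
    z ∈ Z k ∧ 2 * dist x z < 7 * w k := by
  unfold psi' at h
  split at h
  · exact ⟨by assumption, psi_supp h⟩
  · exact absurd rfl h

lemma psi'_lip (Z : ℤ → Set M) (k : ℤ) (z x y : M) :
    |psi' Z k z x - psi' Z k z y| ≤ 2 * dist x y / w k := by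
  unfold psi'; split
  · exact psi_lip k x y z
  · simp only [sub_self, abs_zero]
    have := w_pos k
    positivity

lemma support_psi'_sub (Z : ℤ → Set M) (k : ℤ) (x : M) :
    Function.support (fun z => psi' Z k z x) ⊆ Tset Z k x := by
  intro z hz
  obtain ⟨hzZ, hd⟩ := psi'_supp hz
  refine ⟨hzZ, ?_⟩
  nlinarith [w_pos k]

lemma sig_eq_sum (Z : ℤ → Set M) (k : ℤ) (x : M) {T : Finset M}
    (hT : Tset Z k x ⊆ ↑T) : sig Z k x = ∑ z ∈ T, psi' Z k z x :=
  finsum_eq_sum_of_support_subset _ ((support_psi'_sub Z k x).trans hT)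

lemma Sg_eq_sum (N : Set M) (Z : ℤ → Set M) (g : ↥N → ℝ) (k : ℤ) (x : M) {T : Finset M}
    (hT : Tset Z k x ⊆ ↑T) : Sg N Z g k x = ∑ z ∈ T, psi' Z k z x * ext N g z := by
  apply finsum_eq_sum_of_support_subset
  refine subset_trans ?_ ((support_psi'_sub Z k x).trans hT)
  intro z hz
  have : psi' Z k z x ≠ 0 := by
    intro h0; apply hz; simp [Function.mem_support] at hz ⊢; simp [h0]
  exact this

lemma sig_nonneg (Z : ℤ → Set M) (k : ℤ) (x : M) (hfin : (Tset Z k x).Finite) :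
    0 ≤ sig Z k x := by
  rw [sig_eq_sum Z k x (T := hfin.toFinset) (by simp)]
  exact Finset.sum_nonneg fun z _ => psi'_nonneg Z k z x

/-- lower bound on the partition denominator -/
lemma sig_ge (N : Set M) (Z : ℤ → Set M) (hne : N.Nonempty)
    (hZcov : ∀ p ∈ N, ∃ z ∈ Z k, dist p z ≤ w k)
    (hfin : (Tset Z k x).Finite)
    (hx : Metric.infDist x N ≤ (12/5) * w k) : 1/10 ≤ sig Z k x := by
  have hw := w_pos k
  have hlt : Metric.infDist x N < (49/20) * w k := lt_of_le_of_lt hx (by nlinarith)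
  obtain ⟨p, hpN, hpd⟩ := (Metric.infDist_lt_iff hne).mp hlt
  obtain ⟨z, hzZ, hzd⟩ := hZcov p hpN
  have hxz : dist x z ≤ (69/20) * w k := by
    calc dist x z ≤ dist x p + dist p z := dist_triangle _ _ _
      _ ≤ (49/20) * w k + w k := by linarith
      _ = (69/20) * w k := by ring
  have hpsi : 1/10 ≤ psi k x z := psi_big (by nlinarith)
  have hzT : z ∈ Tset Z k x := ⟨hzZ, by nlinarith⟩
  rw [sig_eq_sum Z k x (T := hfin.toFinset) (by simp)]
  have : psi' Z k z x = psi k x z := by unfold psi'; simp [hzZ]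
  calc (1:ℝ)/10 ≤ psi' Z k z x := by rw [this]; exact hpsi
    _ ≤ ∑ z' ∈ hfin.toFinset, psi' Z k z' x :=
        Finset.single_le_sum (fun i _ => psi'_nonneg Z k i x) (by simp [hzT])

/-- convex combination bound -/
lemma Fg_close (N : Set M) (Z : ℤ → Set M) (g : ↥N → ℝ) (k : ℤ) (x : M)
    (hfin : (Tset Z k x).Finite) (hσ : 0 < sig Z k x) {c B : ℝ}
    (hB : ∀ z, psi' Z k z x ≠ 0 → |ext N g z - c| ≤ B) :
    |Fg N Z g k x - c| ≤ B := by
  set T := hfin.toFinset with hTdef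
  have hT : Tset Z k x ⊆ ↑T := by simp [hTdef]
  have hS := Sg_eq_sum N Z g k x hT
  have hs := sig_eq_sum Z k x hT
  have key : Fg N Z g k x - c = (∑ z ∈ T, psi' Z k z x * (ext N g z - c)) / sig Z k x := by
    unfold Fg
    rw [hS, hs]
    have hσ' : sig Z k x ≠ 0 := ne_of_gt hσ
    rw [hs] at hσ'
    rw [div_sub' hσ', ← hs]
    congr 1
    rw [hs, Finset.sum_mul, ← Finset.sum_sub_distrib]
    apply Finset.sum_congr rfl
    intro z _
    ring
  rw [key]
  rw [abs_div, abs_of_pos hσ, div_le_iff₀ hσ]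
  calc |∑ z ∈ T, psi' Z k z x * (ext N g z - c)|
      ≤ ∑ z ∈ T, |psi' Z k z x * (ext N g z - c)| := Finset.abs_sum_le_sum_abs _ _
    _ ≤ ∑ z ∈ T, psi' Z k z x * B := by
        apply Finset.sum_le_sum
        intro z _
        rw [abs_mul, abs_of_nonneg (psi'_nonneg Z k z x)]
        by_cases h0 : psi' Z k z x = 0
        · simp [h0]
        · exact mul_le_mul_of_nonneg_left (hB z h0) (psi'_nonneg Z k z x)
    _ = sig Z k x * B := by rw [hs, Finset.sum_mul]
    _ = B * sig Z k x := by ring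

/-- quotient difference bound -/
lemma quot_diff {Gx Gy sx sy B : ℝ} (hsx : 1/10 ≤ sx) (hsy : 0 < sy) (hGy : |Gy| ≤ sy * B) :
    |Gx/sx - Gy/sy| ≤ 10 * |Gx - Gy| + 10 * B * |sx - sy| := by
  have hsx0 : (0:ℝ) < sx := lt_of_lt_of_le (by norm_num) hsx
  have hB : 0 ≤ B := by nlinarith [abs_nonneg Gy]
  have key : Gx/sx - Gy/sy = (Gx - Gy)/sx + (Gy/sy) * ((sy - sx)/sx) := by
    field_simp
    ring
  rw [key]
  have h1 : |(Gx - Gy)/sx| ≤ 10 * |Gx - Gy| := by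
    rw [abs_div, abs_of_pos hsx0, div_le_iff₀ hsx0]
    nlinarith [abs_nonneg (Gx - Gy)]
  have h2 : |Gy/sy| ≤ B := by
    rw [abs_div, abs_of_pos hsy, div_le_iff₀ hsy]
    linarith [hGy]
  have h3 : |(sy - sx)/sx| ≤ 10 * |sx - sy| := by
    rw [abs_div, abs_of_pos hsx0, div_le_iff₀ hsx0, abs_sub_comm]
    nlinarith [abs_nonneg (sx - sy), mul_le_mul_of_nonneg_left hsx (abs_nonneg (sx - sy))]
  calc |(Gx - Gy)/sx + (Gy/sy) * ((sy - sx)/sx)|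
      ≤ |(Gx - Gy)/sx| + |(Gy/sy) * ((sy - sx)/sx)| := abs_add_le _ _
    _ ≤ 10 * |Gx - Gy| + B * (10 * |sx - sy|) := by
        refine add_le_add h1 ?_
        rw [abs_mul]
        exact mul_le_mul h2 h3 (abs_nonneg _) hB
    _ = 10 * |Gx - Gy| + 10 * B * |sx - sy| := by ring

/-- existence of maximal separated nets -/
lemma exists_net (N : Set M) (s : ℝ) (hs : 0 < s) :
    ∃ Z : Set M, Z ⊆ N ∧ (∀ z ∈ Z, ∀ z' ∈ Z, z ≠ z' → s < dist z z') ∧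
      ∀ p ∈ N, ∃ z ∈ Z, dist p z ≤ s := by
  set S : Set (Set M) := {Z | Z ⊆ N ∧ ∀ z ∈ Z, ∀ z' ∈ Z, z ≠ z' → s < dist z z'} with hS
  have hchain : ∀ c ⊆ S, IsChain (· ⊆ ·) c → ∃ ub ∈ S, ∀ s ∈ c, s ⊆ ub := by
    intro c hcS hchain
    refine ⟨⋃₀ c, ⟨?_, ?_⟩, fun t ht => Set.subset_sUnion_of_mem ht⟩
    · exact Set.sUnion_subset fun t ht => (hcS ht).1
    · intro z hz z' hz' hne
      obtain ⟨A, hA, hzA⟩ := hz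
      obtain ⟨B, hB, hzB⟩ := hz'
      rcases hchain.total hA hB with h | h
      · exact (hcS hB).2 z (h hzA) z' hzB hne
      · exact (hcS hA).2 z hzA z' (h hzB) hne
  obtain ⟨Zm, hZm⟩ := zorn_subset S hchain
  obtain ⟨⟨hsub, hsep⟩, hmax⟩ := hZm
  refine ⟨Zm, hsub, hsep, ?_⟩
  intro p hp
  by_contra hc
  push_neg at hc
  have hpZ : p ∉ Zm := by
    intro hpZ
    have := hc p hpZ
    rw [dist_self] at this
    linarith
  have hmem : insert p Zm ∈ S := by
    constructor
    · exact Set.insert_subset hp hsub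
    · intro a ha b hb hne
      rcases Set.mem_insert_iff.mp ha with ha' | ha'
      · subst ha'
        rcases Set.mem_insert_iff.mp hb with hb' | hb'
        · subst hb'; exact absurd rfl hne
        · exact hc b hb'
      · rcases Set.mem_insert_iff.mp hb with hb' | hb'
        · subst hb'; rw [dist_comm]; exact hc a ha'
        · exact hsep a ha' b hb' hne
  have := hmax hmem (Set.subset_insert p Zm)
  exact hpZ (this (Set.mem_insert p Zm))

/-- iterated doubling -/
lemma doub_iter {N : Set M} {D : ℕ} (hdoub : SubsetDoublingConstant N D) :
    ∀ n : ℕ, ∀ y ∈ N, ∀ ρ : ℝ, 0 < ρ → ∃ T : Finset M, ↑T ⊆ N ∧ T.card ≤ D^n ∧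
      N ∩ Metric.closedBall y ρ ⊆ ⋃ c ∈ T, Metric.closedBall c (ρ / 2^n) := by
  intro n
  induction n with
  | zero =>
    intro y hy ρ hρ
    refine ⟨{y}, by simpa using hy, by simp, ?_⟩
    intro p hp
    simp only [Finset.mem_singleton, Set.mem_iUnion]
    exact ⟨y, rfl, by simpa using hp.2⟩
  | succ n ih =>
    classical
    intro y hy ρ hρ
    obtain ⟨T, hTN, hTc, hTcov⟩ := ih y hy ρ hρ
    have hch : ∀ c ∈ T, ∃ Tc : Finset M, ↑Tc ⊆ N ∧ Tc.card ≤ D ∧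
        N ∩ Metric.closedBall c (ρ / 2^n) ⊆ ⋃ c' ∈ Tc, Metric.closedBall c' (ρ / 2^n / 2) :=
      fun c hc => hdoub c (hTN hc) (ρ / 2^n) (by positivity)
    choose f hf1 hf2 hf3 using hch
    refine ⟨T.attach.biUnion (fun c => f c.1 c.2), ?_, ?_, ?_⟩
    · intro z hz
      simp only [Finset.coe_biUnion, Set.mem_iUnion, Finset.mem_coe] at hz
      obtain ⟨c, _, hzc⟩ := hz
      exact hf1 c.1 c.2 hzc
    · calc (T.attach.biUnion (fun c => f c.1 c.2)).card
          ≤ ∑ c ∈ T.attach, (f c.1 c.2).card := Finset.card_biUnion_le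
        _ ≤ ∑ _c ∈ T.attach, D := Finset.sum_le_sum (fun c _ => hf2 c.1 c.2)
        _ = T.card * D := by simp [Finset.card_attach, mul_comm]
        _ ≤ D^n * D := Nat.mul_le_mul_right D hTc
        _ = D^(n+1) := by rw [pow_succ]
    · intro p hp
      have hpN := hp.1
      have := hTcov hp
      simp only [Set.mem_iUnion] at this
      obtain ⟨c, hcT, hpc⟩ := this
      have := hf3 c hcT ⟨hpN, hpc⟩
      simp only [Set.mem_iUnion] at this
      obtain ⟨c', hc', hpc'⟩ := this
      simp only [Set.mem_iUnion]
      refine ⟨c', ?_, ?_⟩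
      · exact Finset.mem_biUnion.mpr ⟨⟨c, hcT⟩, Finset.mem_attach _ _, hc'⟩
      · have : ρ / 2^n / 2 = ρ / 2^(n+1) := by
          rw [div_div, ← pow_succ]
        rwa [this] at hpc'

/-- counting net points in a ball -/
lemma net_count {N : Set M} {D : ℕ} (hdoub : SubsetDoublingConstant N D)
    {Z : ℤ → Set M} (hZN : ∀ k, Z k ⊆ N)
    (hsep : ∀ k, ∀ z ∈ Z k, ∀ z' ∈ Z k, z ≠ z' → w k < dist z z')
    (k : ℤ) (x : M) : (Tset Z k x).Finite ∧ (Tset Z k x).ncard ≤ D^4 := by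
  have hw := w_pos k
  rcases Set.eq_empty_or_nonempty (Tset Z k x) with he | ⟨z₀, hz₀⟩
  · rw [he]; simp
  obtain ⟨hz₀Z, hz₀d⟩ := hz₀
  obtain ⟨T, hTN, hTc, hTcov⟩ := doub_iter hdoub 4 z₀ (hZN k hz₀Z) (8 * w k) (by positivity)
  have hsubball : Tset Z k x ⊆ N ∩ Metric.closedBall z₀ (8 * w k) := by
    rintro z ⟨hzZ, hzd⟩
    refine ⟨hZN k hzZ, ?_⟩
    rw [Metric.mem_closedBall]
    calc dist z z₀ ≤ dist z x + dist x z₀ := dist_triangle _ _ _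
      _ ≤ 4 * w k + 4 * w k := by rw [dist_comm z x]; exact add_le_add hzd hz₀d
      _ = 8 * w k := by ring
  have hradius : (8 * w k) / 2^4 = w k / 2 := by ring
  have hcov : ∀ z ∈ Tset Z k x, ∃ c ∈ T, dist z c ≤ w k / 2 := by
    intro z hz
    have := hTcov (hsubball hz)
    simp only [Set.mem_iUnion] at this
    obtain ⟨c, hcT, hzc⟩ := this
    exact ⟨c, hcT, by rw [← hradius]; exact hzc⟩
  classical
  choose! f hf1 hf2 using hcov
  have hinj : Set.InjOn f (Tset Z k x) := by
    intro z hz z' hz' hfe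
    by_contra hne
    have h1 := hf2 z hz
    have h2 := hf2 z' hz'
    rw [hfe] at h1
    have : dist z z' ≤ w k := by
      calc dist z z' ≤ dist z (f z') + dist (f z') z' := dist_triangle _ _ _
        _ ≤ w k / 2 + w k / 2 := add_le_add h1 (by rw [dist_comm]; exact h2)
        _ = w k := by ring
    exact absurd this (not_le.mpr (hsep k z hz.1 z' hz'.1 hne))
  have himg : f '' (Tset Z k x) ⊆ ↑T := by
    rintro _ ⟨z, hz, rfl⟩
    exact hf1 z hz
  have hfin : (Tset Z k x).Finite :=
    Set.Finite.of_finite_image (T.finite_toSet.subset himg) hinj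
  refine ⟨hfin, ?_⟩
  calc (Tset Z k x).ncard = (f '' (Tset Z k x)).ncard := (Set.ncard_image_of_injOn hinj).symm
    _ ≤ (↑T : Set M).ncard := Set.ncard_le_ncard himg T.finite_toSet
    _ = T.card := Set.ncard_coe_finset T
    _ ≤ D^4 := hTc

lemma ext_lip {N : Set M} {g : ↥N → ℝ} {L : ℝ}
    (hg : ∀ z w : ↥N, |g z - g w| ≤ L * dist z w) {a b : M} (ha : a ∈ N) (hb : b ∈ N) :
    |ext N g a - ext N g b| ≤ L * dist a b := by
  have h := hg ⟨a, ha⟩ ⟨b, hb⟩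
  rw [Subtype.dist_eq] at h
  unfold ext
  rw [dif_pos ha, dif_pos hb]
  exact h

omit [MetricSpace M] in
lemma ext_mem {N : Set M} {g : ↥N → ℝ} {a : M} (ha : a ∈ N) : ext N g a = g ⟨a, ha⟩ := by
  unfold ext; rw [dif_pos ha]

lemma E0_rep {N : Set M} {Z : ℤ → Set M} (g : ↥N → ℝ) {x : M} (hx : x ∉ N)
    (ht : 0 < Metric.infDist x N) {K : Finset ℤ}
    (hK : Finset.Icc (Int.log 2 (Metric.infDist x N)) (Int.log 2 (Metric.infDist x N) + 1) ⊆ K) :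
    E0 N Z g x = ∑ k ∈ K, chi k (Metric.infDist x N) * Fg N Z g k x := by
  unfold E0
  rw [dif_neg hx]
  apply finsum_eq_sum_of_support_subset
  intro k hk
  have hne0 : chi k (Metric.infDist x N) ≠ 0 := by
    intro h0
    apply hk
    simp [Function.mem_support, h0]
  obtain ⟨h1, h2⟩ := chi_mem_Icc ht hne0
  exact hK (Finset.mem_Icc.mpr ⟨h1, h2⟩)

/-- key single-point estimate: `E0 g x` is within `8 L d(x,q)` of `g q` for any `q ∈ N`. -/
lemma est_one {N : Set M} {Z : ℤ → Set M} (hne : N.Nonempty) (hcl : IsClosed N)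
    (hZN : ∀ k, Z k ⊆ N)
    (hZcov : ∀ k, ∀ p ∈ N, ∃ z ∈ Z k, dist p z ≤ w k)
    (hfin : ∀ k x, (Tset Z k x).Finite)
    {g : ↥N → ℝ} {L : ℝ} (hL : 0 ≤ L)
    (hg : ∀ z w : ↥N, |g z - g w| ≤ L * dist z w)
    {x : M} (hx : x ∉ N) {q : M} (hq : q ∈ N) :
    |E0 N Z g x - ext N g q| ≤ 8 * L * dist x q := by
  set t := Metric.infDist x N with htdef
  have ht : 0 < t := (hcl.notMem_iff_infDist_pos hne).mp hx
  set l := Int.log 2 t with hldef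
  set K : Finset ℤ := Finset.Icc l (l+1) with hKdef
  have hrep := E0_rep (Z := Z) g hx ht (K := K) (by rw [hKdef])
  have hone : ∑ k ∈ K, chi k t = 1 := sum_chi ht (by rw [hKdef])
  have hxq : t ≤ dist x q := Metric.infDist_le_dist_of_mem hq
  have key : E0 N Z g x - ext N g q = ∑ k ∈ K, chi k t * (Fg N Z g k x - ext N g q) := by
    have h2 : ∑ k ∈ K, chi k t * (Fg N Z g k x - ext N g q)
        = (∑ k ∈ K, chi k t * Fg N Z g k x) - (∑ k ∈ K, chi k t) * ext N g q := by
      rw [Finset.sum_mul, ← Finset.sum_sub_distrib]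
      exact Finset.sum_congr rfl fun k _ => by ring
    rw [h2, hone, one_mul, hrep]
  rw [key]
  have hperk : ∀ k ∈ K, |chi k t * (Fg N Z g k x - ext N g q)| ≤
      chi k t * (8 * L * dist x q) := by
    intro k _
    have hχ0 : 0 ≤ chi k t := chi_nonneg k ht.le
    by_cases hc : chi k t = 0
    · rw [hc]
      simp
    · obtain ⟨h1, h2⟩ := chi_ne_zero hc
      have hw := w_pos k
      have hwk1 : w (k-1) = w k / 2 := by
        have := w_succ (k-1); rw [show k - 1 + 1 = k by ring] at this; linarith
      have hσ : 1/10 ≤ sig Z k x := by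
        apply sig_ge N Z hne (hZcov k) (hfin k x)
        rw [w_succ] at h2
        rw [← htdef]
        nlinarith
      have hFB : |Fg N Z g k x - ext N g q| ≤ 8 * L * dist x q := by
        have hF := Fg_close N Z g k x (hfin k x) (lt_of_lt_of_le (by norm_num) hσ)
          (c := ext N g q) (B := L * ((7/2) * w k + dist x q)) ?_
        · refine hF.trans ?_
          have hwt : w k < 2 * t := by rw [hwk1] at h1; linarith
          nlinarith
        · intro z hz
          obtain ⟨hzZ, hzd⟩ := psi'_supp hz
          have := ext_lip hg (hZN k hzZ) hq
          refine this.trans ?_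
          have hdzq : dist z q ≤ (7/2) * w k + dist x q := by
            calc dist z q ≤ dist z x + dist x q := dist_triangle _ _ _
              _ ≤ (7/2) * w k + dist x q := by rw [dist_comm z x]; nlinarith
          nlinarith
      rw [abs_mul, abs_of_nonneg hχ0]
      exact mul_le_mul_of_nonneg_left hFB hχ0
  calc |∑ k ∈ K, chi k t * (Fg N Z g k x - ext N g q)|
      ≤ ∑ k ∈ K, |chi k t * (Fg N Z g k x - ext N g q)| := Finset.abs_sum_le_sum_abs _ _
    _ ≤ ∑ k ∈ K, chi k t * (8 * L * dist x q) := Finset.sum_le_sum hperk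
    _ = (∑ k ∈ K, chi k t) * (8 * L * dist x q) := by rw [Finset.sum_mul]
    _ = 8 * L * dist x q := by rw [hone, one_mul]

lemma sig_eq_sum' (Z : ℤ → Set M) (k : ℤ) (x : M) {T : Finset M}
    (hT : Function.support (fun z => psi' Z k z x) ⊆ ↑T) :
    sig Z k x = ∑ z ∈ T, psi' Z k z x :=
  finsum_eq_sum_of_support_subset _ hT

lemma Sg_eq_sum' (N : Set M) (Z : ℤ → Set M) (g : ↥N → ℝ) (k : ℤ) (x : M) {T : Finset M}
    (hT : Function.support (fun z => psi' Z k z x) ⊆ ↑T) :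
    Sg N Z g k x = ∑ z ∈ T, psi' Z k z x * ext N g z := by
  apply finsum_eq_sum_of_support_subset
  intro z hz
  apply hT
  simp only [Function.mem_support] at hz ⊢
  intro h0
  exact hz (by rw [h0, zero_mul])

set_option maxHeartbeats 1000000 in
/-- main local estimate -/
lemma est_loc {N : Set M} {Z : ℤ → Set M} {A : ℕ} (hne : N.Nonempty) (hcl : IsClosed N)
    (hZN : ∀ k, Z k ⊆ N)
    (hZcov : ∀ k, ∀ p ∈ N, ∃ z ∈ Z k, dist p z ≤ w k)
    (hfin : ∀ k x, (Tset Z k x).Finite)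
    (hTA : ∀ k x, ∃ T : Finset M, ↑T = Tset Z k x ∧ T.card ≤ A)
    {g : ↥N → ℝ} {L : ℝ} (hL : 0 ≤ L)
    (hg : ∀ z w : ↥N, |g z - g w| ≤ L * dist z w)
    {x y : M} (hx : x ∉ N) (hy : y ∉ N)
    (hdx : 16 * dist x y < Metric.infDist x N) (hdy : 16 * dist x y < Metric.infDist y N) :
    |E0 N Z g x - E0 N Z g y| ≤ (80 + 260 * (A:ℝ)) * (L * dist x y) := by
  set d := dist x y with hddef
  set tx := Metric.infDist x N with htxdef
  set ty := Metric.infDist y N with htydef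
  have hd0 : 0 ≤ d := dist_nonneg
  have htx : 0 < tx := (hcl.notMem_iff_infDist_pos hne).mp hx
  have hty : 0 < ty := (hcl.notMem_iff_infDist_pos hne).mp hy
  have htxy : ty ≤ tx + d := by
    rw [htydef, htxdef, hddef, dist_comm]
    exact Metric.infDist_le_infDist_add_dist
  have htyx : tx ≤ ty + d := by
    rw [htydef, htxdef, hddef]
    exact Metric.infDist_le_infDist_add_dist
  set l := Int.log 2 tx with hldef
  set K : Finset ℤ := Finset.Icc (l-1) (l+2) with hKdef
  have hlogx1 : w l ≤ tx := by
    have := Int.zpow_log_le_self (b := 2) (by norm_num) htx (R := ℝ)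
    unfold w; rw [hldef]; simpa using this
  have hlogx2 : tx < w (l+1) := by
    have := Int.lt_zpow_succ_log_self (b := 2) (by norm_num) tx (R := ℝ)
    unfold w; rw [hldef]; simpa using this
  have hwl1 : w (l+1) = 2 * w l := w_succ l
  have hrepx : E0 N Z g x = ∑ k ∈ K, chi k tx * Fg N Z g k x := by
    apply E0_rep g hx htx
    rw [hKdef, ← hldef]
    apply Finset.Icc_subset_Icc <;> omega
  have hsubKy : Finset.Icc (Int.log 2 ty) (Int.log 2 ty + 1) ⊆ K := by
    have hy1 : w (Int.log 2 ty) ≤ ty := by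
      have := Int.zpow_log_le_self (b := 2) (by norm_num) hty (R := ℝ)
      unfold w; simpa using this
    have hy2 : ty < w (Int.log 2 ty + 1) := by
      have := Int.lt_zpow_succ_log_self (b := 2) (by norm_num) ty (R := ℝ)
      unfold w; simpa using this
    have hup : Int.log 2 ty ≤ l + 1 := by
      have hwl2 : w (l+2) = 2 * (2 * w l) := by
        rw [show l+2 = (l+1)+1 by ring, w_succ, w_succ]
      have hlt : w (Int.log 2 ty) < w (l+2) := by
        apply lt_of_le_of_lt hy1
        have := w_pos l
        linarith
      have := w_lt_w hlt
      omega
    have hlow : l - 1 ≤ Int.log 2 ty := by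
      have hwl : w l = 2 * w (l-1) := by
        have h := w_succ (l-1); rw [show l - 1 + 1 = l by ring] at h; exact h
      have hlt : w (l-1) < w (Int.log 2 ty + 1) := by
        have h1 : w (l-1) < ty := by have := w_pos (l-1); linarith
        exact lt_trans h1 hy2
      have := w_lt_w hlt
      omega
    apply Finset.Icc_subset_Icc <;> omega
  have hrepy : E0 N Z g y = ∑ k ∈ K, chi k ty * Fg N Z g k y :=
    E0_rep g hy hty hsubKy
  have honex : ∑ k ∈ K, chi k tx = 1 := by
    apply sum_chi htx
    rw [hKdef, ← hldef]
    apply Finset.Icc_subset_Icc <;> omega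
  have honey : ∑ k ∈ K, chi k ty = 1 := sum_chi hty hsubKy
  obtain ⟨p, hpN, hpd⟩ : ∃ p ∈ N, dist x p < (17/16) * tx := by
    apply (Metric.infDist_lt_iff hne).mp
    rw [← htxdef]; linarith
  set ep := ext N g p with hepdef
  have hsplit : E0 N Z g x - E0 N Z g y =
      (∑ k ∈ K, (chi k tx - chi k ty) * (Fg N Z g k x - ep))
      + ∑ k ∈ K, chi k ty * (Fg N Z g k x - Fg N Z g k y) := by
    have hzero : ∑ k ∈ K, (chi k tx - chi k ty) * ep = 0 := by
      rw [← Finset.sum_mul, Finset.sum_sub_distrib, honex, honey]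
      ring
    have hsum3 : ∑ k ∈ K, ((chi k tx - chi k ty) * (Fg N Z g k x - ep)
        + chi k ty * (Fg N Z g k x - Fg N Z g k y)
        + (chi k tx - chi k ty) * ep)
        = ∑ k ∈ K, (chi k tx * Fg N Z g k x - chi k ty * Fg N Z g k y) :=
      Finset.sum_congr rfl fun k _ => by ring
    rw [hrepx, hrepy, ← Finset.sum_sub_distrib, ← hsum3,
      Finset.sum_add_distrib, Finset.sum_add_distrib, hzero, add_zero]
  rw [hsplit]
  have hfacts : ∀ k : ℤ, (chi k tx ≠ 0 ∨ chi k ty ≠ 0) →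
      w k ≤ (17/8) * tx ∧ tx ≤ (32/15) * w k := by
    intro k hk
    have hw := w_pos k
    have hwk1 : w (k-1) = w k / 2 := by
      have h := w_succ (k-1); rw [show k - 1 + 1 = k by ring] at h; linarith
    have hwk2 : w (k+1) = 2 * w k := w_succ k
    rcases hk with hk | hk
    · obtain ⟨h1, h2⟩ := chi_ne_zero hk
      rw [hwk1] at h1; rw [hwk2] at h2
      constructor <;> linarith
    · obtain ⟨h1, h2⟩ := chi_ne_zero hk
      rw [hwk1] at h1; rw [hwk2] at h2
      constructor <;> linarith
  have hA1 : ∀ k ∈ K, |(chi k tx - chi k ty) * (Fg N Z g k x - ep)| ≤ 20 * (L * d) := by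
    intro k _
    by_cases hk : chi k tx = 0 ∧ chi k ty = 0
    · rw [hk.1, hk.2]
      simp only [sub_self, zero_mul, abs_zero]
      positivity
    · have hk' : chi k tx ≠ 0 ∨ chi k ty ≠ 0 := by tauto
      obtain ⟨hup, hlo⟩ := hfacts k hk'
      have hw := w_pos k
      have hσ : 1/10 ≤ sig Z k x := by
        apply sig_ge N Z hne (hZcov k) (hfin k x)
        rw [← htxdef]; linarith
      have hχd : |chi k tx - chi k ty| ≤ 3 * d / w k := by
        refine (chi_lip k tx ty).trans ?_
        have habs : |tx - ty| ≤ d := abs_sub_le_iff.mpr ⟨by linarith, by linarith⟩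
        gcongr
      have hF : |Fg N Z g k x - ep| ≤ L * ((7/2) * w k + (17/16) * tx) := by
        apply Fg_close N Z g k x (hfin k x) (lt_of_lt_of_le (by norm_num) hσ)
        intro z hz
        obtain ⟨hzZ, hzd⟩ := psi'_supp hz
        refine (ext_lip hg (hZN k hzZ) hpN).trans ?_
        have hdzp : dist z p ≤ (7/2) * w k + (17/16) * tx := by
          calc dist z p ≤ dist z x + dist x p := dist_triangle _ _ _
            _ ≤ (7/2) * w k + (17/16) * tx := by
                rw [dist_comm z x]; linarith
        exact mul_le_mul_of_nonneg_left hdzp hL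
      calc |(chi k tx - chi k ty) * (Fg N Z g k x - ep)|
          = |chi k tx - chi k ty| * |Fg N Z g k x - ep| := abs_mul _ _
        _ ≤ (3 * d / w k) * (L * ((7/2) * w k + (17/16) * tx)) := by
            apply mul_le_mul hχd hF (abs_nonneg _)
            positivity
        _ ≤ (3 * d / w k) * (L * ((173/30) * w k)) := by
            apply mul_le_mul_of_nonneg_left _ (by positivity)
            apply mul_le_mul_of_nonneg_left _ hL
            linarith
        _ = (173/10) * (L * d) := by field_simp; ring
        _ ≤ 20 * (L * d) := by have hX : 0 ≤ L * d := mul_nonneg hL hd0; linarith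
  have hA2 : ∀ k ∈ K, |chi k ty * (Fg N Z g k x - Fg N Z g k y)| ≤
      chi k ty * (260 * (A:ℝ) * (L * d)) := by
    intro k _
    by_cases hk : chi k ty = 0
    · rw [hk]
      simp
    · have hχy : 0 ≤ chi k ty := chi_nonneg k hty.le
      obtain ⟨hup, hlo⟩ := hfacts k (Or.inr hk)
      have hw := w_pos k
      obtain ⟨h1y, h2y⟩ := chi_ne_zero hk
      have hwk2 : w (k+1) = 2 * w k := w_succ k
      have hdw : d < w k / 8 := by
        rw [hwk2] at h2y
        linarith
      obtain ⟨T, hTeq, hTcard⟩ := hTA k x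
      have hsupx : Function.support (fun z => psi' Z k z x) ⊆ ↑T := by
        rw [hTeq]; exact support_psi'_sub Z k x
      have hsupy : Function.support (fun z => psi' Z k z y) ⊆ ↑T := by
        intro z hz
        obtain ⟨hzZ, hzd⟩ := psi'_supp (Function.mem_support.mp hz)
        rw [hTeq]
        refine ⟨hzZ, ?_⟩
        calc dist x z ≤ dist x y + dist y z := dist_triangle _ _ _
          _ ≤ 4 * w k := by linarith
      have hTmem : ∀ z ∈ T, z ∈ Z k ∧ dist x z ≤ 4 * w k := by
        intro z hz
        have hzT : z ∈ Tset Z k x := by rw [← hTeq]; exact hz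
        exact hzT
      set B := L * (4 * w k + (17/16) * tx) with hBdef
      have hB0 : 0 ≤ B := by
        rw [hBdef]; positivity
      have hzB : ∀ z ∈ T, |ext N g z - ep| ≤ B := by
        intro z hz
        obtain ⟨hzZ, hzd⟩ := hTmem z hz
        refine (ext_lip hg (hZN k hzZ) hpN).trans ?_
        have hdzp : dist z p ≤ 4 * w k + (17/16) * tx := by
          calc dist z p ≤ dist z x + dist x p := dist_triangle _ _ _
            _ ≤ 4 * w k + (17/16) * tx := by rw [dist_comm z x]; linarith
        rw [hBdef]; exact mul_le_mul_of_nonneg_left hdzp hL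
      set sx := sig Z k x with hsxdef
      set sy := sig Z k y with hsydef
      have hsx : 1/10 ≤ sx := by
        rw [hsxdef]
        apply sig_ge N Z hne (hZcov k) (hfin k x)
        rw [← htxdef]; linarith
      have hsy : 1/10 ≤ sy := by
        rw [hsydef]
        apply sig_ge N Z hne (hZcov k) (hfin k y)
        rw [← htydef]; linarith
      have hsy0 : 0 < sy := lt_of_lt_of_le (by norm_num) hsy
      have hsx0 : 0 < sx := lt_of_lt_of_le (by norm_num) hsx
      have hsxsum : sx = ∑ z ∈ T, psi' Z k z x := by
        rw [hsxdef]; exact sig_eq_sum' Z k x hsupx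
      have hsysum : sy = ∑ z ∈ T, psi' Z k z y := by
        rw [hsydef]; exact sig_eq_sum' Z k y hsupy
      set Gx := ∑ z ∈ T, psi' Z k z x * (ext N g z - ep) with hGxdef
      set Gy := ∑ z ∈ T, psi' Z k z y * (ext N g z - ep) with hGydef
      have hFGx : Fg N Z g k x - ep = Gx / sx := by
        unfold Fg
        rw [Sg_eq_sum' N Z g k x hsupx (T := T), ← hsxdef,
          div_sub' (ne_of_gt hsx0), hGxdef]
        congr 1
        rw [hsxsum, Finset.sum_mul, ← Finset.sum_sub_distrib]
        exact Finset.sum_congr rfl fun z _ => by ring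
      have hFGy : Fg N Z g k y - ep = Gy / sy := by
        unfold Fg
        rw [Sg_eq_sum' N Z g k y hsupy (T := T), ← hsydef,
          div_sub' (ne_of_gt hsy0), hGydef]
        congr 1
        rw [hsysum, Finset.sum_mul, ← Finset.sum_sub_distrib]
        exact Finset.sum_congr rfl fun z _ => by ring
      have hGxy : |Gx - Gy| ≤ (T.card : ℝ) * ((2 * d / w k) * B) := by
        rw [hGxdef, hGydef, ← Finset.sum_sub_distrib]
        refine (Finset.abs_sum_le_sum_abs _ _).trans ?_
        have hper : ∀ z ∈ T, |psi' Z k z x * (ext N g z - ep) - psi' Z k z y * (ext N g z - ep)|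
            ≤ (2 * d / w k) * B := by
          intro z hz
          rw [show psi' Z k z x * (ext N g z - ep) - psi' Z k z y * (ext N g z - ep)
              = (psi' Z k z x - psi' Z k z y) * (ext N g z - ep) by ring, abs_mul]
          exact mul_le_mul (psi'_lip Z k z x y) (hzB z hz) (abs_nonneg _) (by positivity)
        refine (Finset.sum_le_sum hper).trans_eq ?_
        rw [Finset.sum_const, nsmul_eq_mul]
      have hsxy : |sx - sy| ≤ (T.card : ℝ) * (2 * d / w k) := by
        rw [hsxsum, hsysum, ← Finset.sum_sub_distrib]
        refine (Finset.abs_sum_le_sum_abs _ _).trans ?_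
        refine (Finset.sum_le_sum (fun z _ => psi'_lip Z k z x y)).trans_eq ?_
        rw [Finset.sum_const, nsmul_eq_mul]
      have hGyB : |Gy| ≤ sy * B := by
        rw [hGydef, hsysum, Finset.sum_mul]
        refine (Finset.abs_sum_le_sum_abs _ _).trans ?_
        apply Finset.sum_le_sum
        intro z hz
        rw [abs_mul, abs_of_nonneg (psi'_nonneg Z k z y)]
        exact mul_le_mul_of_nonneg_left (hzB z hz) (psi'_nonneg Z k z y)
      have hq := quot_diff (Gx := Gx) hsx hsy0 hGyB
      have hFxy : |Fg N Z g k x - Fg N Z g k y| ≤ 260 * (A:ℝ) * (L * d) := by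
        have heq : Fg N Z g k x - Fg N Z g k y = Gx / sx - Gy / sy := by
          have e1 := hFGx
          have e2 := hFGy
          linarith
        rw [heq]
        have hm : (T.card : ℝ) ≤ (A : ℝ) := Nat.cast_le.mpr hTcard
        have hm0 : (0:ℝ) ≤ (T.card : ℝ) := Nat.cast_nonneg _
        have hBw : B ≤ L * ((94/15) * w k) := by
          rw [hBdef]
          apply mul_le_mul_of_nonneg_left _ hL
          linarith
        calc |Gx / sx - Gy / sy|
            ≤ 10 * |Gx - Gy| + 10 * B * |sx - sy| := hq
          _ ≤ 10 * ((T.card : ℝ) * ((2 * d / w k) * B))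
              + 10 * B * ((T.card : ℝ) * (2 * d / w k)) := by
              refine add_le_add (by linarith [hGxy]) ?_
              apply mul_le_mul_of_nonneg_left hsxy (by positivity)
          _ = 20 * (T.card : ℝ) * ((2 * d / w k) * B) := by ring
          _ ≤ 20 * (A : ℝ) * ((2 * d / w k) * (L * ((94/15) * w k))) := by
              apply mul_le_mul (by linarith) ?_ (by positivity) (by positivity)
              apply mul_le_mul_of_nonneg_left hBw (by positivity)
          _ = (3760/15) * (A:ℝ) * (L * d) := by field_simp; ring
          _ ≤ 260 * (A:ℝ) * (L * d) := by
              have hALd : (0:ℝ) ≤ (A:ℝ) * (L * d) := by positivity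
              have h260 : (3760/15 : ℝ) * ((A:ℝ) * (L * d)) ≤ 260 * ((A:ℝ) * (L * d)) := by
                linarith
              calc (3760/15) * (A:ℝ) * (L * d) = (3760/15) * ((A:ℝ) * (L * d)) := by ring
                _ ≤ 260 * ((A:ℝ) * (L * d)) := h260
                _ = 260 * (A:ℝ) * (L * d) := by ring
      rw [abs_mul, abs_of_nonneg hχy]
      exact mul_le_mul_of_nonneg_left hFxy hχy
  have h1 : |∑ k ∈ K, (chi k tx - chi k ty) * (Fg N Z g k x - ep)| ≤ 80 * (L * d) := by
    refine (Finset.abs_sum_le_sum_abs _ _).trans ?_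
    refine (Finset.sum_le_sum hA1).trans ?_
    rw [Finset.sum_const, nsmul_eq_mul]
    have hKcard : K.card = 4 := by
      rw [hKdef, Int.card_Icc]
      omega
    rw [hKcard]
    push_cast
    have hX : 0 ≤ L * d := mul_nonneg hL hd0
    linarith
  have h2 : |∑ k ∈ K, chi k ty * (Fg N Z g k x - Fg N Z g k y)| ≤ 260 * (A:ℝ) * (L * d) := by
    refine (Finset.abs_sum_le_sum_abs _ _).trans ?_
    refine (Finset.sum_le_sum hA2).trans ?_
    rw [← Finset.sum_mul, honey, one_mul]
  calc |(∑ k ∈ K, (chi k tx - chi k ty) * (Fg N Z g k x - ep))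
      + ∑ k ∈ K, chi k ty * (Fg N Z g k x - Fg N Z g k y)|
      ≤ |∑ k ∈ K, (chi k tx - chi k ty) * (Fg N Z g k x - ep)|
        + |∑ k ∈ K, chi k ty * (Fg N Z g k x - Fg N Z g k y)| := abs_add_le _ _
    _ ≤ 80 * (L * d) + 260 * (A:ℝ) * (L * d) := add_le_add h1 h2
    _ = (80 + 260 * (A:ℝ)) * (L * d) := by ring

omit [MetricSpace M] in
lemma ext_add (N : Set M) (g h : ↥N → ℝ) : ext N (g + h) = ext N g + ext N h := by
  funext m
  unfold ext
  by_cases hm : m ∈ N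
  · simp [hm]
  · simp [hm]

omit [MetricSpace M] in
lemma ext_smul (N : Set M) (c : ℝ) (g : ↥N → ℝ) : ext N (c • g) = c • ext N g := by
  funext m
  unfold ext
  by_cases hm : m ∈ N
  · simp [hm]
  · simp [hm]

lemma Fg_add (N : Set M) (Z : ℤ → Set M) (hfin : ∀ k x, (Tset Z k x).Finite)
    (g h : ↥N → ℝ) (k : ℤ) (x : M) :
    Fg N Z (g + h) k x = Fg N Z g k x + Fg N Z h k x := by
  have hT : Tset Z k x ⊆ ↑(hfin k x).toFinset := by simp
  unfold Fg
  rw [← add_div]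
  congr 1
  rw [Sg_eq_sum N Z (g+h) k x hT, Sg_eq_sum N Z g k x hT, Sg_eq_sum N Z h k x hT,
    ← Finset.sum_add_distrib]
  apply Finset.sum_congr rfl
  intro z _
  rw [ext_add]
  simp only [Pi.add_apply]
  ring

lemma Fg_smul (N : Set M) (Z : ℤ → Set M) (hfin : ∀ k x, (Tset Z k x).Finite)
    (c : ℝ) (g : ↥N → ℝ) (k : ℤ) (x : M) :
    Fg N Z (c • g) k x = c * Fg N Z g k x := by
  have hT : Tset Z k x ⊆ ↑(hfin k x).toFinset := by simp
  unfold Fg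
  rw [← mul_div_assoc]
  congr 1
  rw [Sg_eq_sum N Z (c • g) k x hT, Sg_eq_sum N Z g k x hT, Finset.mul_sum]
  apply Finset.sum_congr rfl
  intro z _
  rw [ext_smul]
  simp only [Pi.smul_apply, smul_eq_mul]
  ring

lemma E0_add (N : Set M) (Z : ℤ → Set M) (hne : N.Nonempty) (hcl : IsClosed N)
    (hfin : ∀ k x, (Tset Z k x).Finite) (g h : ↥N → ℝ) (x : M) :
    E0 N Z (g + h) x = E0 N Z g x + E0 N Z h x := by
  by_cases hx : x ∈ N
  · unfold E0
    rw [dif_pos hx, dif_pos hx, dif_pos hx]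
    simp
  · have ht : 0 < Metric.infDist x N := (hcl.notMem_iff_infDist_pos hne).mp hx
    rw [E0_rep (g+h) hx ht (subset_refl _), E0_rep g hx ht (subset_refl _),
      E0_rep h hx ht (subset_refl _), ← Finset.sum_add_distrib]
    apply Finset.sum_congr rfl
    intro k _
    rw [Fg_add N Z hfin]
    ring

lemma E0_smul (N : Set M) (Z : ℤ → Set M) (hne : N.Nonempty) (hcl : IsClosed N)
    (hfin : ∀ k x, (Tset Z k x).Finite) (c : ℝ) (g : ↥N → ℝ) (x : M) :
    E0 N Z (c • g) x = c * E0 N Z g x := by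
  by_cases hx : x ∈ N
  · unfold E0
    rw [dif_pos hx, dif_pos hx]
    simp
  · have ht : 0 < Metric.infDist x N := (hcl.notMem_iff_infDist_pos hne).mp hx
    rw [E0_rep (c • g) hx ht (subset_refl _), E0_rep g hx ht (subset_refl _),
      Finset.mul_sum]
    apply Finset.sum_congr rfl
    intro k _
    rw [Fg_smul N Z hfin]
    ring

theorem main (M : Type) [MetricSpace M] (N : Set M) (hne : N.Nonempty)
    (hcl : IsClosed N) (D : ℕ) (hD : 2 ≤ D) (hdoub : SubsetDoublingConstant N D) :
    ∃ E : (↥N → ℝ) →ₗ[ℝ] (M → ℝ),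
      (∀ g : ↥N → ℝ, ∀ z : ↥N, E g (z : M) = g z) ∧
      (∀ L : ℝ, 0 ≤ L → ∀ g : ↥N → ℝ,
        (∀ z w : ↥N, |g z - g w| ≤ L * dist z w) →
        ∀ x y : M, |E g x - E g y| ≤ (1680 * (D : ℝ) ^ 4 * L) * dist x y) := by
  classical
  have hZex : ∀ k : ℤ, ∃ Zk : Set M, Zk ⊆ N ∧
      (∀ z ∈ Zk, ∀ z' ∈ Zk, z ≠ z' → w k < dist z z') ∧
      ∀ p ∈ N, ∃ z ∈ Zk, dist p z ≤ w k :=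
    fun k => exists_net N (w k) (w_pos k)
  choose Z hZN hZsep hZcov using hZex
  have hfin : ∀ k x, (Tset Z k x).Finite := fun k x => (net_count hdoub hZN hZsep k x).1
  have hTA : ∀ k x, ∃ T : Finset M, ↑T = Tset Z k x ∧ T.card ≤ D^4 := by
    intro k x
    refine ⟨(hfin k x).toFinset, (hfin k x).coe_toFinset, ?_⟩
    have hc := (net_count hdoub hZN hZsep k x).2
    rwa [Set.ncard_eq_toFinset_card _ (hfin k x)] at hc
  refine ⟨{ toFun := E0 N Z,
            map_add' := fun g h => funext fun x => E0_add N Z hne hcl hfin g h x,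
            map_smul' := fun c g => by
              funext x
              simp only [RingHom.id_apply, Pi.smul_apply, smul_eq_mul]
              exact E0_smul N Z hne hcl hfin c g x }, ?_, ?_⟩
  · intro g z
    simp only [LinearMap.coe_mk, AddHom.coe_mk]
    unfold E0
    rw [dif_pos z.2]
  · intro L hL g hg x y
    simp only [LinearMap.coe_mk, AddHom.coe_mk]
    have hD2 : (2:ℝ) ≤ (D:ℝ) := by exact_mod_cast hD
    have h4 : (4:ℝ) ≤ (D:ℝ)^2 := by nlinarith
    have h16 : (16:ℝ) ≤ (D:ℝ)^4 := by nlinarith [h4, sq_nonneg ((D:ℝ)^2 - 4)]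
    have hLd : 0 ≤ L * dist x y := mul_nonneg hL dist_nonneg
    have hfinal : ∀ c : ℝ, 0 ≤ c → c ≤ 1680 * (D:ℝ)^4 →
        ∀ s : ℝ, |s| ≤ c * (L * dist x y) → |s| ≤ (1680 * (D:ℝ)^4 * L) * dist x y := by
      intro c hc0 hc s hs
      refine hs.trans ?_
      have := mul_le_mul_of_nonneg_right hc hLd
      calc c * (L * dist x y) ≤ 1680 * (D:ℝ)^4 * (L * dist x y) := this
        _ = (1680 * (D:ℝ)^4 * L) * dist x y := by ring
    have hDpos : (0:ℝ) < (D:ℝ)^4 := by positivity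
    -- the two-sided estimate in the "far" regime
    have hcase : ∀ u v : M, u ∉ N → v ∉ N → Metric.infDist u N ≤ 16 * dist u v →
        |E0 N Z g u - E0 N Z g v| ≤ 280 * (L * dist u v) := by
      intro u v hu hv hfar
      have htu : 0 < Metric.infDist u N := (hcl.notMem_iff_infDist_pos hne).mp hu
      obtain ⟨p, hpN, hpd⟩ : ∃ p ∈ N, dist u p < (17/16) * Metric.infDist u N := by
        apply (Metric.infDist_lt_iff hne).mp
        linarith
      have e1 := est_one hne hcl hZN hZcov hfin hL hg hu hpN
      have e2 := est_one hne hcl hZN hZcov hfin hL hg hv hpN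
      have hdup : dist u p ≤ 17 * dist u v := by linarith
      have hdvp : dist v p ≤ 18 * dist u v := by
        calc dist v p ≤ dist v u + dist u p := dist_triangle _ _ _
          _ ≤ 18 * dist u v := by rw [dist_comm v u]; linarith
      have m1 : L * dist u p ≤ L * (17 * dist u v) := mul_le_mul_of_nonneg_left hdup hL
      have m2 : L * dist v p ≤ L * (18 * dist u v) := mul_le_mul_of_nonneg_left hdvp hL
      calc |E0 N Z g u - E0 N Z g v|
          ≤ |E0 N Z g u - ext N g p| + |ext N g p - E0 N Z g v| :=
            abs_sub_le _ _ _
        _ = |E0 N Z g u - ext N g p| + |E0 N Z g v - ext N g p| := by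
            rw [abs_sub_comm (ext N g p)]
        _ ≤ 8 * L * dist u p + 8 * L * dist v p := add_le_add e1 e2
        _ ≤ 280 * (L * dist u v) := by linarith [m1, m2]
    by_cases hx : x ∈ N
    · by_cases hy : y ∈ N
      · have : E0 N Z g x - E0 N Z g y = ext N g x - ext N g y := by
          unfold E0 ext
          rw [dif_pos hx, dif_pos hy, dif_pos hx, dif_pos hy]
        rw [this]
        refine hfinal 1 zero_le_one (by linarith) _ ?_
        rw [one_mul]
        exact ext_lip hg hx hy
      · refine hfinal 8 (by norm_num) (by linarith) _ ?_
        have e2 := est_one hne hcl hZN hZcov hfin hL hg hy hx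
        have hExx : E0 N Z g x = ext N g x := by
          unfold E0 ext
          rw [dif_pos hx, dif_pos hx]
        rw [hExx, abs_sub_comm]
        refine e2.trans ?_
        rw [dist_comm y x]
        ring_nf
        linarith [hLd]
    · by_cases hy : y ∈ N
      · refine hfinal 8 (by norm_num) (by linarith) _ ?_
        have e1 := est_one hne hcl hZN hZcov hfin hL hg hx hy
        have hEyy : E0 N Z g y = ext N g y := by
          unfold E0 ext
          rw [dif_pos hy, dif_pos hy]
        rw [hEyy]
        refine e1.trans ?_
        ring_nf
        linarith [hLd]
      · by_cases h1 : 16 * dist x y < Metric.infDist x N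
        · by_cases h2 : 16 * dist x y < Metric.infDist y N
          · refine hfinal (80 + 260 * (D:ℝ)^4) (by positivity) (by linarith) _ ?_
            have hloc := est_loc hne hcl hZN hZcov hfin hTA hL hg hx hy h1 h2
            have hcast : ((D^4 : ℕ) : ℝ) = (D:ℝ)^4 := by push_cast; ring
            rw [hcast] at hloc
            exact hloc
          · refine hfinal 280 (by norm_num) (by linarith) _ ?_
            rw [abs_sub_comm, dist_comm x y]
            exact hcase y x hy hx (by push_neg at h2; rw [dist_comm y x]; exact h2)
        · refine hfinal 280 (by norm_num) (by linarith) _ ?_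
          exact hcase x y hx hy (by push_neg at h1; exact h1)

end LipExt6

/-- **Bounded linear extension operator for Lipschitz functions on a doubling subset.**
Let `(M, d)` be a metric space and `N ⊆ M` a nonempty closed subset which, with the induced
metric, has doubling constant `D ≥ 2`.  Then there is an `ℝ`-linear map `E` from the functions
on `N` to the functions on `M` such that `E g` restricts to `g` on `N`, and `E g` is
`(1680·D⁴·L)`-Lipschitz whenever `g` is `L`-Lipschitz. -/
theorem stmt6 (M : Type) [MetricSpace M] (N : Set M) (hne : N.Nonempty)
    (hcl : IsClosed N) (D : ℕ) (hD : 2 ≤ D) (hdoub : SubsetDoublingConstant N D) :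
    ∃ E : (↥N → ℝ) →ₗ[ℝ] (M → ℝ),
      (∀ g : ↥N → ℝ, ∀ z : ↥N, E g (z : M) = g z) ∧
      (∀ L : ℝ, 0 ≤ L → ∀ g : ↥N → ℝ,
        (∀ z w : ↥N, |g z - g w| ≤ L * dist z w) →
        ∀ x y : M, |E g x - E g y| ≤ (1680 * (D : ℝ) ^ 4 * L) * dist x y) := by
  exact LipExt6.main M N hne hcl D hD hdoub

end LipExt6
end

section
/- Let (M, d, 0) be a pointed metric space which is geodesic, i.e., for all x, y ∈ M there exists γ : [0,1] → M with γ(0) = x, γ(1) = y and d(γ(s), γ(t)) = |s − t|·d(x, y) for all s, t ∈ [0,1]. Let σ : M × [0,1] → M satisfy: (G1) σ(x, 0) = 0 and σ(x, 1) = x for all x ∈ M; (G2) d(σ(x, t), σ(x, s)) ≤ |s − t|·d(x, 0) for all x ∈ M and s, t ∈ [0,1]; (G3) d(σ(x, t), σ(y, t)) ≤ t·d(x, y) for all x, y ∈ M and t ∈ [0,1]. Let S > 0 and let N ⊆ M be such that for every x ∈ N with d(x, 0) > S one has σ(x, S/d(x, 0)) ∈ N. Then the map r : N → N defined by r(x)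 = x if d(x, 0) ≤ S and r(x) = σ(x, S/d(x, 0)) if d(x, 0) > S is 2-Lipschitz, takes values in N_{[0,S]} := {y ∈ N : d(y, 0) ≤ S}, and satisfies r(x) = x for every x ∈ N_{[0,S]}; in other words, r is a 2-Lipschitz retraction of N onto N_{[0,S]}. -/
/-- **Radial retraction onto a ball via a self-similar contraction.**
Let `(M, d, 0)` be a geodesic pointed metric space with a self-similar contraction
`σ : M × [0,1] → M` (conditions (G1)–(G3)).  Let `S > 0` and `N ⊆ M` be such that whenever
`x ∈ N` has `d(x,0) > S`, the point `σ(x, S/d(x,0))` belongs to `N`.  Then the map `r`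
defined by `r x = x` if `d(x,0) ≤ S` and `r x = σ(x, S/d(x,0))` otherwise is a `2`-Lipschitz
retraction of `N` onto `N_{[0,S]} = {y ∈ N : d(y,0) ≤ S}`. -/
theorem stmt7 (M : Type) [MetricSpace M] (o : M)
    (hgeo : ∀ x y : M, ∃ γ : ℝ → M, γ 0 = x ∧ γ 1 = y ∧
      ∀ s ∈ Set.Icc (0 : ℝ) 1, ∀ t ∈ Set.Icc (0 : ℝ) 1,
        dist (γ s) (γ t) = |s - t| * dist x y)
    (σ : M → ℝ → M)
    (hG1 : ∀ x : M, σ x 0 = o ∧ σ x 1 = x)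
    (hG2 : ∀ x : M, ∀ s ∈ Set.Icc (0 : ℝ) 1, ∀ t ∈ Set.Icc (0 : ℝ) 1,
      dist (σ x t) (σ x s) ≤ |s - t| * dist x o)
    (hG3 : ∀ x y : M, ∀ t ∈ Set.Icc (0 : ℝ) 1,
      dist (σ x t) (σ y t) ≤ t * dist x y)
    (S : ℝ) (hS : 0 < S) (N : Set M)
    (hN : ∀ x ∈ N, S < dist x o → σ x (S / dist x o) ∈ N)
    (r : M → M)
    (hr₁ : ∀ x : M, dist x o ≤ S → r x = x)
    (hr₂ : ∀ x : M, S < dist x o → r x = σ x (S / dist x o)) :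
    (∀ x ∈ N, r x ∈ N ∧ dist (r x) o ≤ S) ∧
    (∀ x ∈ N, dist x o ≤ S → r x = x) ∧
    (∀ x ∈ N, ∀ y ∈ N, dist (r x) (r y) ≤ 2 * dist x y) := by
  -- basic facts about the parameter t = S / dist x o when S < dist x o
  have hparam : ∀ x : M, S < dist x o →
      0 ≤ S / dist x o ∧ S / dist x o ≤ 1 ∧ (S / dist x o) * dist x o = S := by
    intro x hx
    have hd : 0 < dist x o := hS.trans hx
    exact ⟨div_nonneg hS.le hd.le, (div_le_one hd).2 hx.le,
      div_mul_cancel₀ S hd.ne'⟩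
  have hball : ∀ x : M, dist (r x) o ≤ S := by
    intro x
    rcases le_or_gt (dist x o) S with h | h
    · rw [hr₁ x h]; exact h
    · obtain ⟨ht0, ht1, htm⟩ := hparam x h
      rw [hr₂ x h]
      have := hG2 x 0 ⟨le_refl 0, zero_le_one⟩ (S / dist x o) ⟨ht0, ht1⟩
      rw [(hG1 x).1] at this
      calc dist (σ x (S / dist x o)) o ≤ |0 - S / dist x o| * dist x o := this
        _ = (S / dist x o) * dist x o := by rw [abs_sub_comm, sub_zero, abs_of_nonneg ht0]
        _ = S := htm
  have main : ∀ x y : M, dist x o ≤ dist y o → dist (r x) (r y) ≤ 2 * dist x y := by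
    intro x y hab
    set a := dist x o with ha
    set b := dist y o with hb
    have hD : b - a ≤ dist x y := by
      have := dist_triangle y x o
      rw [dist_comm y x] at this
      linarith
    have hD0 : (0:ℝ) ≤ dist x y := dist_nonneg
    rcases le_or_gt b S with hbS | hbS
    · rw [hr₁ x (hab.trans hbS), hr₁ y hbS]; linarith
    · obtain ⟨hu0, hu1, hum⟩ := hparam y hbS
      set u := S / b with hu
      rw [hr₂ y hbS]
      rcases le_or_gt a S with haS | haS
      · rw [hr₁ x haS]
        have h1 : dist x (σ y u) ≤ dist x (σ x u) + dist (σ x u) (σ y u) :=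
          dist_triangle _ _ _
        have h2 : dist x (σ x u) ≤ (1 - u) * a := by
          have := hG2 x u ⟨hu0, hu1⟩ 1 ⟨zero_le_one, le_refl 1⟩
          rw [(hG1 x).2] at this
          rwa [abs_sub_comm, abs_of_nonneg (by linarith : (0:ℝ) ≤ 1 - u)] at this
        have h3 : dist (σ x u) (σ y u) ≤ u * dist x y := hG3 x y u ⟨hu0, hu1⟩
        nlinarith [sq_nonneg (b - S), mul_pos hS (hS.trans hbS)]
      · obtain ⟨ht0, ht1, htm⟩ := hparam x haS
        set t := S / a with ht
        rw [hr₂ x haS]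
        have h1 : dist (σ x t) (σ y u) ≤ dist (σ x t) (σ y t) + dist (σ y t) (σ y u) :=
          dist_triangle _ _ _
        have h2 : dist (σ x t) (σ y t) ≤ t * dist x y := hG3 x y t ⟨ht0, ht1⟩
        have hut : u ≤ t := by
          apply div_le_div_of_nonneg_left hS.le (hS.trans haS) hab
        have h3 : dist (σ y t) (σ y u) ≤ (t - u) * b := by
          have := hG2 y u ⟨hu0, hu1⟩ t ⟨ht0.trans (le_refl t), ht1⟩
          rwa [abs_sub_comm, abs_of_nonneg (by linarith : (0:ℝ) ≤ t - u)] at this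
        -- (t - u) * b = t*b - S ≤ b - a  since t ≤ 1 and t*a = S
        nlinarith [mul_nonneg (sub_nonneg.2 ht1) (sub_nonneg.2 hab)]
  refine ⟨?_, ?_, ?_⟩
  · intro x hx
    refine ⟨?_, hball x⟩
    rcases le_or_gt (dist x o) S with h | h
    · rw [hr₁ x h]; exact hx
    · rw [hr₂ x h]; exact hN x hx h
  · intro x _ h; exact hr₁ x h
  · intro x _ y _
    rcases le_total (dist x o) (dist y o) with h | h
    · exact main x y h
    · rw [dist_comm (r x) (r y), dist_comm x y]; exact main y x h
end

section
/- Let (M, d) be a metric space, z ∈ M, 0 < p ≤ 1 and K > 1. If x, y ∈ M satisfy K·d(z, x) ≤ d(z, y), then d(z, x)^p + d(z, y)^p ≤ ((K^p + 1)/(K^p − 1))·d(x, y)^p. -/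
/-- **Separated annuli inequality.**
Let `(M, d)` be a metric space, `z ∈ M`, `0 < p ≤ 1` and `K > 1`.  If `x, y ∈ M` satisfy
`K·d(z,x) ≤ d(z,y)`, then `d(z,x)^p + d(z,y)^p ≤ ((K^p + 1)/(K^p − 1))·d(x,y)^p`. -/
theorem stmt8 (M : Type) [MetricSpace M] (z x y : M) (p K : ℝ)
    (hp₀ : 0 < p) (hp₁ : p ≤ 1) (hK : 1 < K)
    (h : K * dist z x ≤ dist z y) :
    dist z x ^ p + dist z y ^ p ≤ ((K ^ p + 1) / (K ^ p - 1)) * dist x y ^ p := by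
  set a := dist z x with ha
  set b := dist z y with hb
  set c := dist x y with hc
  have ha0 : 0 ≤ a := dist_nonneg
  have hb0 : 0 ≤ b := dist_nonneg
  have hc0 : 0 ≤ c := dist_nonneg
  have hk1 : 1 < K ^ p := Real.one_lt_rpow_iff_of_pos (by linarith) |>.mpr (Or.inl ⟨hK, hp₀⟩)
  -- subadditivity: b ≤ a + c ⇒ b^p ≤ a^p + c^p
  have htri : b ≤ a + c := dist_triangle z x y
  have hsub : b ^ p ≤ a ^ p + c ^ p := by
    calc b ^ p ≤ (a + c) ^ p := Real.rpow_le_rpow hb0 htri hp₀.le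
      _ ≤ a ^ p + c ^ p := by
        have := NNReal.rpow_add_le_add_rpow (a.toNNReal) (c.toNNReal) hp₀.le hp₁
        have := NNReal.coe_le_coe.mpr this
        push_cast [NNReal.coe_rpow, Real.coe_toNNReal a ha0, Real.coe_toNNReal c hc0] at this
        simpa using this
  -- K^p * a^p ≤ b^p
  have hKab : K ^ p * a ^ p ≤ b ^ p := by
    calc K ^ p * a ^ p = (K * a) ^ p := (Real.mul_rpow (by linarith) ha0).symm
      _ ≤ b ^ p := Real.rpow_le_rpow (by positivity) h hp₀.le
  have hcp : b ^ p - a ^ p ≤ c ^ p := by linarith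
  rw [div_mul_eq_mul_div, le_div_iff₀ (by linarith)]
  nlinarith [Real.rpow_nonneg ha0 p, Real.rpow_nonneg hc0 p]
end

section
/- Let 1 ≤ p < ∞ and λ ≥ 1, and let (X_n)_{n ∈ ℕ} be a sequence of real Banach spaces each of which has the λ-bounded approximation property. Then the Banach space (⊕_{n ∈ ℕ} X_n)_p has the λ-bounded approximation property. -/
open scoped ENNReal

section Helpers

variable {p : ℝ≥0∞} {E : ℕ → Type*} [∀ i, NormedAddCommGroup (E i)] [Fact (1 ≤ p)]

lemma lp_single_add (i : ℕ) (a b : E i) :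
    lp.single p i (a + b) = lp.single p i a + lp.single p i b := by
  apply lp.ext
  funext j
  rw [lp.coeFn_add, Pi.add_apply]
  by_cases h : j = i
  · subst h; simp [lp.single_apply_self]
  · simp [lp.single_apply_ne p i _ h]

lemma lp_single_sub (i : ℕ) (a b : E i) :
    lp.single p i (a - b) = lp.single p i a - lp.single p i b := by
  apply lp.ext
  funext j
  rw [lp.coeFn_sub, Pi.sub_apply]
  by_cases h : j = i
  · subst h; simp [lp.single_apply_self]
  · simp [lp.single_apply_ne p i _ h]

lemma lp_norm_single (hq : 0 < p.toReal) (i : ℕ) (a : E i) :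
    ‖lp.single p i a‖ = ‖a‖ := by
  have := lp.norm_single (E := E) (ENNReal.toReal_pos_iff.mp hq).1 i a
  simpa using this

variable [∀ i, NormedSpace ℝ (E i)]

/-- The inclusion of the `i`-th coordinate into `lp E p`, as a continuous linear map. -/
noncomputable def lpSingleL (hq : 0 < p.toReal) (i : ℕ) : E i →L[ℝ] lp E p :=
  LinearMap.mkContinuous
    { toFun := lp.single p i
      map_add' := lp_single_add i
      map_smul' := fun c a => lp.single_smul p i c a }
    1 (fun a => by rw [one_mul]; exact (lp_norm_single hq i a).le)

/-- Evaluation at the `i`-th coordinate, as a continuous linear map. -/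
noncomputable def lpProjL (hp0 : p ≠ 0) (i : ℕ) : lp E p →L[ℝ] E i :=
  LinearMap.mkContinuous
    { toFun := fun f => f i
      map_add' := fun f g => by simp [lp.coeFn_add]
      map_smul' := fun c f => by simp [lp.coeFn_smul] }
    1 (fun f => by rw [one_mul]; exact lp.norm_apply_le_norm hp0 f i)

lemma lp_norm_le_mul_norm (hq : 0 < p.toReal) {C : ℝ} (hC : 0 ≤ C) (g f : lp E p)
    (h : ∀ i, ‖g i‖ ≤ C * ‖f i‖) : ‖g‖ ≤ C * ‖f‖ := by
  refine lp.norm_le_of_forall_sum_le hq (mul_nonneg hC (norm_nonneg _)) fun s => ?_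
  calc ∑ i ∈ s, ‖g i‖ ^ p.toReal
      ≤ ∑ i ∈ s, (C * ‖f i‖) ^ p.toReal :=
        Finset.sum_le_sum fun i _ => Real.rpow_le_rpow (norm_nonneg _) (h i) hq.le
    _ = ∑ i ∈ s, C ^ p.toReal * ‖f i‖ ^ p.toReal := by
        simp_rw [Real.mul_rpow hC (norm_nonneg _)]
    _ = C ^ p.toReal * ∑ i ∈ s, ‖f i‖ ^ p.toReal := by rw [Finset.mul_sum]
    _ ≤ C ^ p.toReal * ‖f‖ ^ p.toReal := by
        have := lp.sum_rpow_le_norm_rpow hq f s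
        have h0 : 0 ≤ C ^ p.toReal := Real.rpow_nonneg hC _
        nlinarith
    _ = (C * ‖f‖) ^ p.toReal := (Real.mul_rpow hC (norm_nonneg _)).symm

lemma lp_tail_norm_le (hq : 0 < p.toReal) (f : lp E p) (s : Finset ℕ) :
    ‖f - ∑ i ∈ s, lp.single p i (f i)‖ ≤ ‖f‖ := by
  rw [← Real.rpow_le_rpow_iff (norm_nonneg _) (norm_nonneg _) hq,
    lp.norm_compl_sum_single hq f s]
  have h0 : 0 ≤ ∑ i ∈ s, ‖f i‖ ^ p.toReal :=
    Finset.sum_nonneg fun i _ => Real.rpow_nonneg (norm_nonneg _) _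
  linarith

lemma lp_tail_mono (hq : 0 < p.toReal) (f : lp E p) {s t : Finset ℕ} (hst : s ⊆ t) :
    ‖f - ∑ i ∈ t, lp.single p i (f i)‖ ≤ ‖f - ∑ i ∈ s, lp.single p i (f i)‖ := by
  rw [← Real.rpow_le_rpow_iff (norm_nonneg _) (norm_nonneg _) hq,
    lp.norm_compl_sum_single hq f s, lp.norm_compl_sum_single hq f t]
  have := Finset.sum_le_sum_of_subset_of_nonneg hst
    (fun i _ _ => Real.rpow_nonneg (norm_nonneg (f i)) p.toReal)
  linarith

lemma lp_partial_sum_sub (s : Finset ℕ) (x y : lp E p) :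
    (∑ i ∈ s, lp.single p i ((x - y) i)) =
      (∑ i ∈ s, lp.single p i (x i)) - ∑ i ∈ s, lp.single p i (y i) := by
  rw [← Finset.sum_sub_distrib]
  refine Finset.sum_congr rfl fun i _ => ?_
  rw [lp.coeFn_sub, Pi.sub_apply, lp_single_sub]

end Helpers

/-- A Banach space `X` has the `λ`-bounded approximation property if for every compact set
`K ⊆ X` and every `ε > 0` there is a finite-rank bounded linear operator `T : X → X` with
`‖T‖ ≤ λ + ε` and `‖x − T x‖ ≤ ε` for all `x ∈ K`. -/
def HasBAP (lam : ℝ) (X : Type*) [NormedAddCommGroup X] [NormedSpace ℝ X] : Prop :=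
  ∀ K : Set X, IsCompact K → ∀ ε : ℝ, 0 < ε →
    ∃ T : X →L[ℝ] X, FiniteDimensional ℝ (LinearMap.range (T : X →ₗ[ℝ] X)) ∧
      ‖T‖ ≤ lam + ε ∧ ∀ x ∈ K, ‖x - T x‖ ≤ ε

/-- **The `λ`-bounded approximation property passes to `ℓ_p`-sums.**
Let `1 ≤ p < ∞` and `λ ≥ 1`, and let `(X_n)` be a sequence of Banach spaces each having the
`λ`-bounded approximation property.  Then `(⊕ₙ X_n)_p` has the `λ`-bounded approximation
property. -/
theorem stmt10 (p : ℝ≥0∞) [Fact (1 ≤ p)] (hp : p ≠ ∞) (lam : ℝ) (hlam : 1 ≤ lam)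
    (X : ℕ → Type) (_ : ∀ n, NormedAddCommGroup (X n)) (_ : ∀ n, NormedSpace ℝ (X n))
    (_ : ∀ n, CompleteSpace (X n))
    (hbap : ∀ n, HasBAP lam (X n)) :
    HasBAP lam (lp X p) := by
  intro K hK ε hε
  have hp0 : p ≠ 0 := (zero_lt_one.trans_le Fact.out).ne'
  have hq : 0 < p.toReal := ENNReal.toReal_pos hp0 hp
  -- Step 1: uniform tail bound on the compact set K
  obtain ⟨N, hN⟩ : ∃ N : ℕ, ∀ x ∈ K,
      ‖x - ∑ i ∈ Finset.range N, lp.single p i (x i)‖ ≤ ε / 2 := by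
    have key : ∀ y : lp X p, ∃ Ny : ℕ,
        ‖y - ∑ i ∈ Finset.range Ny, lp.single p i (y i)‖ ≤ ε / 6 := by
      intro y
      have h2 : Filter.Tendsto (fun n : ℕ => ∑ i ∈ Finset.range n, lp.single p i (y i))
          Filter.atTop (nhds y) := (lp.hasSum_single hp y).tendsto_sum_nat
      have h3 := Metric.tendsto_atTop.mp h2 (ε / 6) (by positivity)
      obtain ⟨Ny, hNy⟩ := h3
      refine ⟨Ny, ?_⟩
      have := hNy Ny le_rfl
      rw [dist_eq_norm] at this
      rw [← norm_neg]
      simpa [neg_sub] using this.le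
    choose F hF using key
    obtain ⟨t, htf, htK⟩ := (Metric.totallyBounded_iff.mp hK.totallyBounded) (ε / 6)
      (by positivity)
    refine ⟨htf.toFinset.sup F, fun x hx => ?_⟩
    obtain ⟨y, hyt, hxy⟩ := Set.mem_iUnion₂.mp (htK hx)
    have hxy' : ‖x - y‖ < ε / 6 := by
      rw [← dist_eq_norm]; exact Metric.mem_ball.mp hxy
    set N := htf.toFinset.sup F with hNdef
    have hFy : F y ≤ N := Finset.le_sup (htf.mem_toFinset.mpr hyt)
    have hy : ‖y - ∑ i ∈ Finset.range N, lp.single p i (y i)‖ ≤ ε / 6 :=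
      le_trans (lp_tail_mono hq y (Finset.range_subset_range.mpr hFy)) (hF y)
    have hdiff : ‖(x - y) - ∑ i ∈ Finset.range N, lp.single p i ((x - y) i)‖ ≤ ‖x - y‖ :=
      lp_tail_norm_le hq (x - y) _
    have hsplit : x - ∑ i ∈ Finset.range N, lp.single p i (x i) =
        ((x - y) - ∑ i ∈ Finset.range N, lp.single p i ((x - y) i)) +
          (y - ∑ i ∈ Finset.range N, lp.single p i (y i)) := by
      rw [lp_partial_sum_sub]; abel
    calc ‖x - ∑ i ∈ Finset.range N, lp.single p i (x i)‖
        ≤ ‖(x - y) - ∑ i ∈ Finset.range N, lp.single p i ((x - y) i)‖ +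
            ‖y - ∑ i ∈ Finset.range N, lp.single p i (y i)‖ := by
          rw [hsplit]; exact norm_add_le _ _
      _ ≤ ‖x - y‖ + ε / 6 := add_le_add hdiff hy
      _ ≤ ε / 6 + ε / 6 := by linarith
      _ ≤ ε / 2 := by linarith
  -- Step 2: coordinatewise operators from the BAP of each `X n`
  set δ : ℝ := ε / (2 * (N + 1)) with hδdef
  have hδ : 0 < δ := by positivity
  have hδε : δ ≤ ε := by
    rw [hδdef, div_le_iff₀ (by positivity)]
    nlinarith [Nat.cast_nonneg (α := ℝ) N]
  have hKn : ∀ n, IsCompact ((fun x : lp X p => x n) '' K) := fun n =>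
    hK.image (lpProjL (E := X) hp0 n).continuous
  choose T hT1 hT2 hT3 using fun n => hbap n _ (hKn n) δ hδ
  set S : lp X p →L[ℝ] lp X p :=
    ∑ n ∈ Finset.range N, (lpSingleL (E := X) hq n).comp ((T n).comp (lpProjL hp0 n)) with hSdef
  have hSapp : ∀ f : lp X p, S f = ∑ n ∈ Finset.range N, lp.single p n (T n (f n)) := by
    intro f
    rw [hSdef, ContinuousLinearMap.sum_apply]
    rfl
  have hScoord : ∀ (f : lp X p) (i : ℕ),
      (S f : ∀ j, X j) i = if i ∈ Finset.range N then T i (f i) else 0 := by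
    intro f i
    rw [hSapp]
    simp only [lp.coeFn_sum, Finset.sum_apply, lp.single_apply, Finset.sum_pi_single]
  refine ⟨S, ?_, ?_, ?_⟩
  · -- finite rank
    set R : ℕ → Submodule ℝ (lp X p) := fun n =>
      LinearMap.range (((lpSingleL (E := X) hq n).comp ((T n).comp (lpProjL hp0 n))) :
        lp X p →ₗ[ℝ] lp X p) with hRdef
    have hfin : ∀ n, FiniteDimensional ℝ (R n) := by
      intro n
      have hle : R n ≤ Submodule.map ((lpSingleL (E := X) hq n) : X n →ₗ[ℝ] lp X p)
          (LinearMap.range ((T n) : X n →ₗ[ℝ] X n)) := by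
        rintro _ ⟨f, rfl⟩
        exact ⟨T n (f n), ⟨f n, rfl⟩, rfl⟩
      haveI := hT1 n
      haveI : FiniteDimensional ℝ
          (Submodule.map ((lpSingleL (E := X) hq n) : X n →ₗ[ℝ] lp X p)
            (LinearMap.range ((T n) : X n →ₗ[ℝ] X n))) :=
        Module.Finite.map _ _
      exact Submodule.finiteDimensional_of_le hle
    have hr : LinearMap.range (S : lp X p →ₗ[ℝ] lp X p) ≤ (Finset.range N).sup R := by
      rintro _ ⟨f, rfl⟩
      have : (S : lp X p →ₗ[ℝ] lp X p) f = S f := rfl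
      rw [this, hSdef, ContinuousLinearMap.sum_apply]
      refine Submodule.sum_mem _ fun n hn => ?_
      exact Finset.le_sup (f := R) hn (LinearMap.mem_range_self _ f)
    haveI := hfin
    haveI : FiniteDimensional ℝ ((Finset.range N).sup R : Submodule ℝ (lp X p)) :=
      Submodule.finiteDimensional_finset_sup _ _
    exact Submodule.finiteDimensional_of_le hr
  · -- norm bound
    refine ContinuousLinearMap.opNorm_le_bound _ (by linarith) fun f => ?_
    have hcoord : ∀ i, ‖(S f : ∀ j, X j) i‖ ≤ (lam + δ) * ‖f i‖ := by
      intro i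
      rw [hScoord f i]
      by_cases hi : i ∈ Finset.range N
      · rw [if_pos hi]
        exact le_trans ((T i).le_opNorm (f i))
          (mul_le_mul_of_nonneg_right (hT2 i) (norm_nonneg _))
      · rw [if_neg hi, norm_zero]
        positivity
    have h1 : ‖S f‖ ≤ (lam + δ) * ‖f‖ :=
      lp_norm_le_mul_norm hq (by linarith) (S f) f hcoord
    have h2 : (lam + δ) * ‖f‖ ≤ (lam + ε) * ‖f‖ :=
      mul_le_mul_of_nonneg_right (by linarith) (norm_nonneg _)
    linarith
  · -- approximation on K
    intro x hx
    have h1 : ‖x - ∑ i ∈ Finset.range N, lp.single p i (x i)‖ ≤ ε / 2 := hN x hx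
    have h3 : ‖(∑ i ∈ Finset.range N, lp.single p i (x i)) - S x‖ ≤ ε / 2 := by
      rw [hSapp x, ← Finset.sum_sub_distrib]
      have heach : ∀ i ∈ Finset.range N,
          ‖lp.single p i (x i) - lp.single p i (T i (x i))‖ ≤ δ := by
        intro i _
        rw [← lp_single_sub, lp_norm_single hq]
        exact hT3 i (x i) ⟨x, hx, rfl⟩
      calc ‖∑ i ∈ Finset.range N, (lp.single p i (x i) - lp.single p i (T i (x i)))‖
          ≤ ∑ i ∈ Finset.range N, ‖lp.single p i (x i) - lp.single p i (T i (x i))‖ :=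
            norm_sum_le _ _
        _ ≤ ∑ _i ∈ Finset.range N, δ := Finset.sum_le_sum heach
        _ = N * δ := by simp [mul_comm]
        _ ≤ ε / 2 := by
            rw [hδdef, mul_div_assoc', div_le_div_iff₀ (by positivity) two_pos]
            nlinarith [Nat.cast_nonneg (α := ℝ) N, hε.le]
    calc ‖x - S x‖
        = ‖(x - ∑ i ∈ Finset.range N, lp.single p i (x i)) +
            ((∑ i ∈ Finset.range N, lp.single p i (x i)) - S x)‖ := by
          rw [sub_add_sub_cancel]
      _ ≤ ‖x - ∑ i ∈ Finset.range N, lp.single p i (x i)‖ +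
            ‖(∑ i ∈ Finset.range N, lp.single p i (x i)) - S x‖ := norm_add_le _ _
      _ ≤ ε / 2 + ε / 2 := add_le_add h1 h3
      _ = ε := by ring
end

section
/- Let d ≥ 1 and let S^d = {x ∈ ℝ^{d+1} : |x| = 1} be the Euclidean unit sphere. Set C = {x ∈ S^d : x_{d+1} ≤ 1/2} and C₀ = {x ∈ S^d : x_{d+1} ≤ 0}. Then there exist L ≥ 0 and a map r : C → C₀ such that r is L-Lipschitz with respect to the Euclidean distance and r(x) = x for every x ∈ C₀; that is, C₀ is a Lipschitz retract of C. -/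
open Finset

noncomputable def vmap (d : ℕ) (x : EuclideanSpace ℝ (Fin (d+1))) :
    EuclideanSpace ℝ (Fin (d+1)) :=
  WithLp.toLp 2 (fun i => if i = Fin.last d then min (x i) 0 else x i)

lemma vmap_apply (d : ℕ) (x : EuclideanSpace ℝ (Fin (d+1))) (i : Fin (d+1)) :
    vmap d x i = if i = Fin.last d then min (x i) 0 else x i := rfl

lemma min_lip (a b : ℝ) : |min a 0 - min b 0| ≤ |a - b| := by
  have := abs_min_sub_min_le_max a 0 b 0
  simpa using this

lemma vmap_lip (d : ℕ) (x y : EuclideanSpace ℝ (Fin (d+1))) :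
    ‖vmap d x - vmap d y‖ ≤ ‖x - y‖ := by
  rw [EuclideanSpace.norm_eq, EuclideanSpace.norm_eq]
  apply Real.sqrt_le_sqrt
  apply Finset.sum_le_sum
  intro i _
  simp only [PiLp.sub_apply, Real.norm_eq_abs, vmap_apply]
  split_ifs with h
  · exact pow_le_pow_left₀ (abs_nonneg _) (min_lip (x i) (y i)) 2
  · exact le_refl _

lemma vmap_eq_self (d : ℕ) (x : EuclideanSpace ℝ (Fin (d+1)))
    (h : x (Fin.last d) ≤ 0) : vmap d x = x := by
  ext i
  rw [vmap_apply]
  split_ifs with hi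
  · subst hi; exact min_eq_left h
  · rfl

-- sum of squares computation
lemma sumsq (d : ℕ) (x : EuclideanSpace ℝ (Fin (d+1))) (hx : ‖x‖ = 1) :
    ∑ i, (x i) ^ 2 = 1 := by
  have h := EuclideanSpace.norm_eq x
  rw [hx] at h
  have h2 : (1:ℝ) = Real.sqrt (∑ i, ‖x i‖ ^ 2) := h
  have h3 : ∑ i, ‖x i‖ ^ 2 = 1 := by
    have hnn : 0 ≤ ∑ i, ‖x i‖ ^ 2 :=
      Finset.sum_nonneg fun i _ => sq_nonneg _
    nlinarith [Real.sq_sqrt hnn, Real.sqrt_nonneg (∑ i, ‖x i‖ ^ 2)]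
  simpa [Real.norm_eq_abs, sq_abs] using h3

lemma vmap_norm_lb (d : ℕ) (x : EuclideanSpace ℝ (Fin (d+1)))
    (hx : ‖x‖ = 1) (ht : x (Fin.last d) ≤ 1 / 2) :
    1 / 2 ≤ ‖vmap d x‖ := by
  set t := x (Fin.last d) with htdef
  have hsum : ∑ i, (x i) ^ 2 = 1 := sumsq d x hx
  have hsplit : ∑ i ∈ Finset.univ.erase (Fin.last d), (x i) ^ 2 + t ^ 2 = 1 := by
    rw [Finset.sum_erase_add _ _ (Finset.mem_univ _)] at *
    exact hsum
  have hvsum : ∑ i, (vmap d x i) ^ 2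
      = ∑ i ∈ Finset.univ.erase (Fin.last d), (x i) ^ 2 + (min t 0) ^ 2 := by
    rw [← Finset.sum_erase_add _ _ (Finset.mem_univ (Fin.last d))]
    congr 1
    · apply Finset.sum_congr rfl
      intro i hi
      rw [vmap_apply]
      rw [if_neg (Finset.ne_of_mem_erase hi)]
    · rw [vmap_apply, if_pos rfl]
  have hlb : 1 / 4 ≤ ∑ i, (vmap d x i) ^ 2 := by
    rw [hvsum]
    rcases le_total t 0 with h | h
    · rw [min_eq_left h]; nlinarith
    · rw [min_eq_right h]; nlinarith
  rw [EuclideanSpace.norm_eq]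
  rw [show (∑ i, ‖vmap d x i‖ ^ 2) = ∑ i, (vmap d x i) ^ 2 by
    simp [Real.norm_eq_abs, sq_abs]]
  have h14 : (1/2:ℝ) = Real.sqrt (1/4) := by
    rw [show (1/4:ℝ) = (1/2)^2 by norm_num, Real.sqrt_sq (by norm_num)]
  rw [h14]
  exact Real.sqrt_le_sqrt hlb

-- Lipschitz bound for normalization
lemma normalize_lip {E : Type*} [NormedAddCommGroup E] [NormedSpace ℝ E]
    (a b : E) (c : ℝ) (hc : 0 < c) (ha : c ≤ ‖a‖) (hb : c ≤ ‖b‖) :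
    ‖‖a‖⁻¹ • a - ‖b‖⁻¹ • b‖ ≤ (2 / c) * ‖a - b‖ := by
  have hna : 0 < ‖a‖ := lt_of_lt_of_le hc ha
  have hnb : 0 < ‖b‖ := lt_of_lt_of_le hc hb
  have key : ‖a‖⁻¹ • a - ‖b‖⁻¹ • b
      = ‖a‖⁻¹ • (a - b) + (‖a‖⁻¹ - ‖b‖⁻¹) • b := by
    rw [smul_sub, sub_smul]; abel
  rw [key]
  have h1 : ‖‖a‖⁻¹ • (a - b)‖ ≤ c⁻¹ * ‖a - b‖ := by
    rw [norm_smul, Real.norm_eq_abs, abs_of_pos (inv_pos.2 hna)]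
    have hinv : ‖a‖⁻¹ ≤ c⁻¹ := by
      apply inv_anti₀ hc ha
    exact mul_le_mul_of_nonneg_right hinv (norm_nonneg _)
  have h2 : ‖(‖a‖⁻¹ - ‖b‖⁻¹) • b‖ ≤ c⁻¹ * ‖a - b‖ := by
    rw [norm_smul, Real.norm_eq_abs]
    have : |‖a‖⁻¹ - ‖b‖⁻¹| = |‖b‖ - ‖a‖| / (‖a‖ * ‖b‖) := by
      rw [inv_sub_inv hna.ne' hnb.ne', abs_div, abs_of_pos (mul_pos hna hnb)]
    rw [this]
    have habs : |‖b‖ - ‖a‖| ≤ ‖a - b‖ := by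
      rw [abs_sub_comm]
      exact abs_norm_sub_norm_le a b
    calc |‖b‖ - ‖a‖| / (‖a‖ * ‖b‖) * ‖b‖
        = |‖b‖ - ‖a‖| / ‖a‖ := by field_simp
      _ ≤ ‖a - b‖ / c := by
          apply div_le_div₀ (norm_nonneg _) habs hc ha
      _ = c⁻¹ * ‖a - b‖ := by rw [div_eq_inv_mul]
  calc ‖‖a‖⁻¹ • (a - b) + (‖a‖⁻¹ - ‖b‖⁻¹) • b‖
      ≤ ‖‖a‖⁻¹ • (a - b)‖ + ‖(‖a‖⁻¹ - ‖b‖⁻¹) • b‖ := norm_add_le _ _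
    _ ≤ c⁻¹ * ‖a - b‖ + c⁻¹ * ‖a - b‖ := add_le_add h1 h2
    _ = (2 / c) * ‖a - b‖ := by ring

/-- **The lower half-sphere is a Lipschitz retract of the sphere below latitude 1/2.**
Let `d ≥ 1`, `S^d ⊆ ℝ^{d+1}` the Euclidean unit sphere, `C = {x ∈ S^d : x_{d+1} ≤ 1/2}` and
`C₀ = {x ∈ S^d : x_{d+1} ≤ 0}`.  Then there are `L ≥ 0` and a map `r : C → C₀` which is
`L`-Lipschitz for the Euclidean distance and restricts to the identity on `C₀`. -/
theorem stmt12 (d : ℕ) (hd : 1 ≤ d) :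
    ∃ L : ℝ, 0 ≤ L ∧
      ∃ r : EuclideanSpace ℝ (Fin (d + 1)) → EuclideanSpace ℝ (Fin (d + 1)),
        (∀ x ∈ {x : EuclideanSpace ℝ (Fin (d + 1)) | ‖x‖ = 1 ∧ x (Fin.last d) ≤ 1 / 2},
          r x ∈ {x : EuclideanSpace ℝ (Fin (d + 1)) | ‖x‖ = 1 ∧ x (Fin.last d) ≤ 0}) ∧
        (∀ x ∈ {x : EuclideanSpace ℝ (Fin (d + 1)) | ‖x‖ = 1 ∧ x (Fin.last d) ≤ 0},
          r x = x) ∧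
        (∀ x ∈ {x : EuclideanSpace ℝ (Fin (d + 1)) | ‖x‖ = 1 ∧ x (Fin.last d) ≤ 1 / 2},
         ∀ y ∈ {x : EuclideanSpace ℝ (Fin (d + 1)) | ‖x‖ = 1 ∧ x (Fin.last d) ≤ 1 / 2},
          dist (r x) (r y) ≤ L * dist x y) := by
  refine ⟨4, by norm_num, fun x => ‖vmap d x‖⁻¹ • vmap d x, ?_, ?_, ?_⟩
  · rintro x ⟨hx, ht⟩
    have hlb := vmap_norm_lb d x hx ht
    have hpos : 0 < ‖vmap d x‖ := lt_of_lt_of_le (by norm_num) hlb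
    constructor
    · rw [norm_smul, Real.norm_eq_abs, abs_of_pos (inv_pos.2 hpos),
        inv_mul_cancel₀ hpos.ne']
    · show (‖vmap d x‖⁻¹ • vmap d x) (Fin.last d) ≤ 0
      rw [PiLp.smul_apply, vmap_apply, if_pos rfl, smul_eq_mul]
      exact mul_nonpos_of_nonneg_of_nonpos (inv_nonneg.2 hpos.le) (min_le_right _ _)
  · rintro x ⟨hx, ht⟩
    show ‖vmap d x‖⁻¹ • vmap d x = x
    rw [vmap_eq_self d x ht, hx]
    norm_num
  · rintro x ⟨hx, htx⟩ y ⟨hy, hty⟩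
    have hlx := vmap_norm_lb d x hx htx
    have hly := vmap_norm_lb d y hy hty
    rw [dist_eq_norm, dist_eq_norm]
    calc ‖‖vmap d x‖⁻¹ • vmap d x - ‖vmap d y‖⁻¹ • vmap d y‖
        ≤ (2 / (1/2)) * ‖vmap d x - vmap d y‖ :=
          normalize_lip _ _ (1/2) (by norm_num) hlx hly
      _ = 4 * ‖vmap d x - vmap d y‖ := by norm_num
      _ ≤ 4 * ‖x - y‖ := by
          have := vmap_lip d x y
          linarith
end
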